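/- arXiv:1608.02219 — 2 statements merged into one kernel-verified Lean document; each statement's English description precedes it below -/
import Mathlib

section
/- Periodic approximation of Gordon potentials: Let μ be a real local measure with ‖μ‖_unif < ∞ and C > 0. Assume there is a sequence (p_m) in (0, ∞) with p_m → ∞ such that e^{C·p_m} ‖μ − μ(·+p_m)‖_{[−p_m, p_m]} → 0 as m → ∞. Then there exist real local measures (μ_m)_{m∈ℕ} and real numbers (α_m)_{m∈ℕ} with 0 < α_m ≤ p_m/2 and inf_{m∈ℕ} α_m > 0 such that: each μ_m is p_m-periodic (μ_m(B + p_m) = μ_m(B) for all bounded Borel sets B); e^{C·p_m} ‖μ − μ_m‖_{[−p_m, 2p_m]} → 0 as m → ∞; μ_m(B) = μ(B) for every bounded Borel set B ⊆ [α_m, p_m − α_m]; and ‖μ_m‖_unif ≤ (1 + 1/(2α_m)) ‖μ‖_unif for all m ∈ ℕ. -/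
open MeasureTheory Set Filter
open scoped ENNReal NNReal

noncomputable section

/-- A nonnegative Borel measure on `ℝ` is finite on bounded sets. -/
def FiniteOnBounded (ν : MeasureTheory.Measure ℝ) : Prop :=
  ∀ s : Set ℝ, Bornology.IsBounded s → ν s < ⊤

/-- `⨆ t, ν ((t, t+1])` in `ℝ≥0∞`. -/
def unifE (ν : MeasureTheory.Measure ℝ) : ENNReal := ⨆ t : ℝ, ν (Set.Ioc t (t + 1))

/-- The uniform norm `‖ν‖_unif` as a real number. -/
def unifNorm (ν : MeasureTheory.Measure ℝ) : ℝ := (unifE ν).toReal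

/-- Signed value of the real local measure `μ = (μp, μm)` on a set `B`. -/
def lmVal (μp μm : MeasureTheory.Measure ℝ) (B : Set ℝ) : ℝ := (μp B).toReal - (μm B).toReal

/-- Signed integral `∫ f dμ` w.r.t. the real local measure `μ = (μp, μm)`. -/
def lmInt (μp μm : MeasureTheory.Measure ℝ) (f : ℝ → ℝ) : ℝ := (∫ x, f x ∂μp) - (∫ x, f x ∂μm)

/-- The (topological) support of a measure on `ℝ`. -/
def measSupport (ρ : MeasureTheory.Measure ℝ) : Set ℝ :=
  {x : ℝ | ∀ ε : ℝ, 0 < ε → 0 < ρ (Set.Ioo (x - ε) (x + ε))}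

/-- `p` is a period of `ρ`, i.e. `p ≠ 0` and `ρ (B + p) = ρ B` for all `B`
(note `B + p = (· - p) ⁻¹' B`). -/
def IsPeriod (ρ : MeasureTheory.Measure ℝ) (p : ℝ) : Prop :=
  p ≠ 0 ∧ ∀ B : Set ℝ, ρ ((fun x => x - p) ⁻¹' B) = ρ B

/-- Supremum norm of a (bounded) function. -/
def supNorm (a : ℝ → ℝ) : ℝ := sSup (Set.range a)

/-- The class `AM(ℝ)`: `a` Borel measurable with `0 < inf a` and `sup a < ∞`, and
`μ = (μp, μm)` a real local measure with `‖μ‖_unif < ∞` and `|μ|(ℝ ∖ supp ρ) = 0`. -/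
structure AM (ρ : MeasureTheory.Measure ℝ) (a : ℝ → ℝ)
    (μp μm : MeasureTheory.Measure ℝ) : Prop where
  meas_a : Measurable a
  inf_pos : 0 < ⨅ x : ℝ, a x
  bddAbove : BddAbove (Set.range a)
  finp : FiniteOnBounded μp
  finm : FiniteOnBounded μm
  unif_lt_top : unifE (μp + μm) < ⊤
  supp_sub : (μp + μm) ((measSupport ρ)ᶜ) = 0

/-- `(u, v)` is a solution of `H_{a,μ} u = z u` with weight `ρ`
(`v` playing the role of `a·u'`). -/
structure IsSolution (a : ℝ → ℝ) (μp μm ρ : MeasureTheory.Measure ℝ) (z : ℝ)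
    (u v : ℝ → ℝ) : Prop where
  meas_u : Measurable u
  meas_v : Measurable v
  eq_u : ∀ t : ℝ, u t = u 0 + ∫ s in (0:ℝ)..t, v s / a s
  eq_v : ∀ s t : ℝ, s ≤ t →
    v t - v s = ((∫ x in Set.Ioc s t, u x ∂μp) - (∫ x in Set.Ioc s t, u x ∂μm))
      - z * ∫ x in Set.Ioc s t, u x ∂ρ

/-- `(u, v)` is a solution of `H_{a,μ} u = 0`. -/
structure IsSolution0 (a : ℝ → ℝ) (μp μm : MeasureTheory.Measure ℝ)
    (u v : ℝ → ℝ) : Prop where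
  meas_u : Measurable u
  meas_v : Measurable v
  eq_u : ∀ t : ℝ, u t = u 0 + ∫ s in (0:ℝ)..t, v s / a s
  eq_v : ∀ s t : ℝ, s ≤ t →
    v t - v s = (∫ x in Set.Ioc s t, u x ∂μp) - (∫ x in Set.Ioc s t, u x ∂μm)

/-- Wasserstein-type seminorm `‖μ − ν‖_I` of the difference of two real local measures. -/
def wNorm (μp μm νp νm : MeasureTheory.Measure ℝ) (I : Set ℝ) : ℝ :=
  sSup {r : ℝ | ∃ w : ℝ → ℝ, LipschitzWith 1 w ∧ HasCompactSupport w ∧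
    tsupport w ⊆ I ∧ Metric.diam (tsupport w) ≤ 2 ∧
    r = |lmInt μp μm w - lmInt νp νm w|}

/-- Translate of a measure: `(lmTranslate ν p) B = ν (B + p)`. -/
def lmTranslate (ν : MeasureTheory.Measure ℝ) (p : ℝ) : MeasureTheory.Measure ℝ :=
  MeasureTheory.Measure.map (fun x => x - p) ν

/-- The primitive `φ_μ` of a real local measure `μ = (μp, μm)`. -/
def phiLM (μp μm : MeasureTheory.Measure ℝ) (t : ℝ) : ℝ :=
  if 0 ≤ t then lmVal μp μm (Set.Ioc 0 t) else -(lmVal μp μm (Set.Ioc t 0))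

namespace PG

/-! ### ramp -/

def ramp (β : ℝ) (x : ℝ) : ℝ := min 1 (max 0 (x / β))

lemma ramp_nonneg (β x : ℝ) : 0 ≤ ramp β x := by
  rcases le_or_gt 1 (max 0 (x / β)) with h | h
  · simp [ramp, min_eq_left h]
  · simp [ramp, min_eq_right h.le]

lemma ramp_le_one (β x : ℝ) : ramp β x ≤ 1 := min_le_left _ _

lemma ramp_eq_zero (hβ : 0 < β) {x : ℝ} (hx : x ≤ 0) : ramp β x = 0 := by
  have : x / β ≤ 0 := div_nonpos_of_nonpos_of_nonneg hx hβ.le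
  simp [ramp, max_eq_left this]

lemma ramp_eq_one (hβ : 0 < β) {x : ℝ} (hx : β ≤ x) : ramp β x = 1 := by
  have h1 : (1:ℝ) ≤ x / β := (one_le_div hβ).2 hx
  have : (1:ℝ) ≤ max 0 (x / β) := le_max_of_le_right h1
  simp [ramp, min_eq_left this]

lemma ramp_continuous (β : ℝ) : Continuous (ramp β) :=
  continuous_const.min (continuous_const.max (continuous_id.div_const β))

lemma ramp_mono (hβ : 0 < β) : Monotone (ramp β) := fun x y hxy => by
  have : x / β ≤ y / β := by gcongr
  exact min_le_min le_rfl (max_le_max le_rfl this)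

lemma ramp_measurable (β : ℝ) : Measurable (ramp β) := (ramp_continuous β).measurable

/-! ### densities -/

def rampD (β : ℝ) (x : ℝ) : ℝ≥0∞ := ENNReal.ofReal (ramp β x)
def coD (β : ℝ) (x : ℝ) : ℝ≥0∞ := ENNReal.ofReal (1 - ramp β x)
def midD (p β : ℝ) (x : ℝ) : ℝ≥0∞ := ENNReal.ofReal (ramp β (x + p) - ramp β x)
def topD (p β : ℝ) (x : ℝ) : ℝ≥0∞ := ENNReal.ofReal (1 - ramp β (x + p))

lemma rampD_measurable (β : ℝ) : Measurable (rampD β) :=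
  (ramp_measurable β).ennreal_ofReal
lemma coD_measurable (β : ℝ) : Measurable (coD β) :=
  (measurable_const.sub (ramp_measurable β)).ennreal_ofReal
lemma midD_measurable (p β : ℝ) : Measurable (midD p β) :=
  (((ramp_measurable β).comp (measurable_add_const p)).sub (ramp_measurable β)).ennreal_ofReal
lemma topD_measurable (p β : ℝ) : Measurable (topD p β) :=
  (measurable_const.sub ((ramp_measurable β).comp (measurable_add_const p))).ennreal_ofReal

lemma rampD_le_one (β x : ℝ) : rampD β x ≤ 1 :=
  ENNReal.ofReal_le_one.2 (ramp_le_one β x)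
lemma coD_le_one (β x : ℝ) : coD β x ≤ 1 :=
  ENNReal.ofReal_le_one.2 (by have := ramp_nonneg β x; linarith)

/-! ### translation lemmas -/

lemma lmTranslate_apply (ρ : Measure ℝ) (c : ℝ) (B : Set ℝ) :
    lmTranslate ρ c B = ρ ((fun x => x - c) ⁻¹' B) :=
  (MeasurableEquiv.subRight c).measurableEmbedding.map_apply ρ B

lemma map_add_apply (ρ : Measure ℝ) (c : ℝ) (B : Set ℝ) :
    (ρ.map (fun x => x + c)) B = ρ ((fun x => x + c) ⁻¹' B) :=
  (MeasurableEquiv.addRight c).measurableEmbedding.map_apply ρ B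

lemma lmTranslate_Ioc (ρ : Measure ℝ) (c a b : ℝ) :
    lmTranslate ρ c (Ioc a b) = ρ (Ioc (a + c) (b + c)) := by
  rw [lmTranslate_apply]
  congr 1
  ext x
  simp only [mem_preimage, mem_Ioc]
  constructor <;> intro h <;> constructor <;> linarith [h.1, h.2]

end PG

namespace PG2
open PG

/-! ### the blended fundamental-domain measure and its periodization -/

def fdm (ρ : Measure ℝ) (p β : ℝ) : Measure ℝ :=
  (ρ.withDensity (rampD β) + (lmTranslate ρ p).withDensity (coD β)).restrict (Ioc 0 p)

def per (ρ : Measure ℝ) (p β : ℝ) : Measure ℝ :=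
  Measure.sum fun k : ℤ => (fdm ρ p β).map (fun x => x + (k : ℝ) * p)

lemma fdm_apply (ρ : Measure ℝ) (p β : ℝ) (s : Set ℝ) :
    fdm ρ p β s = ρ.withDensity (rampD β) (s ∩ Ioc 0 p)
      + (lmTranslate ρ p).withDensity (coD β) (s ∩ Ioc 0 p) := by
  rw [fdm, Measure.restrict_apply' measurableSet_Ioc, Measure.add_apply]

lemma fdm_zero (ρ : Measure ℝ) (p β : ℝ) {s : Set ℝ} (h : s ∩ Ioc 0 p = ∅) :
    fdm ρ p β s = 0 := by
  rw [fdm_apply, h]; simp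

lemma per_apply (ρ : Measure ℝ) (p β : ℝ) {s : Set ℝ} (hs : MeasurableSet s) :
    per ρ p β s = ∑' k : ℤ, fdm ρ p β ((fun x => x + (k : ℝ) * p) ⁻¹' s) := by
  rw [per, Measure.sum_apply _ hs]
  exact tsum_congr fun k => map_add_apply _ _ _

lemma fdm_add (ρ₁ ρ₂ : Measure ℝ) (p β : ℝ) :
    fdm (ρ₁ + ρ₂) p β = fdm ρ₁ p β + fdm ρ₂ p β := by
  unfold fdm
  rw [lmTranslate, Measure.map_add _ _ (measurable_sub_const p),
    withDensity_add_measure, withDensity_add_measure, add_add_add_comm,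
    Measure.restrict_add]
  rfl

lemma per_add (ρ₁ ρ₂ : Measure ℝ) (p β : ℝ) :
    per (ρ₁ + ρ₂) p β = per ρ₁ p β + per ρ₂ p β := by
  ext s hs
  rw [Measure.add_apply, per_apply _ _ _ hs, per_apply _ _ _ hs, per_apply _ _ _ hs,
    ← ENNReal.tsum_add]
  exact tsum_congr fun k => by rw [fdm_add, Measure.add_apply]

lemma per_period (ρ : Measure ℝ) (p β : ℝ) :
    (per ρ p β).map (fun x => x - p) = per ρ p β := by
  rw [per, Measure.map_sum (measurable_sub_const p).aemeasurable]
  have h : ∀ k : ℤ, ((fdm ρ p β).map (fun x => x + (k : ℝ) * p)).map (fun x => x - p)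
      = (fdm ρ p β).map (fun x => x + ((k - 1 : ℤ) : ℝ) * p) := by
    intro k
    rw [Measure.map_map (measurable_sub_const p) (measurable_add_const _)]
    congr 1
    funext x
    simp only [Function.comp_apply]
    push_cast
    ring
  calc (Measure.sum fun k : ℤ => ((fdm ρ p β).map (fun x => x + (k : ℝ) * p)).map (fun x => x - p))
      = Measure.sum fun k : ℤ => (fdm ρ p β).map (fun x => x + ((k - 1 : ℤ) : ℝ) * p) := by
        congr 1; funext k; exact h k
    _ = per ρ p β := by
        ext s hs
        rw [Measure.sum_apply _ hs, per, Measure.sum_apply _ hs]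
        exact (Equiv.subRight (1 : ℤ)).tsum_eq
          (fun k : ℤ => ((fdm ρ p β).map (fun x => x + (k : ℝ) * p)) s)

lemma per_preimage (ρ : Measure ℝ) (p β : ℝ) (B : Set ℝ) :
    per ρ p β ((fun x => x - p) ⁻¹' B) = per ρ p β B := by
  conv_rhs => rw [← per_period ρ p β]
  exact ((MeasurableEquiv.subRight p).measurableEmbedding.map_apply _ B).symm

/-- integral form of periodicity -/
lemma per_integral_shift (ρ : Measure ℝ) (p β : ℝ) (w : ℝ → ℝ) (hw : Continuous w) :
    ∫ x, w (x + p) ∂(per ρ p β) = ∫ x, w x ∂(per ρ p β) := by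
  conv_lhs => rw [← per_period ρ p β]
  have hm : AEStronglyMeasurable (fun x : ℝ => w (x + p))
      ((per ρ p β).map (fun x => x - p)) :=
    (hw.comp (continuous_add_right p)).aestronglyMeasurable
  rw [integral_map (measurable_sub_const p).aemeasurable hm]
  simp only [sub_add_cancel]

/-! ### agreement in the middle -/

lemma per_agree (ρ : Measure ℝ) {p β : ℝ} (hβ : 0 < β) (hβp : β ≤ p)
    {B : Set ℝ} (hB : B ⊆ Icc β p) : per ρ p β B = ρ B := by
  have hp : 0 < p := lt_of_lt_of_le hβ hβp
  have hrestrict : (per ρ p β).restrict (Icc β p) = ρ.restrict (Icc β p) := by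
    ext s hs
    rw [Measure.restrict_apply hs, Measure.restrict_apply hs]
    set X := s ∩ Icc β p with hX
    have hXm : MeasurableSet X := hs.inter measurableSet_Icc
    have hXsub : X ⊆ Icc β p := inter_subset_right
    rw [per_apply _ _ _ hXm]
    have hzero : ∀ k : ℤ, k ∉ ({0} : Finset ℤ) →
        fdm ρ p β ((fun x => x + (k : ℝ) * p) ⁻¹' X) = 0 := by
      intro k hk
      apply fdm_zero
      ext x
      simp only [mem_inter_iff, mem_preimage, mem_Ioc, mem_empty_iff_false, iff_false, not_and]
      intro hxX hx0
      intro hxp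
      rcases hXsub hxX with ⟨h1, h2⟩
      simp only [Finset.mem_singleton] at hk
      rcases lt_or_gt_of_ne hk with hk' | hk'
      · have hk0 : k ≤ -1 := by omega
        have hk1 : (k : ℝ) ≤ -1 := by exact_mod_cast hk0
        have := mul_le_mul_of_nonneg_right hk1 hp.le
        nlinarith
      · have hk1 : (1 : ℝ) ≤ (k : ℝ) := by exact_mod_cast hk'
        have := mul_le_mul_of_nonneg_right hk1 hp.le
        nlinarith
    rw [tsum_eq_sum hzero, Finset.sum_singleton]
    have hpre : (fun x : ℝ => x + ((0 : ℤ) : ℝ) * p) ⁻¹' X = X := by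
      ext x; simp
    rw [hpre, fdm_apply]
    have hXI : X ∩ Ioc 0 p = X := by
      apply inter_eq_left.mpr
      intro x hx
      exact ⟨lt_of_lt_of_le hβ (hXsub hx).1, (hXsub hx).2⟩
    rw [hXI]
    have h1 : ρ.withDensity (rampD β) X = ρ X := by
      rw [withDensity_apply _ hXm]
      have : ∀ᵐ x ∂(ρ.restrict X), rampD β x = 1 := by
        refine (ae_restrict_iff' hXm).2 (ae_of_all _ fun x hx => ?_)
        rw [rampD, ramp_eq_one hβ (hXsub hx).1, ENNReal.ofReal_one]
      rw [lintegral_congr_ae this, setLIntegral_one]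
    have h2 : (lmTranslate ρ p).withDensity (coD β) X = 0 := by
      rw [withDensity_apply _ hXm]
      have : ∀ᵐ x ∂((lmTranslate ρ p).restrict X), coD β x = 0 := by
        refine (ae_restrict_iff' hXm).2 (ae_of_all _ fun x hx => ?_)
        rw [coD, ramp_eq_one hβ (hXsub hx).1]
        simp
      rw [lintegral_congr_ae this, lintegral_zero]
    rw [h1, h2, add_zero]
  have h1 : per ρ p β B = per ρ p β (B ∩ Icc β p) := by rw [inter_eq_left.mpr hB]
  have h2 : ρ B = ρ (B ∩ Icc β p) := by rw [inter_eq_left.mpr hB]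
  rw [h1, h2, ← Measure.restrict_apply' measurableSet_Icc,
    ← Measure.restrict_apply' measurableSet_Icc, hrestrict]

end PG2

namespace PG3
open PG PG2

lemma isFiniteOnCompacts_of {ρ : Measure ℝ} (h : FiniteOnBounded ρ) :
    IsFiniteMeasureOnCompacts ρ :=
  ⟨fun _K hK => h _ hK.isBounded⟩

lemma finiteOnBounded_lmTranslate {ρ : Measure ℝ} (h : FiniteOnBounded ρ) (c : ℝ) :
    FiniteOnBounded (lmTranslate ρ c) := by
  intro s hs
  rw [lmTranslate_apply]
  obtain ⟨R, hR⟩ := hs.subset_closedBall 0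
  apply h
  apply Bornology.IsBounded.subset (Metric.isBounded_closedBall (x := c) (r := R))
  intro x hx
  have h2 := hR hx
  simp only [Metric.mem_closedBall, Real.dist_eq, sub_zero] at h2 ⊢
  exact h2

lemma unifE_mono {ν ν' : Measure ℝ} (h : ν ≤ ν') : unifE ν ≤ unifE ν' :=
  iSup_mono fun t => Measure.le_iff'.1 h _

lemma meas_le_unifE (ν : Measure ℝ) {s : Set ℝ} {a b : ℝ} (hsub : s ⊆ Ioc a b)
    (hb : b ≤ a + 1) : ν s ≤ unifE ν :=
  (measure_mono (hsub.trans (Ioc_subset_Ioc le_rfl hb))).trans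
    (le_iSup (fun t => ν (Ioc t (t + 1))) a)

lemma Ioc_subset_iUnion (t L q : ℝ) (hq : 0 < q) (n : ℕ) (hn : L ≤ n * q) :
    Ioc t (t + L) ⊆ ⋃ i ∈ Finset.range n, Ioc (t + i * q) (t + i * q + q) := by
  intro x hx
  obtain ⟨hx1, hx2⟩ := hx
  have hpos : 0 < (x - t) / q := div_pos (by linarith) hq
  have hc1 : 1 ≤ ⌈(x - t) / q⌉₊ := Nat.one_le_ceil_iff.2 hpos
  set i : ℕ := ⌈(x - t) / q⌉₊ - 1 with hi
  have hi1 : i + 1 = ⌈(x - t) / q⌉₊ := Nat.succ_pred_eq_of_pos hc1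
  have hub : x ≤ t + i * q + q := by
    have h1 : (x - t) / q ≤ (⌈(x - t) / q⌉₊ : ℝ) := Nat.le_ceil _
    rw [← hi1] at h1
    push_cast at h1
    have := (div_le_iff₀ hq).1 h1
    linarith
  have hlb : t + i * q < x := by
    have h1 : (⌈(x - t) / q⌉₊ : ℝ) < (x - t) / q + 1 := Nat.ceil_lt_add_one hpos.le
    rw [← hi1] at h1
    push_cast at h1
    have h2 : (i : ℝ) < (x - t) / q := by linarith
    have := (lt_div_iff₀ hq).1 h2
    linarith
  have hin : i < n := by
    have hle : ⌈(x - t) / q⌉₊ ≤ n := by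
      apply Nat.ceil_le.2
      rw [div_le_iff₀ hq]
      nlinarith
    omega
  simp only [mem_iUnion, Finset.mem_range, exists_prop]
  exact ⟨i, hin, hlb, hub⟩

lemma window (ν : Measure ℝ) (t L : ℝ) (n : ℕ) (hn : L ≤ n) :
    ν (Ioc t (t + L)) ≤ n * unifE ν := by
  have hsub := Ioc_subset_iUnion t L 1 one_pos n (by rw [mul_one]; exact hn)
  refine (measure_mono hsub).trans ?_
  refine (measure_biUnion_finset_le _ _).trans ?_
  have hb : ∀ i ∈ Finset.range n, ν (Ioc (t + i * 1) (t + i * 1 + 1)) ≤ unifE ν :=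
    fun i _ => le_iSup (fun s => ν (Ioc s (s + 1))) (t + i * 1)
  calc ∑ i ∈ Finset.range n, ν (Ioc (t + i * 1) (t + i * 1 + 1))
      ≤ ∑ _i ∈ Finset.range n, unifE ν := Finset.sum_le_sum hb
    _ = n * unifE ν := by rw [Finset.sum_const, Finset.card_range, nsmul_eq_mul]

lemma fin_of_unifE {ν : Measure ℝ} (h : unifE ν < ⊤) : FiniteOnBounded ν := by
  intro s hs
  obtain ⟨R, hR⟩ := hs.subset_closedBall 0
  have h1 : s ⊆ Ioc (-R - 1) (-R - 1 + (2 * R + 2)) := by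
    intro x hx
    have h2 := hR hx
    simp only [Metric.mem_closedBall, Real.dist_eq, sub_zero] at h2
    have h3 := abs_le.1 h2
    exact ⟨by linarith [h3.1], by linarith [h3.2]⟩
  calc ν s ≤ ν (Ioc (-R - 1) (-R - 1 + (2 * R + 2))) := measure_mono h1
    _ ≤ (⌈2 * R + 2⌉₊ : ℝ≥0∞) * unifE ν := window ν _ _ _ (Nat.le_ceil _)
    _ < ⊤ := ENNReal.mul_lt_top (ENNReal.natCast_ne_top _).lt_top h

lemma withDensity_le_self {ρ : Measure ℝ} {D : ℝ → ℝ≥0∞} (hD : ∀ x, D x ≤ 1)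
    {X : Set ℝ} (hX : MeasurableSet X) : ρ.withDensity D X ≤ ρ X := by
  rw [withDensity_apply _ hX, ← setLIntegral_one]
  exact lintegral_mono fun x => hD x

lemma coD_part_le {ρ : Measure ℝ} {p β : ℝ} (hβ0 : 0 < β) (hβ1 : β ≤ 1)
    {X : Set ℝ} (hX : MeasurableSet X) (hXsub : X ⊆ Ioc 0 p) :
    (lmTranslate ρ p).withDensity (coD β) X ≤ unifE ρ := by
  rw [withDensity_apply _ hX]
  have h1 : ∀ x : ℝ, coD β x ≤ (Iic β).indicator (fun _ => (1 : ℝ≥0∞)) x := by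
    intro x
    by_cases hx : x ≤ β
    · simp only [indicator_of_mem, mem_Iic, hx]
      exact coD_le_one β x
    · push_neg at hx
      have hz : coD β x = 0 := by rw [coD, ramp_eq_one hβ0 hx.le]; simp
      simp [hz, indicator]
  calc ∫⁻ x in X, coD β x ∂(lmTranslate ρ p)
      ≤ ∫⁻ x in X, (Iic β).indicator (fun _ => (1 : ℝ≥0∞)) x ∂(lmTranslate ρ p) :=
        lintegral_mono h1
    _ = (lmTranslate ρ p).restrict X (Iic β) := by
        rw [lintegral_indicator measurableSet_Iic, setLIntegral_one]
    _ = lmTranslate ρ p (Iic β ∩ X) := Measure.restrict_apply measurableSet_Iic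
    _ ≤ lmTranslate ρ p (Ioc 0 β) := by
        apply measure_mono
        rintro x ⟨hx1, hx2⟩
        exact ⟨(hXsub hx2).1, hx1⟩
    _ = ρ (Ioc (0 + p) (β + p)) := lmTranslate_Ioc ρ p 0 β
    _ ≤ unifE ρ := meas_le_unifE ρ (fun y hy => by rw [zero_add] at hy; exact hy)
        (by linarith)

lemma fdm_le_two {ρ : Measure ℝ} {p β : ℝ} (hβ0 : 0 < β) (hβ1 : β ≤ 1)
    {s : Set ℝ} (hs : MeasurableSet s) {a : ℝ} (hsub : s ∩ Ioc 0 p ⊆ Ioc a (a + 1)) :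
    fdm ρ p β s ≤ unifE ρ + unifE ρ := by
  rw [fdm_apply]
  have hm : MeasurableSet (s ∩ Ioc 0 p) := hs.inter measurableSet_Ioc
  apply add_le_add
  · exact (withDensity_le_self (rampD_le_one β) hm).trans (meas_le_unifE ρ hsub le_rfl)
  · exact coD_part_le hβ0 hβ1 hm inter_subset_right

lemma fdm_preimage_le {ρ : Measure ℝ} {p β : ℝ} (hβ0 : 0 < β) (hβ1 : β ≤ 1)
    (t : ℝ) (c : ℝ) :
    fdm ρ p β ((fun x => x + c) ⁻¹' Ioc t (t + 1)) ≤ unifE ρ + unifE ρ := by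
  rw [preimage_add_const_Ioc]
  apply fdm_le_two hβ0 hβ1 measurableSet_Ioc (a := max (t - c) 0)
  rintro x ⟨⟨hx1, hx2⟩, hx3, hx4⟩
  constructor
  · exact max_lt_iff.2 ⟨hx1, hx3⟩
  · have := le_max_left (t - c) 0
    linarith

lemma per_Ioc_le_big {ρ : Measure ℝ} {p β : ℝ} (hp : 1 ≤ p) (hβ0 : 0 < β) (hβ1 : β ≤ 1)
    (t : ℝ) :
    per ρ p β (Ioc t (t + 1)) ≤ (unifE ρ + unifE ρ) + (unifE ρ + unifE ρ) := by
  have hp0 : (0 : ℝ) < p := by linarith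
  rw [per_apply _ _ _ measurableSet_Ioc]
  set k₀ : ℤ := ⌊t / p⌋ with hk₀
  have hzero : ∀ k : ℤ, k ∉ ({k₀, k₀ + 1} : Finset ℤ) →
      fdm ρ p β ((fun x => x + (k : ℝ) * p) ⁻¹' Ioc t (t + 1)) = 0 := by
    intro k hk
    apply fdm_zero
    rw [preimage_add_const_Ioc, eq_empty_iff_forall_notMem]
    rintro x ⟨⟨h1, h2⟩, h3, h4⟩
    simp only [Finset.mem_insert, Finset.mem_singleton] at hk
    push_neg at hk
    rcases lt_or_gt_of_ne hk.1 with hklt | hkgt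
    · -- k ≤ k₀ - 1 :  (k+1) p ≤ t, hence x > t - k p ≥ p ≥ x : contradiction
      have hkle : k ≤ k₀ - 1 := by omega
      have h5 : ((k : ℝ) + 1) ≤ t / p := by
        have hc : ((k + 1 : ℤ) : ℝ) ≤ (k₀ : ℝ) := by exact_mod_cast by omega
        push_cast at hc
        exact hc.trans (Int.floor_le _)
      have h6 : ((k : ℝ) + 1) * p ≤ t := by
        rw [← le_div_iff₀ hp0]
        exact h5
      nlinarith
    · -- k ≥ k₀ + 2 : k p > t + p, hence x ≤ t + 1 - k p < 1 - p ≤ 0 : contradiction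
      have hkge : k₀ + 2 ≤ k := by omega
      have h5 : t / p + 1 < (k : ℝ) := by
        have hc : ((k₀ : ℝ) + 2) ≤ (k : ℝ) := by exact_mod_cast by omega
        have h6 : t / p < (k₀ : ℝ) + 1 := Int.lt_floor_add_one _
        linarith
      have h6 : t + p < (k : ℝ) * p := by
        have := (div_lt_iff₀ hp0).1 (by linarith : t / p < (k : ℝ) - 1)
        nlinarith
      nlinarith
  rw [tsum_eq_sum hzero]
  have hne : k₀ ∉ ({k₀ + 1} : Finset ℤ) := by simp
  rw [show ({k₀, k₀ + 1} : Finset ℤ) = insert k₀ {k₀ + 1} from rfl,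
    Finset.sum_insert hne, Finset.sum_singleton]
  exact add_le_add (fdm_preimage_le hβ0 hβ1 t _) (fdm_preimage_le hβ0 hβ1 t _)

lemma per_interval_full {ρ : Measure ℝ} {p β : ℝ} (hp0 : 0 < p) (s : ℝ) :
    per ρ p β (Ioc s (s + p)) = fdm ρ p β univ := by
  rw [per_apply _ _ _ measurableSet_Ioc]
  have hpre : ∀ k : ℤ, (fun x => x + (k : ℝ) * p) ⁻¹' Ioc s (s + p)
      = Ioc (s - k * p) (s - k * p + p) := by
    intro k
    rw [preimage_add_const_Ioc]
    congr 1
    ring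
  have hdisj : Pairwise (Function.onFun Disjoint fun k : ℤ => Ioc (s - k * p) (s - k * p + p)) := by
    intro k l hkl
    apply Set.disjoint_left.2
    rintro x ⟨ha1, ha2⟩ ⟨hb1, hb2⟩
    rcases lt_or_gt_of_ne hkl with h | h
    · have hc : (k : ℝ) + 1 ≤ (l : ℝ) := by exact_mod_cast by omega
      nlinarith
    · have hc : (l : ℝ) + 1 ≤ (k : ℝ) := by exact_mod_cast by omega
      nlinarith
  have hunion : (⋃ k : ℤ, Ioc (s - k * p) (s - k * p + p)) = univ := by
    rw [eq_univ_iff_forall]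
    intro x
    rw [mem_iUnion]
    refine ⟨⌊(s + p - x) / p⌋, ?_, ?_⟩
    · have h1 : (s + p - x) / p - 1 < (⌊(s + p - x) / p⌋ : ℝ) := Int.sub_one_lt_floor _
      have h2 : (s + p - x) / p < (⌊(s + p - x) / p⌋ : ℝ) + 1 := by linarith
      have h3 := (div_lt_iff₀ hp0).1 h2
      linarith
    · have h1 : (⌊(s + p - x) / p⌋ : ℝ) ≤ (s + p - x) / p := Int.floor_le _
      have h2 := (le_div_iff₀ hp0).1 h1
      linarith
  calc ∑' k : ℤ, fdm ρ p β ((fun x => x + (k : ℝ) * p) ⁻¹' Ioc s (s + p))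
      = ∑' k : ℤ, fdm ρ p β (Ioc (s - k * p) (s - k * p + p)) := by
        exact tsum_congr fun k => by rw [hpre]
    _ = fdm ρ p β (⋃ k : ℤ, Ioc (s - k * p) (s - k * p + p)) :=
        (measure_iUnion hdisj fun k => measurableSet_Ioc).symm
    _ = fdm ρ p β univ := by rw [hunion]

lemma per_Ioc_le_small {ρ : Measure ℝ} {p β : ℝ} (hp0 : 0 < p) (hp1 : p ≤ 1)
    (hβ0 : 0 < β) (hβ1 : β ≤ 1) (t : ℝ) :
    per ρ p β (Ioc t (t + 1)) ≤ (⌈1 / p⌉₊ : ℝ≥0∞) * (unifE ρ + unifE ρ) := by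
  have hcov := Ioc_subset_iUnion t 1 p hp0 ⌈1 / p⌉₊ (by
    have h1 : 1 / p ≤ (⌈1 / p⌉₊ : ℝ) := Nat.le_ceil _
    rw [div_le_iff₀ hp0] at h1
    linarith)
  refine (measure_mono hcov).trans ?_
  refine (measure_biUnion_finset_le _ _).trans ?_
  have hb : ∀ i ∈ Finset.range ⌈1 / p⌉₊,
      per ρ p β (Ioc (t + i * p) (t + i * p + p)) ≤ unifE ρ + unifE ρ := by
    intro i _
    rw [per_interval_full hp0]
    exact fdm_le_two hβ0 hβ1 MeasurableSet.univ (a := 0)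
      (fun x hx => ⟨hx.2.1, by have := hx.2.2; linarith⟩)
  calc ∑ i ∈ Finset.range ⌈1 / p⌉₊, per ρ p β (Ioc (t + i * p) (t + i * p + p))
      ≤ ∑ _i ∈ Finset.range ⌈1 / p⌉₊, (unifE ρ + unifE ρ) := Finset.sum_le_sum hb
    _ = (⌈1 / p⌉₊ : ℝ≥0∞) * (unifE ρ + unifE ρ) := by
        rw [Finset.sum_const, Finset.card_range, nsmul_eq_mul]

/-- The main uniform-norm bound, with `β = min 8⁻¹ (p/8)`. -/
lemma per_unifE_le (ρ : Measure ℝ) {p : ℝ} (hp0 : 0 < p) :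
    unifE (per ρ p (min 8⁻¹ (p / 8)))
      ≤ ENNReal.ofReal (1 + 1 / (2 * min 8⁻¹ (p / 8))) * unifE ρ := by
  set β := min 8⁻¹ (p / 8) with hβ
  have hβ0 : 0 < β := lt_min (by norm_num) (by linarith)
  have hβ1 : β ≤ 1 := (min_le_left _ _).trans (by norm_num)
  rcases le_or_gt 1 p with hp | hp
  · -- large period
    have hβ8 : β ≤ 8⁻¹ := min_le_left _ _
    have hc : (4 : ℝ≥0∞) ≤ ENNReal.ofReal (1 + 1 / (2 * β)) := by
      have h1 : (4 : ℝ) ≤ 1 / (2 * β) := by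
        rw [le_one_div (by linarith) (by linarith)]
        linarith
      calc (4 : ℝ≥0∞) = ENNReal.ofReal 4 := by norm_num
        _ ≤ ENNReal.ofReal (1 + 1 / (2 * β)) := ENNReal.ofReal_le_ofReal (by linarith)
    refine iSup_le fun t => ?_
    calc per ρ p β (Ioc t (t + 1))
        ≤ (unifE ρ + unifE ρ) + (unifE ρ + unifE ρ) := per_Ioc_le_big hp hβ0 hβ1 t
      _ = 4 * unifE ρ := by ring
      _ ≤ ENNReal.ofReal (1 + 1 / (2 * β)) * unifE ρ := mul_le_mul_left hc _
  · -- small period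
    have hβp : β = p / 8 := min_eq_right (by linarith)
    have hc : ((⌈1 / p⌉₊ : ℝ≥0∞)) * 2 ≤ ENNReal.ofReal (1 + 1 / (2 * β)) := by
      have h2β : 2 * β = p / 4 := by rw [hβp]; ring
      have h1 : 1 / (2 * β) = 4 / p := by rw [h2β, one_div_div]
      rw [h1]
      have hceil : (⌈1 / p⌉₊ : ℝ) < 1 / p + 1 := Nat.ceil_lt_add_one (by positivity)
      have h2p : (1 : ℝ) ≤ 2 / p := by rw [le_div_iff₀ hp0]; linarith
      have hmain : (⌈1 / p⌉₊ : ℝ) * 2 ≤ 1 + 4 / p := by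
        have e : (4 : ℝ) / p = 2 * (2 / p) := by ring
        have e2 : (2 : ℝ) / p = 2 * (1 / p) := by ring
        rw [e, e2]
        nlinarith
      calc ((⌈1 / p⌉₊ : ℝ≥0∞)) * 2 = ENNReal.ofReal ((⌈1 / p⌉₊ : ℝ) * 2) := by
            rw [ENNReal.ofReal_mul (Nat.cast_nonneg _), ENNReal.ofReal_natCast,
              ENNReal.ofReal_ofNat]
        _ ≤ ENNReal.ofReal (1 + 4 / p) := ENNReal.ofReal_le_ofReal hmain
    refine iSup_le fun t => ?_
    calc per ρ p β (Ioc t (t + 1))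
        ≤ (⌈1 / p⌉₊ : ℝ≥0∞) * (unifE ρ + unifE ρ) := per_Ioc_le_small hp0 hp.le hβ0 hβ1 t
      _ = ((⌈1 / p⌉₊ : ℝ≥0∞) * 2) * unifE ρ := by ring
      _ ≤ ENNReal.ofReal (1 + 1 / (2 * β)) * unifE ρ := mul_le_mul_left hc _

end PG3

namespace PG4
open PG PG2 PG3

lemma wNorm_nonneg (μp μm νp νm : Measure ℝ) (I : Set ℝ) : 0 ≤ wNorm μp μm νp νm I :=
  Real.sSup_nonneg fun r hr => by
    obtain ⟨w, _, _, _, _, hr⟩ := hr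
    rw [hr]; exact abs_nonneg _

lemma sup_bound {w : ℝ → ℝ} (hl : LipschitzWith 1 w) (hc : HasCompactSupport w)
    (hd : Metric.diam (tsupport w) ≤ 2) : ∀ x, |w x| ≤ 2 := by
  intro x
  by_cases hx : w x = 0
  · rw [hx]; norm_num
  have hxK : x ∈ tsupport w := subset_tsupport w hx
  have hKb : Bornology.IsBounded (tsupport w) := hc.isBounded
  have hsup_mem : sSup (tsupport w) ∈ tsupport w := hc.sSup_mem ⟨x, hxK⟩
  apply le_of_forall_pos_le_add
  intro ε hε
  have hy : sSup (tsupport w) + ε ∉ tsupport w := by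
    intro h
    have := le_csSup hKb.bddAbove h
    linarith
  have hwy : w (sSup (tsupport w) + ε) = 0 := image_eq_zero_of_notMem_tsupport hy
  have hd1 : dist x (sSup (tsupport w)) ≤ 2 :=
    le_trans (Metric.dist_le_diam_of_mem hKb hxK hsup_mem) hd
  have hlip := hl.dist_le_mul x (sSup (tsupport w) + ε)
  simp only [Real.dist_eq] at hlip hd1
  rw [hwy, sub_zero] at hlip
  have ht : |x - (sSup (tsupport w) + ε)| ≤ |x - sSup (tsupport w)| + ε := by
    have h := abs_add_le (x - sSup (tsupport w)) (-ε)
    have he : x - (sSup (tsupport w) + ε) = x - sSup (tsupport w) + -ε := by ring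
    rw [← he, abs_neg, abs_of_pos hε] at h
    exact h
  have hcast : ((1 : ℝ≥0) : ℝ) = 1 := by norm_num
  rw [hcast, one_mul] at hlip
  linarith

lemma lipschitz_translate (c : ℝ) : LipschitzWith 1 (fun x : ℝ => x + c) :=
  LipschitzWith.of_dist_le_mul fun x y => by simp [Real.dist_eq]

lemma lip_shift {w : ℝ → ℝ} (hw : LipschitzWith 1 w) (c : ℝ) :
    LipschitzWith 1 (fun x => w (x + c)) := by
  simpa [Function.comp_def] using hw.comp (lipschitz_translate c)

lemma isometry_translate (c : ℝ) : Isometry (fun x : ℝ => x + c) :=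
  Isometry.of_dist_eq fun x y => by simp [Real.dist_eq]

lemma abs_min_sub_min (a b c : ℝ) : |min c a - min c b| ≤ |a - b| := by
  have key : ∀ x y : ℝ, x ≤ y → min c y - min c x ≤ y - x := by
    intro x y hxy
    rcases le_total c x with h1 | h1
    · rw [min_eq_left h1, min_eq_left (h1.trans hxy)]; linarith
    · rw [min_eq_right h1]
      rcases le_total c y with h2 | h2
      · rw [min_eq_left h2]; linarith
      · rw [min_eq_right h2]
  rcases le_total a b with h | h
  · rw [abs_of_nonpos (sub_nonpos.2 (min_le_min le_rfl h)), abs_of_nonpos (sub_nonpos.2 h)]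
    linarith [key a b h]
  · rw [abs_of_nonneg (sub_nonneg.2 (min_le_min le_rfl h)), abs_of_nonneg (sub_nonneg.2 h)]
    linarith [key b a h]

lemma ramp_lip : LipschitzWith 8 (ramp 8⁻¹) := by
  apply LipschitzWith.of_dist_le_mul
  intro x y
  rw [Real.dist_eq, Real.dist_eq]
  have h1 : |ramp 8⁻¹ x - ramp 8⁻¹ y| ≤ |max 0 (x / 8⁻¹) - max 0 (y / 8⁻¹)| := by
    unfold ramp
    exact abs_min_sub_min _ _ 1
  have h2 : |max 0 (x / 8⁻¹) - max 0 (y / 8⁻¹)| ≤ |x / 8⁻¹ - y / 8⁻¹| := by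
    rw [max_comm 0 (x / 8⁻¹), max_comm 0 (y / 8⁻¹)]
    exact abs_max_sub_max_le_abs _ _ 0
  have h3 : |x / 8⁻¹ - y / 8⁻¹| = 8 * |x - y| := by
    have he : x / 8⁻¹ - y / 8⁻¹ = 8 * (x - y) := by ring
    rw [he, abs_mul]
    norm_num
  have hcast : ((8 : ℝ≥0) : ℝ) = 8 := by norm_num
  rw [hcast]
  linarith [h1.trans h2]

lemma ramp_co_lip : LipschitzWith 8 (fun x => 1 - ramp 8⁻¹ x) := by
  apply LipschitzWith.of_dist_le_mul
  intro x y
  have h := ramp_lip.dist_le_mul y x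
  simp only [Real.dist_eq] at h ⊢
  have hcast : ((8 : ℝ≥0) : ℝ) = 8 := by norm_num
  rw [hcast] at h ⊢
  have he : |1 - ramp 8⁻¹ x - (1 - ramp 8⁻¹ y)| = |ramp 8⁻¹ y - ramp 8⁻¹ x| := by
    congr 1; ring
  rw [he]
  have he2 := abs_sub_comm y x
  linarith

lemma lip_mul {w g : ℝ → ℝ} (hw : LipschitzWith 1 w) (hwb : ∀ x, |w x| ≤ 2)
    (hg : LipschitzWith 8 g) (hgb : ∀ x, |g x| ≤ 1) :
    LipschitzWith 17 (fun x => w x * g x) := by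
  apply LipschitzWith.of_dist_le_mul
  intro x y
  have h1 := hw.dist_le_mul x y
  have h2 := hg.dist_le_mul x y
  simp only [Real.dist_eq] at h1 h2 ⊢
  have key : w x * g x - w y * g y = w x * (g x - g y) + g y * (w x - w y) := by ring
  have habs : |w x * g x - w y * g y| ≤ |w x| * |g x - g y| + |g y| * |w x - w y| := by
    rw [key]
    exact (abs_add_le _ _).trans (by rw [abs_mul, abs_mul])
  have hb1 : |w x| * |g x - g y| ≤ 2 * (8 * |x - y|) := by
    apply mul_le_mul (hwb x) (by simpa using h2) (abs_nonneg _) (by norm_num)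
  have hb2 : |g y| * |w x - w y| ≤ 1 * (1 * |x - y|) := by
    apply mul_le_mul (hgb y) (by simpa using h1) (abs_nonneg _) (by norm_num)
  have hcast : ((17 : ℝ≥0) : ℝ) = 17 := by norm_num
  have hcast1 : ((1 : ℝ≥0) : ℝ) = 1 := by norm_num
  have hcast8 : ((8 : ℝ≥0) : ℝ) = 8 := by norm_num
  rw [hcast]
  rw [hcast1] at h1
  rw [hcast8] at h2
  linarith

lemma zero_on_closure {f : ℝ → ℝ} (hf : Continuous f) {s : Set ℝ}
    (h : ∀ x ∈ s, f x = 0) {y : ℝ} (hy : y ∈ closure s) : f y = 0 :=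
  (Set.EqOn.closure (fun x hx => h x hx) hf continuous_const) hy

lemma abs_sub_le' (x y : ℝ) : |x - y| ≤ |x| + |y| := by
  rw [sub_eq_add_neg]
  exact (abs_add_le _ _).trans (by rw [abs_neg])

lemma integral_abs_le {ρ : Measure ℝ} (hρ : FiniteOnBounded ρ) {w : ℝ → ℝ}
    (hcont : Continuous w) (hb : ∀ x, |w x| ≤ 2) {a b : ℝ}
    (hzero : ∀ x ∉ Icc a b, w x = 0) :
    |∫ x, w x ∂ρ| ≤ 2 * (ρ (Icc a b)).toReal := by
  have hind : (Icc a b).indicator w = w := by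
    funext x
    by_cases hx : x ∈ Icc a b
    · simp [indicator_of_mem hx]
    · simp [indicator_of_notMem hx, hzero x hx]
  have h1 : ∫ x, w x ∂ρ = ∫ x in Icc a b, w x ∂ρ := by
    rw [← integral_indicator measurableSet_Icc, hind]
  rw [h1]
  have := norm_setIntegral_le_of_norm_le_const (f := w) (C := 2) (hρ _ (Metric.isBounded_Icc a b))
    (fun x _ => by simpa [Real.norm_eq_abs] using hb x)
  simpa [Real.norm_eq_abs, Measure.real] using this

lemma wNorm_bddAbove {μp μm νp νm : Measure ℝ} (h1 : FiniteOnBounded μp)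
    (h2 : FiniteOnBounded μm) (h3 : FiniteOnBounded νp) (h4 : FiniteOnBounded νm)
    (a b : ℝ) :
    BddAbove {r : ℝ | ∃ w : ℝ → ℝ, LipschitzWith 1 w ∧ HasCompactSupport w ∧
      tsupport w ⊆ Icc a b ∧ Metric.diam (tsupport w) ≤ 2 ∧
      r = |lmInt μp μm w - lmInt νp νm w|} := by
  refine ⟨(2 * (μp (Icc a b)).toReal + 2 * (μm (Icc a b)).toReal)
    + (2 * (νp (Icc a b)).toReal + 2 * (νm (Icc a b)).toReal), ?_⟩
  rintro r ⟨w, hl, hc, hsub, hd, rfl⟩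
  have hb := sup_bound hl hc hd
  have hzero : ∀ x ∉ Icc a b, w x = 0 := fun x hx =>
    image_eq_zero_of_notMem_tsupport fun hmem => hx (hsub hmem)
  have k1 := integral_abs_le h1 hl.continuous hb hzero
  have k2 := integral_abs_le h2 hl.continuous hb hzero
  have k3 := integral_abs_le h3 hl.continuous hb hzero
  have k4 := integral_abs_le h4 hl.continuous hb hzero
  have e1 : |lmInt μp μm w - lmInt νp νm w| ≤ |lmInt μp μm w| + |lmInt νp νm w| :=
    abs_sub_le' _ _
  have e2 : |lmInt μp μm w| ≤ |∫ x, w x ∂μp| + |∫ x, w x ∂μm| := abs_sub_le' _ _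
  have e3 : |lmInt νp νm w| ≤ |∫ x, w x ∂νp| + |∫ x, w x ∂νm| := abs_sub_le' _ _
  linarith

/-- The key scaling estimate: a `17`-Lipschitz test function yields a bound by
`17 * wNorm`. -/
lemma test_estimate {μp μm Tp Tm : Measure ℝ} {p : ℝ}
    (hBdd : BddAbove {r : ℝ | ∃ w : ℝ → ℝ, LipschitzWith 1 w ∧ HasCompactSupport w ∧
      tsupport w ⊆ Icc (-p) p ∧ Metric.diam (tsupport w) ≤ 2 ∧
      r = |lmInt μp μm w - lmInt Tp Tm w|})
    {v : ℝ → ℝ} (hl : LipschitzWith 17 v) (hc : HasCompactSupport v)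
    (hsub : tsupport v ⊆ Icc (-p) p) (hd : Metric.diam (tsupport v) ≤ 2) :
    |lmInt μp μm v - lmInt Tp Tm v| ≤ 17 * wNorm μp μm Tp Tm (Icc (-p) p) := by
  set u : ℝ → ℝ := fun x => (17 : ℝ)⁻¹ * v x with hu
  have hul : LipschitzWith 1 u := by
    apply LipschitzWith.of_dist_le_mul
    intro x y
    have h17 := hl.dist_le_mul x y
    simp only [Real.dist_eq] at h17 ⊢
    have heq : |u x - u y| = (17 : ℝ)⁻¹ * |v x - v y| := by
      rw [hu]
      simp only
      rw [← mul_sub, abs_mul, abs_inv]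
      norm_num
    rw [heq]
    have hc17 : ((17 : ℝ≥0) : ℝ) = 17 := by norm_num
    rw [hc17] at h17
    have hc1 : ((1 : ℝ≥0) : ℝ) = 1 := by norm_num
    rw [hc1, one_mul]
    linarith
  have husupp : tsupport u ⊆ tsupport v := by
    apply closure_mono
    intro x hx
    rw [Function.mem_support] at hx ⊢
    intro h
    exact hx (by rw [hu]; simp [h])
  have hucs : HasCompactSupport u :=
    IsCompact.of_isClosed_subset hc isClosed_closure husupp
  have hmem : |lmInt μp μm u - lmInt Tp Tm u| ∈
      {r : ℝ | ∃ w : ℝ → ℝ, LipschitzWith 1 w ∧ HasCompactSupport w ∧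
        tsupport w ⊆ Icc (-p) p ∧ Metric.diam (tsupport w) ≤ 2 ∧
        r = |lmInt μp μm w - lmInt Tp Tm w|} :=
    ⟨u, hul, hucs, husupp.trans hsub,
      le_trans (Metric.diam_mono husupp hc.isBounded) hd, rfl⟩
  have hle := le_csSup hBdd hmem
  have huv : lmInt μp μm u - lmInt Tp Tm u
      = (17 : ℝ)⁻¹ * (lmInt μp μm v - lmInt Tp Tm v) := by
    simp only [lmInt, hu, integral_const_mul]
    ring
  rw [huv, abs_mul, abs_inv] at hle
  have h17 : |(17 : ℝ)| = 17 := by norm_num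
  rw [h17] at hle
  have : |lmInt μp μm v - lmInt Tp Tm v|
      = 17 * ((17 : ℝ)⁻¹ * |lmInt μp μm v - lmInt Tp Tm v|) := by ring
  rw [this]
  rw [wNorm]
  linarith

end PG4

namespace PG5
open PG PG2 PG3 PG4

variable {ρ : Measure ℝ} {p β : ℝ}

/-- The three-term window measure on `(-p, p]`. -/
def M2 (ρ : Measure ℝ) (p β : ℝ) : Measure ℝ :=
  ρ.withDensity (rampD β) + (lmTranslate ρ p).withDensity (midD p β)
    + (lmTranslate (lmTranslate ρ p) p).withDensity (topD p β)

lemma partA (hβ0 : 0 < β) {X : Set ℝ} (hXm : MeasurableSet X) (hXsub : X ⊆ Ioc (-p) p) :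
    ρ.withDensity (rampD β) X = ρ.withDensity (rampD β) (X ∩ Ioc 0 p) := by
  rw [withDensity_apply _ hXm, withDensity_apply _ (hXm.inter measurableSet_Ioc),
    ← lintegral_indicator hXm, ← lintegral_indicator (hXm.inter measurableSet_Ioc)]
  congr 1
  funext x
  by_cases hx : x ∈ X
  · by_cases hxI : x ∈ Ioc 0 p
    · have hm : x ∈ X ∩ Ioc 0 p := ⟨hx, hxI⟩
      rw [indicator_of_mem hx, indicator_of_mem hm]
    · rw [indicator_of_mem hx, indicator_of_notMem (fun h => hxI h.2)]
      have hx0 : x ≤ 0 := by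
        have hxp : x ≤ p := (hXsub hx).2
        by_contra h
        push_neg at h
        exact hxI ⟨h, hxp⟩
      rw [rampD, ramp_eq_zero hβ0 hx0, ENNReal.ofReal_zero]
  · rw [indicator_of_notMem hx, indicator_of_notMem (fun h => hx h.1)]

lemma partB (hβ0 : 0 < β) (hβp : β ≤ p) {X : Set ℝ} (hXm : MeasurableSet X)
    (hXsub : X ⊆ Ioc (-p) p) :
    (lmTranslate ρ p).withDensity (midD p β) X
      = (lmTranslate ρ p).withDensity (coD β) (X ∩ Ioc 0 p)
        + ρ.withDensity (rampD β) (((fun x => x - p) ⁻¹' X) ∩ Ioc 0 p) := by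
  have hIm : MeasurableSet (Ioc (0 : ℝ) p) := measurableSet_Ioc
  have hPm : MeasurableSet ((fun x : ℝ => x - p) ⁻¹' X) := hXm.preimage (measurable_sub_const p)
  have hsplit := measure_inter_add_diff (μ := (lmTranslate ρ p).withDensity (midD p β)) X hIm
  rw [← hsplit]
  congr 1
  · -- on X ∩ (0,p] the density midD agrees with coD
    rw [withDensity_apply _ (hXm.inter hIm), withDensity_apply _ (hXm.inter hIm)]
    refine lintegral_congr_ae ((ae_restrict_iff' (hXm.inter hIm)).2 (ae_of_all _ fun x hx => ?_))
    have h1 : ramp β (x + p) = 1 := by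
      apply ramp_eq_one hβ0
      have := hx.2.1
      linarith
    rw [midD, coD, h1]
  · -- on X \ (0,p] it is a translate of the rampD piece
    have hdm : MeasurableSet (X \ Ioc 0 p) := hXm.diff hIm
    rw [withDensity_apply _ hdm, withDensity_apply _ (hPm.inter hIm),
      ← lintegral_indicator hdm, ← lintegral_indicator (hPm.inter hIm)]
    conv_lhs => rw [lmTranslate]
    rw [lintegral_map ((midD_measurable p β).indicator hdm) (measurable_sub_const p)]
    classical
    congr 1
    funext x
    rw [Set.indicator_apply, Set.indicator_apply]
    by_cases hx : x - p ∈ X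
    · by_cases hxI : x - p ∈ Ioc 0 p
      · have hn1 : x - p ∉ X \ Ioc 0 p := fun h => h.2 hxI
        have hn2 : x ∉ ((fun x : ℝ => x - p) ⁻¹' X) ∩ Ioc 0 p := by
          rintro ⟨h1, h2, h3⟩
          have h4 : 0 < x - p := hxI.1
          linarith
        rw [if_neg hn1, if_neg hn2]
      · have hle : x - p ≤ 0 := by
          have h2 : x - p ≤ p := (hXsub hx).2
          by_contra h
          push_neg at h
          exact hxI ⟨h, h2⟩
        have hgt : -p < x - p := (hXsub hx).1
        have hm1 : x - p ∈ X \ Ioc 0 p := ⟨hx, hxI⟩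
        have hm2 : x ∈ ((fun x : ℝ => x - p) ⁻¹' X) ∩ Ioc 0 p :=
          ⟨hx, ⟨by linarith, by linarith⟩⟩
        rw [if_pos hm1, if_pos hm2]
        rw [midD, rampD, sub_add_cancel, ramp_eq_zero hβ0 hle, sub_zero]
    · have hn1 : x - p ∉ X \ Ioc 0 p := fun h => hx h.1
      have hn2 : x ∉ ((fun x : ℝ => x - p) ⁻¹' X) ∩ Ioc 0 p := fun h => hx h.1
      rw [if_neg hn1, if_neg hn2]

lemma partC (hβ0 : 0 < β) (hβp : β ≤ p) {X : Set ℝ} (hXm : MeasurableSet X)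
    (hXsub : X ⊆ Ioc (-p) p) :
    (lmTranslate (lmTranslate ρ p) p).withDensity (topD p β) X
      = (lmTranslate ρ p).withDensity (coD β) (((fun x => x - p) ⁻¹' X) ∩ Ioc 0 p) := by
  have hIm : MeasurableSet (Ioc (0 : ℝ) p) := measurableSet_Ioc
  have hPm : MeasurableSet ((fun x : ℝ => x - p) ⁻¹' X) := hXm.preimage (measurable_sub_const p)
  rw [withDensity_apply _ hXm, withDensity_apply _ (hPm.inter hIm),
    ← lintegral_indicator hXm, ← lintegral_indicator (hPm.inter hIm)]
  conv_lhs => rw [show lmTranslate (lmTranslate ρ p) p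
    = Measure.map (fun x => x - p) (lmTranslate ρ p) from rfl]
  rw [lintegral_map ((topD_measurable p β).indicator hXm) (measurable_sub_const p)]
  classical
  congr 1
  funext x
  rw [Set.indicator_apply, Set.indicator_apply]
  by_cases hx : x - p ∈ X
  · by_cases hxI : x ∈ Ioc 0 p
    · have hm2 : x ∈ ((fun x : ℝ => x - p) ⁻¹' X) ∩ Ioc 0 p := ⟨hx, hxI⟩
      rw [if_pos hx, if_pos hm2]
      rw [topD, coD, sub_add_cancel]
    · have hn2 : x ∉ ((fun x : ℝ => x - p) ⁻¹' X) ∩ Ioc 0 p := fun h => hxI h.2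
      rw [if_pos hx, if_neg hn2]
      have hxgt : p < x := by
        have h1 : -p < x - p := (hXsub hx).1
        have h2 : x - p ≤ p := (hXsub hx).2
        by_contra h
        push_neg at h
        exact hxI ⟨by linarith, h⟩
      rw [topD, sub_add_cancel, ramp_eq_one hβ0 (hβp.trans hxgt.le)]
      simp
  · have hn1 : x - p ∉ X := hx
    have hn2 : x ∉ ((fun x : ℝ => x - p) ⁻¹' X) ∩ Ioc 0 p := fun h => hx h.1
    rw [if_neg hn1, if_neg hn2]

lemma per_restrict_window (hp0 : 0 < p) (hβ0 : 0 < β) (hβp : β ≤ p) :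
    (per ρ p β).restrict (Ioc (-p) p) = (M2 ρ p β).restrict (Ioc (-p) p) := by
  ext s hs
  rw [Measure.restrict_apply hs, Measure.restrict_apply hs]
  set X := s ∩ Ioc (-p) p with hXdef
  have hXm : MeasurableSet X := hs.inter measurableSet_Ioc
  have hXsub : X ⊆ Ioc (-p) p := inter_subset_right
  rw [per_apply _ _ _ hXm]
  have hzero : ∀ k : ℤ, k ∉ ({-1, 0} : Finset ℤ) →
      fdm ρ p β ((fun x => x + (k : ℝ) * p) ⁻¹' X) = 0 := by
    intro k hk
    apply fdm_zero
    rw [eq_empty_iff_forall_notMem]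
    rintro x ⟨hx1, hx2, hx3⟩
    have hmem := hXsub hx1
    have h1 : -p < x + k * p := hmem.1
    have h2 : x + k * p ≤ p := hmem.2
    simp only [Finset.mem_insert, Finset.mem_singleton] at hk
    push_neg at hk
    rcases lt_or_gt_of_ne hk.2 with hklt | hkgt
    · have hkle : k ≤ -2 := by omega
      have hkle' : (k : ℝ) ≤ -2 := by exact_mod_cast hkle
      nlinarith
    · have hkge : 1 ≤ k := by omega
      have hkge' : (1 : ℝ) ≤ (k : ℝ) := by exact_mod_cast hkge
      nlinarith
  rw [tsum_eq_sum hzero]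
  have hne : (-1 : ℤ) ∉ ({0} : Finset ℤ) := by simp
  rw [show ({-1, 0} : Finset ℤ) = insert (-1) {0} from rfl, Finset.sum_insert hne,
    Finset.sum_singleton]
  have hpre0 : (fun x : ℝ => x + ((0 : ℤ) : ℝ) * p) ⁻¹' X = X := by
    ext x; simp
  have hpre1 : (fun x : ℝ => x + ((-1 : ℤ) : ℝ) * p) ⁻¹' X = (fun x => x - p) ⁻¹' X := by
    ext x
    simp only [mem_preimage]
    rw [show x + ((-1 : ℤ) : ℝ) * p = x - p by push_cast; ring]
  rw [hpre0, hpre1, fdm_apply, fdm_apply]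
  rw [M2, Measure.add_apply, Measure.add_apply]
  rw [partA hβ0 hXm hXsub, partB hβ0 hβp hXm hXsub, partC hβ0 hβp hXm hXsub]
  ring

/-! ### integral versions -/

lemma finiteOnBounded_withDensity {ρ : Measure ℝ} (h : FiniteOnBounded ρ)
    {D : ℝ → ℝ≥0∞} (hD : ∀ x, D x ≤ 1) : FiniteOnBounded (ρ.withDensity D) := by
  intro s hs
  obtain ⟨R, hR⟩ := hs.subset_closedBall 0
  have hIcc : s ⊆ Icc (-R) R := by
    intro x hx
    have := hR hx
    simp only [Metric.mem_closedBall, Real.dist_eq, sub_zero] at this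
    exact abs_le.1 this
  calc ρ.withDensity D s ≤ ρ.withDensity D (Icc (-R) R) := measure_mono hIcc
    _ ≤ ρ (Icc (-R) R) := withDensity_le_self hD measurableSet_Icc
    _ < ⊤ := h _ (Metric.isBounded_Icc _ _)

lemma midD_le_one (p β : ℝ) (x : ℝ) : midD p β x ≤ 1 := by
  rw [midD]
  apply ENNReal.ofReal_le_one.2
  have h1 := ramp_le_one β (x + p)
  have h2 := ramp_nonneg β x
  linarith

lemma topD_le_one (p β : ℝ) (x : ℝ) : topD p β x ≤ 1 := by
  rw [topD]
  apply ENNReal.ofReal_le_one.2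
  have := ramp_nonneg β (x + p)
  linarith

lemma integral_withDensity_ofReal {ρ : Measure ℝ} {g : ℝ → ℝ} (hg : Measurable g)
    (hg0 : ∀ x, 0 ≤ g x) (w : ℝ → ℝ) :
    ∫ x, w x ∂(ρ.withDensity (fun x => ENNReal.ofReal (g x))) = ∫ x, g x * w x ∂ρ := by
  have h1 : (fun x => ENNReal.ofReal (g x)) = fun x => (((g x).toNNReal : ℝ≥0) : ℝ≥0∞) := rfl
  rw [h1, integral_withDensity_eq_integral_smul hg.real_toNNReal w]
  congr 1
  funext x
  rw [NNReal.smul_def, Real.coe_toNNReal _ (hg0 x)]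
  simp [smul_eq_mul]

lemma integral_translate (ρ : Measure ℝ) (c : ℝ) {f : ℝ → ℝ} (hf : Continuous f) :
    ∫ x, f x ∂(lmTranslate ρ c) = ∫ x, f (x - c) ∂ρ := by
  rw [lmTranslate, integral_map (measurable_sub_const c).aemeasurable hf.aestronglyMeasurable]

/-- The master integral decomposition on the window. -/
lemma E1 (hfρ : FiniteOnBounded ρ) (hp0 : 0 < p) (hβ0 : 0 < β) (hβp : β ≤ p)
    {w : ℝ → ℝ} (hw : Continuous w) (hcs : HasCompactSupport w)
    (hvan : ∀ x ∉ Ioc (-p) p, w x = 0) :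
    ∫ x, w x ∂(per ρ p β)
      = ∫ x, ramp β x * w x ∂ρ
        + ∫ x, (ramp β (x + p) - ramp β x) * w x ∂(lmTranslate ρ p)
        + ∫ x, (1 - ramp β (x + p)) * w x ∂(lmTranslate (lmTranslate ρ p) p) := by
  haveI := isFiniteOnCompacts_of hfρ
  haveI := isFiniteOnCompacts_of (finiteOnBounded_lmTranslate hfρ p)
  haveI := isFiniteOnCompacts_of (finiteOnBounded_lmTranslate (finiteOnBounded_lmTranslate hfρ p) p)
  have hfA : FiniteOnBounded (ρ.withDensity (rampD β)) :=
    finiteOnBounded_withDensity hfρ (rampD_le_one β)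
  have hfB : FiniteOnBounded ((lmTranslate ρ p).withDensity (midD p β)) :=
    finiteOnBounded_withDensity (finiteOnBounded_lmTranslate hfρ p) (midD_le_one p β)
  have hfC : FiniteOnBounded ((lmTranslate (lmTranslate ρ p) p).withDensity (topD p β)) :=
    finiteOnBounded_withDensity (finiteOnBounded_lmTranslate (finiteOnBounded_lmTranslate hfρ p) p)
      (topD_le_one p β)
  haveI := isFiniteOnCompacts_of hfA
  haveI := isFiniteOnCompacts_of hfB
  haveI := isFiniteOnCompacts_of hfC
  have hind : (Ioc (-p) p).indicator w = w := by
    funext x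
    by_cases hx : x ∈ Ioc (-p) p
    · simp [indicator_of_mem hx]
    · simp [indicator_of_notMem hx, hvan x hx]
  have key : ∫ x, w x ∂(per ρ p β) = ∫ x, w x ∂(M2 ρ p β) := by
    rw [← hind, integral_indicator measurableSet_Ioc, integral_indicator measurableSet_Ioc]
    show ∫ x, w x ∂((per ρ p β).restrict (Ioc (-p) p))
      = ∫ x, w x ∂((M2 ρ p β).restrict (Ioc (-p) p))
    rw [per_restrict_window hp0 hβ0 hβp]
  rw [key, M2]
  rw [integral_add_measure, integral_add_measure]
  · congr 1
    · congr 1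
      · rw [show (rampD β) = fun x => ENNReal.ofReal (ramp β x) from rfl]
        exact integral_withDensity_ofReal (ramp_measurable β) (ramp_nonneg β) w
      · rw [show (midD p β) = fun x => ENNReal.ofReal (ramp β (x + p) - ramp β x) from rfl]
        have hmeas : Measurable fun x : ℝ => ramp β (x + p) - ramp β x := by
          exact (((ramp_continuous β).comp (continuous_add_right p)).sub
            (ramp_continuous β)).measurable
        have h0 : ∀ x : ℝ, 0 ≤ ramp β (x + p) - ramp β x := fun x => by
          have := ramp_mono hβ0 (by linarith : x ≤ x + p)
          linarith
        exact integral_withDensity_ofReal hmeas h0 w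
    · rw [show (topD p β) = fun x => ENNReal.ofReal (1 - ramp β (x + p)) from rfl]
      have hmeas : Measurable fun x : ℝ => 1 - ramp β (x + p) := by
        exact (continuous_const.sub
          ((ramp_continuous β).comp (continuous_add_right p))).measurable
      have h0 : ∀ x : ℝ, 0 ≤ 1 - ramp β (x + p) := fun x => by
        have := ramp_le_one β (x + p)
        linarith
      exact integral_withDensity_ofReal hmeas h0 w
  · exact hw.integrable_of_hasCompactSupport hcs
  · exact hw.integrable_of_hasCompactSupport hcs
  · exact (hw.integrable_of_hasCompactSupport hcs).add_measure
      (hw.integrable_of_hasCompactSupport hcs)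
  · exact hw.integrable_of_hasCompactSupport hcs

end PG5

namespace PG6
open PG PG2 PG3 PG4 PG5

variable {ρ : Measure ℝ} {p : ℝ}

lemma integC {q w : ℝ → ℝ} (hρ : FiniteOnBounded ρ) (hq : Continuous q) (hw : Continuous w)
    (hcs : HasCompactSupport w) (c : ℝ) :
    Integrable (fun x => q x * w (x - c)) ρ := by
  haveI := isFiniteOnCompacts_of hρ
  have hc2 : HasCompactSupport (fun x : ℝ => w (x - c)) :=
    hcs.comp_homeomorph (Homeomorph.subRight c)
  have hc3 : HasCompactSupport (fun x : ℝ => q x * w (x - c)) :=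
    HasCompactSupport.mul_left (f := q) hc2
  exact (hq.mul (hw.comp (continuous_sub_right c))).integrable_of_hasCompactSupport hc3

lemma integC' {q w : ℝ → ℝ} (hρ : FiniteOnBounded ρ) (hq : Continuous q) (hw : Continuous w)
    (hcs : HasCompactSupport w) (c : ℝ) :
    Integrable (fun x => w (x - c) * q x) ρ :=
  (integC hρ hq hw hcs c).congr (ae_of_all _ fun x => mul_comm _ _)

lemma integ0 {q w : ℝ → ℝ} (hρ : FiniteOnBounded ρ) (hq : Continuous q) (hw : Continuous w)
    (hcs : HasCompactSupport w) :
    Integrable (fun x => q x * w x) ρ := by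
  haveI := isFiniteOnCompacts_of hρ
  have hc3 : HasCompactSupport (fun x : ℝ => q x * w x) :=
    HasCompactSupport.mul_left (f := q) hcs
  exact (hq.mul hw).integrable_of_hasCompactSupport hc3

lemma integ0' {q w : ℝ → ℝ} (hρ : FiniteOnBounded ρ) (hq : Continuous q) (hw : Continuous w)
    (hcs : HasCompactSupport w) :
    Integrable (fun x => w x * q x) ρ :=
  (integ0 hρ hq hw hcs).congr (ae_of_all _ fun x => mul_comm _ _)

lemma rampc : Continuous (ramp 8⁻¹) := ramp_continuous 8⁻¹

lemma diff_caseA (hfρ : FiniteOnBounded ρ) (hp : 8 ≤ p)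
    {w : ℝ → ℝ} (hw : Continuous w) (hcs : HasCompactSupport w)
    (hvan : ∀ x ∉ Ioc (-p) p, w x = 0) :
    ∫ x, w x ∂(per ρ p 8⁻¹) - ∫ x, w x ∂ρ
      = ((∫ x, w x * (1 - ramp 8⁻¹ x) ∂(lmTranslate ρ p))
          - ∫ x, w x * (1 - ramp 8⁻¹ x) ∂ρ)
        + ((∫ x, w (x - p) * (1 - ramp 8⁻¹ x) ∂(lmTranslate ρ p))
          - ∫ x, w (x - p) * (1 - ramp 8⁻¹ x) ∂ρ) := by
  haveI := isFiniteOnCompacts_of hfρ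
  have hp0 : (0 : ℝ) < p := by linarith
  have h8 : (0 : ℝ) < 8⁻¹ := by norm_num
  have h8p : (8⁻¹ : ℝ) ≤ p := by linarith
  have hE := E1 hfρ hp0 h8 h8p hw hcs hvan
  have hsubpp : ∀ x : ℝ, x - p - p = x - 2 * p := fun x => by ring
  -- continuity facts
  have hcmid : Continuous fun x : ℝ => (ramp 8⁻¹ (x + p) - ramp 8⁻¹ x) * w x := by
    exact ((rampc.comp (continuous_add_right p)).sub rampc).mul hw
  have hctop : Continuous fun x : ℝ => (1 - ramp 8⁻¹ (x + p)) * w x := by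
    exact (continuous_const.sub (rampc.comp (continuous_add_right p))).mul hw
  have hctop2 : Continuous fun x : ℝ => (1 - ramp 8⁻¹ (x - p + p)) * w (x - p) := by
    exact (continuous_const.sub
      (rampc.comp ((continuous_sub_right p).add continuous_const))).mul
      (hw.comp (continuous_sub_right p))
  have hcv1 : Continuous fun x : ℝ => w x * (1 - ramp 8⁻¹ x) := by
    exact hw.mul (continuous_const.sub rampc)
  have hcv2 : Continuous fun x : ℝ => w (x - p) * (1 - ramp 8⁻¹ x) := by
    exact (hw.comp (continuous_sub_right p)).mul (continuous_const.sub rampc)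
  -- conversions to ρ-integrals
  have e2 : ∫ x, (ramp 8⁻¹ (x + p) - ramp 8⁻¹ x) * w x ∂(lmTranslate ρ p)
      = ∫ x, (ramp 8⁻¹ x - ramp 8⁻¹ (x - p)) * w (x - p) ∂ρ := by
    rw [integral_translate ρ p hcmid]
    congr 1
    funext x
    rw [sub_add_cancel]
  have e3 : ∫ x, (1 - ramp 8⁻¹ (x + p)) * w x ∂(lmTranslate (lmTranslate ρ p) p)
      = ∫ x, (1 - ramp 8⁻¹ (x - p)) * w (x - 2 * p) ∂ρ := by
    rw [integral_translate (lmTranslate ρ p) p hctop, integral_translate ρ p hctop2]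
    congr 1
    funext x
    rw [sub_add_cancel, hsubpp]
  have f1 : ∫ x, w x * (1 - ramp 8⁻¹ x) ∂(lmTranslate ρ p)
      = ∫ x, w (x - p) * (1 - ramp 8⁻¹ (x - p)) ∂ρ := integral_translate ρ p hcv1
  have f2 : ∫ x, w (x - p) * (1 - ramp 8⁻¹ x) ∂(lmTranslate ρ p)
      = ∫ x, w (x - 2 * p) * (1 - ramp 8⁻¹ (x - p)) ∂ρ := by
    rw [integral_translate ρ p hcv2]
    congr 1
    funext x
    rw [hsubpp]
  rw [hE, e2, e3, f1, f2]
  -- now a linear identity among ρ-integrals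
  have iA : Integrable (fun x => ramp 8⁻¹ x * w x) ρ := integ0 hfρ rampc hw hcs
  have iB : Integrable (fun x => (ramp 8⁻¹ x - ramp 8⁻¹ (x - p)) * w (x - p)) ρ :=
    integC hfρ (rampc.sub (rampc.comp (continuous_sub_right p))) hw hcs p
  have iC : Integrable (fun x => (1 - ramp 8⁻¹ (x - p)) * w (x - 2 * p)) ρ :=
    integC hfρ (continuous_const.sub (rampc.comp (continuous_sub_right p))) hw hcs (2 * p)
  have iD : Integrable w ρ := hw.integrable_of_hasCompactSupport hcs
  have iE : Integrable (fun x => w (x - p) * (1 - ramp 8⁻¹ (x - p))) ρ :=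
    integC' hfρ (continuous_const.sub (rampc.comp (continuous_sub_right p))) hw hcs p
  have iF : Integrable (fun x => w x * (1 - ramp 8⁻¹ x)) ρ :=
    integ0' hfρ (continuous_const.sub rampc) hw hcs
  have iG : Integrable (fun x => w (x - 2 * p) * (1 - ramp 8⁻¹ (x - p))) ρ :=
    integC' hfρ (continuous_const.sub (rampc.comp (continuous_sub_right p))) hw hcs (2 * p)
  have iH : Integrable (fun x => w (x - p) * (1 - ramp 8⁻¹ x)) ρ :=
    integC' hfρ (continuous_const.sub rampc) hw hcs p
  have master : ∫ x, (ramp 8⁻¹ x * w x + ((ramp 8⁻¹ x - ramp 8⁻¹ (x - p)) * w (x - p)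
        + ((1 - ramp 8⁻¹ (x - p)) * w (x - 2 * p)
        + (w x * (1 - ramp 8⁻¹ x) + w (x - p) * (1 - ramp 8⁻¹ x))))) ∂ρ
      = ∫ x, (w (x - p) * (1 - ramp 8⁻¹ (x - p))
        + (w (x - 2 * p) * (1 - ramp 8⁻¹ (x - p)) + w x)) ∂ρ := by
    congr 1
    funext x
    ring
  have iFH : Integrable (fun x => w x * (1 - ramp 8⁻¹ x) + w (x - p) * (1 - ramp 8⁻¹ x)) ρ :=
    iF.add iH
  have iCFH : Integrable (fun x => (1 - ramp 8⁻¹ (x - p)) * w (x - 2 * p)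
      + (w x * (1 - ramp 8⁻¹ x) + w (x - p) * (1 - ramp 8⁻¹ x))) ρ := iC.add iFH
  have iBCFH : Integrable (fun x => (ramp 8⁻¹ x - ramp 8⁻¹ (x - p)) * w (x - p)
      + ((1 - ramp 8⁻¹ (x - p)) * w (x - 2 * p)
      + (w x * (1 - ramp 8⁻¹ x) + w (x - p) * (1 - ramp 8⁻¹ x)))) ρ := iB.add iCFH
  have iGD : Integrable (fun x => w (x - 2 * p) * (1 - ramp 8⁻¹ (x - p)) + w x) ρ := iG.add iD
  rw [integral_add iA iBCFH, integral_add iB iCFH, integral_add iC iFH, integral_add iF iH,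
    integral_add iE iGD, integral_add iG iD] at master
  linarith

lemma diff_caseB (hfρ : FiniteOnBounded ρ) (hp : 8 ≤ p)
    {w : ℝ → ℝ} (hw : Continuous w) (hcs : HasCompactSupport w)
    (hsupp : ∀ x : ℝ, w x ≠ 0 → 8⁻¹ < x ∧ x ≤ 2 * p) :
    ∫ x, w x ∂(per ρ p 8⁻¹) - ∫ x, w x ∂ρ
      = ∫ x, w (x + p) * ramp 8⁻¹ x ∂ρ
        - ∫ x, w (x + p) * ramp 8⁻¹ x ∂(lmTranslate ρ p) := by
  haveI := isFiniteOnCompacts_of hfρ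
  have hp0 : (0 : ℝ) < p := by linarith
  have h8 : (0 : ℝ) < 8⁻¹ := by norm_num
  have h8p : (8⁻¹ : ℝ) ≤ p := by linarith
  have hwt : Continuous fun x : ℝ => w (x + p) := hw.comp (continuous_add_right p)
  have hcst : HasCompactSupport fun x : ℝ => w (x + p) :=
    hcs.comp_homeomorph (Homeomorph.addRight p)
  have hvan : ∀ x ∉ Ioc (-p) p, w (x + p) = 0 := by
    intro x hx
    by_contra h
    obtain ⟨h1, h2⟩ := hsupp _ h
    exact hx ⟨by linarith [h1], by linarith [h2]⟩
  have hshift : ∫ x, w x ∂(per ρ p 8⁻¹) = ∫ x, w (x + p) ∂(per ρ p 8⁻¹) :=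
    (per_integral_shift ρ p 8⁻¹ w hw).symm
  have hE := E1 hfρ hp0 h8 h8p hwt hcst hvan
  have hsubpp : ∀ x : ℝ, x - p - p = x - 2 * p := fun x => by ring
  have hsub2 : ∀ x : ℝ, x - 2 * p + p = x - p := fun x => by ring
  -- conversions
  have hcmid : Continuous fun x : ℝ => (ramp 8⁻¹ (x + p) - ramp 8⁻¹ x) * w (x + p) := by
    exact ((rampc.comp (continuous_add_right p)).sub rampc).mul hwt
  have hctop : Continuous fun x : ℝ => (1 - ramp 8⁻¹ (x + p)) * w (x + p) := by
    exact (continuous_const.sub (rampc.comp (continuous_add_right p))).mul hwt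
  have hctop2 : Continuous fun x : ℝ => (1 - ramp 8⁻¹ (x - p + p)) * w (x - p + p) := by
    exact (continuous_const.sub
      (rampc.comp ((continuous_sub_right p).add continuous_const))).mul
      (hw.comp ((continuous_sub_right p).add continuous_const))
  have hcv3 : Continuous fun x : ℝ => w (x + p) * ramp 8⁻¹ x := hwt.mul rampc
  have e2 : ∫ x, (ramp 8⁻¹ (x + p) - ramp 8⁻¹ x) * w (x + p) ∂(lmTranslate ρ p)
      = ∫ x, (ramp 8⁻¹ x - ramp 8⁻¹ (x - p)) * w x ∂ρ := by
    rw [integral_translate ρ p hcmid]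
    congr 1
    funext x
    rw [sub_add_cancel]
  have e3 : ∫ x, (1 - ramp 8⁻¹ (x + p)) * w (x + p) ∂(lmTranslate (lmTranslate ρ p) p)
      = ∫ x, (1 - ramp 8⁻¹ (x - p)) * w (x - p) ∂ρ := by
    rw [integral_translate (lmTranslate ρ p) p hctop, integral_translate ρ p hctop2]
    congr 1
    funext x
    rw [sub_add_cancel]
  have f3 : ∫ x, w (x + p) * ramp 8⁻¹ x ∂(lmTranslate ρ p)
      = ∫ x, w x * ramp 8⁻¹ (x - p) ∂ρ := by
    rw [integral_translate ρ p hcv3]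
    congr 1
    funext x
    rw [sub_add_cancel]
  rw [hshift, hE, e2, e3, f3]
  -- zero facts
  have hz1 : ∀ x : ℝ, w x * (1 - ramp 8⁻¹ x) = 0 := by
    intro x
    by_cases h : w x = 0
    · rw [h, zero_mul]
    · rw [ramp_eq_one h8 (hsupp x h).1.le]
      ring
  have hz2 : ∀ x : ℝ, w (x - p) * (1 - ramp 8⁻¹ (x - p)) = 0 := fun x => hz1 (x - p)
  -- integrabilities
  have iA : Integrable (fun x => ramp 8⁻¹ x * w (x + p)) ρ := by
    have := integC hfρ rampc hw hcs (-p)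
    exact this.congr (ae_of_all _ fun x => by simp [sub_neg_eq_add])
  have iB : Integrable (fun x => (ramp 8⁻¹ x - ramp 8⁻¹ (x - p)) * w x) ρ :=
    integ0 hfρ (rampc.sub (rampc.comp (continuous_sub_right p))) hw hcs
  have iC : Integrable (fun x => (1 - ramp 8⁻¹ (x - p)) * w (x - p)) ρ :=
    integC hfρ (continuous_const.sub (rampc.comp (continuous_sub_right p))) hw hcs p
  have iD : Integrable w ρ := hw.integrable_of_hasCompactSupport hcs
  have iE : Integrable (fun x => w x * ramp 8⁻¹ (x - p)) ρ :=
    integ0' hfρ (rampc.comp (continuous_sub_right p)) hw hcs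
  have iF : Integrable (fun x => w (x + p) * ramp 8⁻¹ x) ρ := by
    have := integC' hfρ rampc hw hcs (-p)
    exact this.congr (ae_of_all _ fun x => by simp [sub_neg_eq_add])
  have master : ∫ x, (ramp 8⁻¹ x * w (x + p) + ((ramp 8⁻¹ x - ramp 8⁻¹ (x - p)) * w x
        + ((1 - ramp 8⁻¹ (x - p)) * w (x - p) + w x * ramp 8⁻¹ (x - p)))) ∂ρ
      = ∫ x, (w (x + p) * ramp 8⁻¹ x + w x) ∂ρ := by
    congr 1
    funext x
    linear_combination hz2 x - hz1 x
  have iCE : Integrable (fun x => (1 - ramp 8⁻¹ (x - p)) * w (x - p) + w x * ramp 8⁻¹ (x - p)) ρ :=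
    iC.add iE
  have iBCE : Integrable (fun x => (ramp 8⁻¹ x - ramp 8⁻¹ (x - p)) * w x
      + ((1 - ramp 8⁻¹ (x - p)) * w (x - p) + w x * ramp 8⁻¹ (x - p))) ρ := iB.add iCE
  rw [integral_add iA iBCE, integral_add iB iCE, integral_add iC iE,
    integral_add iF iD] at master
  linarith

end PG6

namespace PG7
open PG PG2 PG3 PG4 PG5 PG6

lemma main_est (μp μm : Measure ℝ) (hfp : FiniteOnBounded μp) (hfm : FiniteOnBounded μm)
    {p : ℝ} (hp : 8 ≤ p) :
    wNorm μp μm (per μp p 8⁻¹) (per μm p 8⁻¹) (Icc (-p) (2 * p))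
      ≤ 34 * wNorm μp μm (lmTranslate μp p) (lmTranslate μm p) (Icc (-p) p) := by
  have hp0 : (0 : ℝ) < p := by linarith
  set W := wNorm μp μm (lmTranslate μp p) (lmTranslate μm p) (Icc (-p) p) with hW
  have hW0 : 0 ≤ W := wNorm_nonneg _ _ _ _ _
  have hBdd := wNorm_bddAbove hfp hfm (finiteOnBounded_lmTranslate hfp p)
    (finiteOnBounded_lmTranslate hfm p) (-p) p
  unfold wNorm
  apply Real.sSup_le _ (by linarith)
  rintro r ⟨w, hl, hcs, hsub, hd, rfl⟩
  have hwb := sup_bound hl hcs hd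
  have hzero_out : ∀ x ∉ tsupport w, w x = 0 := fun x hx => image_eq_zero_of_notMem_tsupport hx
  by_cases hne : (tsupport w).Nonempty
  swap
  · rw [not_nonempty_iff_eq_empty] at hne
    have hw0 : w = fun _ => (0 : ℝ) :=
      funext fun x => image_eq_zero_of_notMem_tsupport (by rw [hne]; exact notMem_empty x)
    rw [hw0]
    simp only [lmInt, integral_zero, sub_zero, sub_self, abs_zero]
    linarith
  set c := sInf (tsupport w) with hc
  have hcK : c ∈ tsupport w := hcs.sInf_mem hne
  have hKb := hcs.isBounded
  have hK2 : ∀ y ∈ tsupport w, c ≤ y ∧ y ≤ c + 2 := by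
    intro y hy
    refine ⟨csInf_le hKb.bddBelow hy, ?_⟩
    have hdist := (Metric.dist_le_diam_of_mem hKb hy hcK).trans hd
    rw [Real.dist_eq] at hdist
    linarith [(abs_le.1 hdist).2]
  have hrampabs : ∀ x : ℝ, |1 - ramp 8⁻¹ x| ≤ 1 := fun x => by
    have h1 := ramp_nonneg 8⁻¹ x
    have h2 := ramp_le_one 8⁻¹ x
    rw [abs_le]; constructor <;> linarith
  have hrampabs' : ∀ x : ℝ, |ramp 8⁻¹ x| ≤ 1 := fun x => by
    have h1 := ramp_nonneg 8⁻¹ x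
    have h2 := ramp_le_one 8⁻¹ x
    rw [abs_le]; constructor <;> linarith
  by_cases hcase : c ≤ 8⁻¹
  · -- Case A : support starts left of the ramp
    have hvan : ∀ x ∉ Ioc (-p) p, w x = 0 := by
      intro x hx
      simp only [mem_Ioc, not_and_or, not_lt, not_le] at hx
      rcases hx with hx | hx
      · -- x ≤ -p
        apply zero_on_closure hl.continuous (s := Iio (-p))
        · intro y hy
          apply hzero_out
          intro hmem
          exact absurd ((hsub hmem).1) (not_le.2 hy)
        · rw [closure_Iio]
          exact hx
      · -- p < x
        apply hzero_out
        intro hmem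
        have h2 := (hK2 x hmem).2
        have h18 : (8 : ℝ)⁻¹ ≤ 1 := by norm_num
        linarith
    have hA1 := diff_caseA hfp hp hl.continuous hcs hvan
    have hA2 := diff_caseA hfm hp hl.continuous hcs hvan
    set v₁ : ℝ → ℝ := fun x => w x * (1 - ramp 8⁻¹ x) with hv₁
    set v₂ : ℝ → ℝ := fun x => w (x - p) * (1 - ramp 8⁻¹ x) with hv₂
    have hv₁lip : LipschitzWith 17 v₁ := lip_mul hl hwb ramp_co_lip hrampabs
    have hv₁sup : Function.support v₁ ⊆ tsupport w := by
      intro x hx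
      rw [Function.mem_support] at hx
      apply subset_tsupport
      rw [Function.mem_support]
      intro h
      exact hx (by rw [hv₁]; simp [h])
    have hv₁ts : tsupport v₁ ⊆ tsupport w := closure_minimal hv₁sup (isClosed_tsupport w)
    have hv₁cs : HasCompactSupport v₁ :=
      IsCompact.of_isClosed_subset hcs isClosed_closure hv₁ts
    have hv₁sub : tsupport v₁ ⊆ Icc (-p) p := by
      intro y hy
      have h1 := (hsub (hv₁ts hy)).1
      have h2 := (hK2 y (hv₁ts hy)).2
      have h18 : (8 : ℝ)⁻¹ ≤ 1 := by norm_num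
      exact ⟨h1, by linarith⟩
    have hv₁d : Metric.diam (tsupport v₁) ≤ 2 := (Metric.diam_mono hv₁ts hKb).trans hd
    have hwlip2 : LipschitzWith 1 (fun x => w (x - p)) := by
      apply LipschitzWith.of_dist_le_mul
      intro x y
      have h := hl.dist_le_mul (x - p) (y - p)
      simp only [Real.dist_eq] at h ⊢
      rw [show x - p - (y - p) = x - y by ring] at h
      exact h
    have hv₂lip : LipschitzWith 17 v₂ :=
      lip_mul hwlip2 (fun x => hwb (x - p)) ramp_co_lip hrampabs
    have hv₂D : Function.support v₂ ⊆ Icc 0 8⁻¹ := by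
      intro x hx
      rw [Function.mem_support, hv₂] at hx
      simp only at hx
      have hw' : w (x - p) ≠ 0 := fun h => hx (by rw [h]; ring)
      have hr' : (1 : ℝ) - ramp 8⁻¹ x ≠ 0 := fun h => hx (by rw [h]; ring)
      constructor
      · have := (hsub (subset_tsupport _ hw')).1
        linarith
      · by_contra hgt
        push_neg at hgt
        exact hr' (by rw [ramp_eq_one (by norm_num) hgt.le]; ring)
    have hv₂ts : tsupport v₂ ⊆ Icc 0 8⁻¹ := closure_minimal hv₂D isClosed_Icc
    have hv₂cs : HasCompactSupport v₂ :=
      IsCompact.of_isClosed_subset isCompact_Icc isClosed_closure hv₂ts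
    have hv₂sub : tsupport v₂ ⊆ Icc (-p) p := by
      intro y hy
      have h1 := (hv₂ts hy).1
      have h2 := (hv₂ts hy).2
      have h18 : (8 : ℝ)⁻¹ ≤ 1 := by norm_num
      exact ⟨by linarith, by linarith⟩
    have hv₂d : Metric.diam (tsupport v₂) ≤ 2 := by
      have h1 := Metric.diam_mono hv₂ts (Metric.isBounded_Icc 0 8⁻¹)
      rw [Real.diam_Icc (by norm_num : (0 : ℝ) ≤ 8⁻¹)] at h1
      have : (8 : ℝ)⁻¹ - 0 ≤ 2 := by norm_num
      linarith
    have hT1 := test_estimate hBdd hv₁lip hv₁cs hv₁sub hv₁d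
    have hT2 := test_estimate hBdd hv₂lip hv₂cs hv₂sub hv₂d
    have key : lmInt μp μm w - lmInt (per μp p 8⁻¹) (per μm p 8⁻¹) w
        = (lmInt μp μm v₁ - lmInt (lmTranslate μp p) (lmTranslate μm p) v₁)
          + (lmInt μp μm v₂ - lmInt (lmTranslate μp p) (lmTranslate μm p) v₂) := by
      simp only [lmInt]
      linarith [hA1, hA2]
    rw [key]
    calc |(lmInt μp μm v₁ - lmInt (lmTranslate μp p) (lmTranslate μm p) v₁)
          + (lmInt μp μm v₂ - lmInt (lmTranslate μp p) (lmTranslate μm p) v₂)|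
        ≤ |lmInt μp μm v₁ - lmInt (lmTranslate μp p) (lmTranslate μm p) v₁|
          + |lmInt μp μm v₂ - lmInt (lmTranslate μp p) (lmTranslate μm p) v₂| := abs_add_le _ _
      _ ≤ 17 * W + 17 * W := add_le_add hT1 hT2
      _ = 34 * W := by ring
  · -- Case B : support entirely to the right of the ramp
    push_neg at hcase
    have hsupp' : ∀ x : ℝ, w x ≠ 0 → 8⁻¹ < x ∧ x ≤ 2 * p := by
      intro x hx
      have hm := subset_tsupport w hx
      exact ⟨lt_of_lt_of_le hcase (hK2 x hm).1, (hsub hm).2⟩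
    have hB1 := diff_caseB hfp hp hl.continuous hcs hsupp'
    have hB2 := diff_caseB hfm hp hl.continuous hcs hsupp'
    set v₃ : ℝ → ℝ := fun x => w (x + p) * ramp 8⁻¹ x with hv₃
    have hwlip3 : LipschitzWith 1 (fun x => w (x + p)) := lip_shift hl p
    have hv₃lip : LipschitzWith 17 v₃ :=
      lip_mul hwlip3 (fun x => hwb (x + p)) ramp_lip hrampabs'
    have hv₃D : Function.support v₃ ⊆ Icc (c - p) (c - p + 2) ∩ Icc (-p) p := by
      intro x hx
      rw [Function.mem_support, hv₃] at hx
      simp only at hx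
      have hw' : w (x + p) ≠ 0 := fun h => hx (by rw [h]; ring)
      have hr' : ramp 8⁻¹ x ≠ 0 := fun h => hx (by rw [h]; ring)
      have hm := hK2 _ (subset_tsupport _ hw')
      have hx0 : 0 < x := by
        by_contra hle
        push_neg at hle
        exact hr' (ramp_eq_zero (by norm_num) hle)
      have hxp : x + p ≤ 2 * p := (hsub (subset_tsupport _ hw')).2
      exact ⟨⟨by linarith [hm.1], by linarith [hm.2]⟩, ⟨by linarith, by linarith⟩⟩
    have hv₃ts : tsupport v₃ ⊆ Icc (c - p) (c - p + 2) ∩ Icc (-p) p :=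
      closure_minimal hv₃D (isClosed_Icc.inter isClosed_Icc)
    have hv₃cs : HasCompactSupport v₃ :=
      IsCompact.of_isClosed_subset (isCompact_Icc.inter_right isClosed_Icc)
        isClosed_closure hv₃ts
    have hv₃sub : tsupport v₃ ⊆ Icc (-p) p := fun y hy => (hv₃ts hy).2
    have hv₃d : Metric.diam (tsupport v₃) ≤ 2 := by
      have h1 := Metric.diam_mono (hv₃ts.trans inter_subset_left)
        (Metric.isBounded_Icc (c - p) (c - p + 2))
      rw [Real.diam_Icc (by linarith : c - p ≤ c - p + 2)] at h1
      linarith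
    have hT3 := test_estimate hBdd hv₃lip hv₃cs hv₃sub hv₃d
    have key : lmInt μp μm w - lmInt (per μp p 8⁻¹) (per μm p 8⁻¹) w
        = -(lmInt μp μm v₃ - lmInt (lmTranslate μp p) (lmTranslate μm p) v₃) := by
      simp only [lmInt]
      linarith [hB1, hB2]
    rw [key, abs_neg]
    linarith
end PG7



open PG PG2 PG3 PG4 PG5 PG6 PG7 in
/-- Periodic approximation of Gordon potentials. -/
theorem periodic_approximation_of_gordon_potentials
    (μp μm : MeasureTheory.Measure ℝ)
    (hfinp : FiniteOnBounded μp) (hfinm : FiniteOnBounded μm)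
    (hunif : unifE (μp + μm) < ⊤)
    (C : ℝ) (hC : 0 < C)
    (pm : ℕ → ℝ) (hpm_pos : ∀ m : ℕ, 0 < pm m) (hpm : Tendsto pm atTop atTop)
    (hGordon : Tendsto (fun m : ℕ => Real.exp (C * pm m) *
        wNorm μp μm (lmTranslate μp (pm m)) (lmTranslate μm (pm m))
          (Set.Icc (-(pm m)) (pm m)))
      atTop (nhds 0)) :
    ∃ (νp νm : ℕ → MeasureTheory.Measure ℝ) (α : ℕ → ℝ),
      (∀ m : ℕ, FiniteOnBounded (νp m) ∧ FiniteOnBounded (νm m)) ∧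
      (∀ m : ℕ, 0 < α m ∧ α m ≤ pm m / 2) ∧
      (∃ ε : ℝ, 0 < ε ∧ ∀ m : ℕ, ε ≤ α m) ∧
      (∀ m : ℕ, ∀ B : Set ℝ, Bornology.IsBounded B →
        lmVal (νp m) (νm m) ((fun x => x - pm m) ⁻¹' B) = lmVal (νp m) (νm m) B) ∧
      Tendsto (fun m : ℕ => Real.exp (C * pm m) *
          wNorm μp μm (νp m) (νm m) (Set.Icc (-(pm m)) (2 * pm m))) atTop (nhds 0) ∧
      (∀ m : ℕ, ∀ B : Set ℝ, Bornology.IsBounded B → B ⊆ Set.Icc (α m) (pm m - α m) →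
        lmVal (νp m) (νm m) B = lmVal μp μm B) ∧
      (∀ m : ℕ, unifE (νp m + νm m) ≤
        ENNReal.ofReal ((1 + 1 / (2 * α m)) * unifNorm (μp + μm))) := by
  classical
  set σ : MeasureTheory.Measure ℝ := μp + μm with hσ
  set β : ℕ → ℝ := fun m => min 8⁻¹ (pm m / 8) with hβdef
  have hβ0 : ∀ m, 0 < β m := fun m => lt_min (by norm_num) (by linarith [hpm_pos m])
  have hβp : ∀ m, β m ≤ pm m := fun m =>
    (min_le_right _ _).trans (by linarith [hpm_pos m])
  have hper_unif : ∀ m, unifE (per μp (pm m) (β m) + per μm (pm m) (β m))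
      ≤ ENNReal.ofReal (1 + 1 / (2 * β m)) * unifE σ := by
    intro m
    rw [← per_add]
    exact per_unifE_le σ (hpm_pos m)
  have hofReal_fin : ∀ m, ENNReal.ofReal (1 + 1 / (2 * β m)) * unifE σ < ⊤ :=
    fun m => ENNReal.mul_lt_top ENNReal.ofReal_lt_top hunif
  refine ⟨fun m => per μp (pm m) (β m), fun m => per μm (pm m) (β m), β,
    ?_, ?_, ?_, ?_, ?_, ?_, ?_⟩
  · -- finiteness
    intro m
    constructor
    · apply fin_of_unifE
      refine lt_of_le_of_lt ?_ (lt_of_le_of_lt (hper_unif m) (hofReal_fin m))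
      exact unifE_mono (Measure.le_add_right le_rfl)
    · apply fin_of_unifE
      refine lt_of_le_of_lt ?_ (lt_of_le_of_lt (hper_unif m) (hofReal_fin m))
      exact unifE_mono (Measure.le_add_left le_rfl)
  · -- 0 < α ≤ p/2
    intro m
    refine ⟨hβ0 m, ?_⟩
    have := hpm_pos m
    calc β m ≤ pm m / 8 := min_le_right _ _
      _ ≤ pm m / 2 := by linarith
  · -- uniform lower bound
    obtain ⟨N, hN⟩ := Filter.eventually_atTop.1 (hpm.eventually_ge_atTop 1)
    have hne : (Finset.range (N + 1)).Nonempty := ⟨0, Finset.mem_range.2 (Nat.succ_pos N)⟩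
    set F := (Finset.range (N + 1)).inf' hne pm with hF
    have hF0 : 0 < F := (Finset.lt_inf'_iff hne).2 fun i _ => hpm_pos i
    refine ⟨min 8⁻¹ (F / 8), lt_min (by norm_num) (by linarith), ?_⟩
    intro m
    by_cases hm : m ≤ N
    · have h1 : F ≤ pm m := Finset.inf'_le _ (Finset.mem_range.2 (by omega))
      exact min_le_min le_rfl (by linarith)
    · push_neg at hm
      have h1 : 1 ≤ pm m := hN m (by omega)
      exact le_min (min_le_left _ _) ((min_le_left _ _).trans (by linarith))
  · -- periodicity
    intro m B _
    rw [lmVal, lmVal, per_preimage, per_preimage]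
  · -- convergence
    have hp8 : ∀ᶠ m in atTop, 8 ≤ pm m := hpm.eventually_ge_atTop 8
    apply squeeze_zero' (g := fun m => 34 * (Real.exp (C * pm m)
      * wNorm μp μm (lmTranslate μp (pm m)) (lmTranslate μm (pm m))
        (Set.Icc (-(pm m)) (pm m))))
    · exact Filter.Eventually.of_forall fun m =>
        mul_nonneg (Real.exp_pos _).le (wNorm_nonneg _ _ _ _ _)
    · filter_upwards [hp8] with m hm
      have hβm : β m = 8⁻¹ := min_eq_left (by rw [le_div_iff₀ (by linarith)]; norm_num; linarith)
      rw [hβm]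
      calc Real.exp (C * pm m) * wNorm μp μm (per μp (pm m) 8⁻¹) (per μm (pm m) 8⁻¹)
            (Set.Icc (-(pm m)) (2 * pm m))
          ≤ Real.exp (C * pm m) * (34 * wNorm μp μm (lmTranslate μp (pm m))
            (lmTranslate μm (pm m)) (Set.Icc (-(pm m)) (pm m))) :=
            mul_le_mul_of_nonneg_left (main_est μp μm hfinp hfinm hm) (Real.exp_pos _).le
        _ = 34 * (Real.exp (C * pm m) * wNorm μp μm (lmTranslate μp (pm m))
            (lmTranslate μm (pm m)) (Set.Icc (-(pm m)) (pm m))) := by ring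
    · have := hGordon.const_mul (34 : ℝ)
      simpa using this
  · -- agreement in the middle
    intro m B _ hB
    have hBsub : B ⊆ Set.Icc (β m) (pm m) := by
      intro x hx
      obtain ⟨h1, h2⟩ := hB hx
      exact ⟨h1, by linarith [hβ0 m]⟩
    rw [lmVal, lmVal, per_agree μp (hβ0 m) (hβp m) hBsub, per_agree μm (hβ0 m) (hβp m) hBsub]
  · -- uniform norm bound
    intro m
    refine (hper_unif m).trans ?_
    have h1 : ENNReal.ofReal ((1 + 1 / (2 * β m)) * unifNorm σ)
        = ENNReal.ofReal (1 + 1 / (2 * β m)) * ENNReal.ofReal (unifNorm σ) := by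
      apply ENNReal.ofReal_mul
      have := hβ0 m
      positivity
    rw [h1, unifNorm, ENNReal.ofReal_toReal hunif.ne]
end
end

section
/- Optimized growth bound for solutions: Let (a, μ) ∈ AM(ℝ) (with respect to some nonzero nonnegative periodic Borel measure ρ with ‖ρ‖_unif < ∞), let (u, v) be a solution of H_{a,μ} u = 0, and set ω := ( ‖μ‖_unif / ‖1/a‖_∞ )^{1/2}. Then for all t ∈ ℝ: ( ω²·u(t)² + v(t)² )^{1/2} ≤ ( ω²·u(0)² + v(0)² )^{1/2} · e^{ ω·‖1/a‖_∞·(|t| + 1/2) }. -/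
open MeasureTheory Set Filter

noncomputable section

section AuxOGB
open intervalIntegral

lemma exp_quad {z : ℝ} (h : 0 ≤ z) : 1 + z + z^2/2 ≤ Real.exp z := by
  have := Real.sum_le_exp_of_nonneg h 3
  simp [Finset.sum_range_succ] at this
  nlinarith [this]

lemma shear_key {c : ℝ} (h : 0 ≤ c) :
    c^2 * (Real.exp c - 1) + c^2 ≤ (Real.exp c - 1) * (Real.exp c - 1) := by
  have h1 : 1 + c/2 + (c/2)^2/2 ≤ Real.exp (c/2) := exp_quad (by linarith)
  have h2 : Real.exp c = Real.exp (c/2) * Real.exp (c/2) := by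
    rw [← Real.exp_add]; ring_nf
  have h1sq : (1 + c/2 + (c/2)^2/2) * (1 + c/2 + (c/2)^2/2)
      ≤ Real.exp (c/2) * Real.exp (c/2) :=
    mul_le_mul h1 h1 (by positivity) (Real.exp_pos _).le
  have hγ : c + c^2/2 + c^3/8 ≤ Real.exp c - 1 := by nlinarith [h1sq, h2]
  have key0 : (c + c^2/2 + c^3/8)^2 - c^2*(c + c^2/2 + c^3/8) - c^2 = c^6/64 := by ring
  have h2γ : c^2 ≤ 2*(c + c^2/2 + c^3/8) := by nlinarith [pow_nonneg h 3]
  have hmono : 0 ≤ ((Real.exp c - 1) - (c + c^2/2 + c^3/8)) *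
      ((Real.exp c - 1) + (c + c^2/2 + c^3/8) - c^2) := by
    apply mul_nonneg (by linarith) (by linarith)
  nlinarith [hmono, key0, pow_nonneg h 6]

lemma shear_quad (c x y : ℝ) : (x + c*y)^2 + y^2 ≤ Real.exp |c| * (x^2 + y^2) := by
  have he0 : 0 ≤ |c| := abs_nonneg c
  have hkey := shear_key he0
  have hC0 : 0 ≤ Real.exp |c| - 1 := by nlinarith [exp_quad he0, sq_nonneg |c|]
  have hcxy : 2*(c*x*y) ≤ 2*(|c| * |x| * |y|) := by
    have h1 : c*x*y ≤ |c*x*y| := le_abs_self _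
    have h2 : |c*x*y| = |c| * |x| * |y| := by rw [abs_mul, abs_mul]
    linarith [h1, h2.le, h2.ge]
  have hc2 : c^2 = |c|^2 := (sq_abs c).symm
  have key2 : 2*(|c| * |x| * |y|) + |c|^2*(|y|^2) ≤ (Real.exp |c| - 1)*(|x|^2+|y|^2) := by
    have h1 : 0 ≤ ((Real.exp |c| - 1) * |x| - |c| * |y|)^2 := sq_nonneg _
    have h2 : 0 ≤ ((Real.exp |c| - 1)*(Real.exp |c| - 1) - |c|^2*(Real.exp |c| - 1)
        - |c|^2) * (|y|^2) := by
      apply mul_nonneg (by nlinarith [hkey]) (sq_nonneg _)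
    rcases eq_or_lt_of_le hC0 with hC | hC
    · have hc0 : c = 0 := by
        have := exp_quad he0
        have hC' : Real.exp |c| - 1 = 0 := hC.symm
        have : |c| ≤ 0 := by nlinarith [exp_quad he0, sq_nonneg |c|]
        exact abs_eq_zero.1 (le_antisymm this (abs_nonneg c))
      simp [hc0]
    · nlinarith [h1, h2, mul_pos hC hC, abs_nonneg x, abs_nonneg y, hC]
  have hx : x^2 = |x|^2 := (sq_abs x).symm
  have hy : y^2 = |y|^2 := (sq_abs y).symm
  nlinarith [hcxy, key2, hc2, hx.le, hy.le]

lemma sqrt_triangle2 (x1 y1 x2 y2 : ℝ) :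
    Real.sqrt ((x1+x2)^2 + (y1+y2)^2) ≤ Real.sqrt (x1^2+y1^2) + Real.sqrt (x2^2+y2^2) := by
  have cs : x1*x2 + y1*y2 ≤ Real.sqrt (x1^2+y1^2) * Real.sqrt (x2^2+y2^2) := by
    have h2 : (x1*x2+y1*y2)^2 ≤ (x1^2+y1^2)*(x2^2+y2^2) := by
      nlinarith [sq_nonneg (x1*y2 - x2*y1)]
    calc x1*x2+y1*y2 ≤ |x1*x2+y1*y2| := le_abs_self _
    _ = Real.sqrt ((x1*x2+y1*y2)^2) := (Real.sqrt_sq_eq_abs _).symm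
    _ ≤ Real.sqrt ((x1^2+y1^2)*(x2^2+y2^2)) := Real.sqrt_le_sqrt h2
    _ = Real.sqrt (x1^2+y1^2) * Real.sqrt (x2^2+y2^2) := Real.sqrt_mul (by positivity) _
  have lhs_sq : (x1+x2)^2 + (y1+y2)^2 ≤ (Real.sqrt (x1^2+y1^2) + Real.sqrt (x2^2+y2^2))^2 := by
    have e1 : Real.sqrt (x1^2+y1^2)^2 = x1^2+y1^2 := Real.sq_sqrt (by positivity)
    have e2 : Real.sqrt (x2^2+y2^2)^2 = x2^2+y2^2 := Real.sq_sqrt (by positivity)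
    nlinarith [cs]
  calc Real.sqrt ((x1+x2)^2+(y1+y2)^2)
      ≤ Real.sqrt ((Real.sqrt (x1^2+y1^2) + Real.sqrt (x2^2+y2^2))^2) :=
        Real.sqrt_le_sqrt lhs_sq
    _ = Real.sqrt (x1^2+y1^2) + Real.sqrt (x2^2+y2^2) := by
        rw [Real.sqrt_sq (by positivity)]

lemma sqrt_add_sq_le (x y : ℝ) : Real.sqrt (x^2 + y^2) ≤ |x| + |y| := by
  have := sqrt_triangle2 x 0 0 y
  simpa [Real.sqrt_sq_eq_abs] using this

lemma sqrt_exp_half (z : ℝ) : Real.sqrt (Real.exp z) = Real.exp (z/2) := by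
  have h : Real.exp (z/2) * Real.exp (z/2) = Real.exp z := by rw [← Real.exp_add]; ring_nf
  rw [show Real.exp z = Real.exp (z/2) * Real.exp (z/2) from h.symm,
    Real.sqrt_mul_self (Real.exp_pos _).le]

lemma shear_sqrt (c x y : ℝ) :
    Real.sqrt ((x + c*y)^2 + y^2) ≤ Real.exp (|c|/2) * Real.sqrt (x^2+y^2) := by
  have h := shear_quad c x y
  calc Real.sqrt ((x + c*y)^2 + y^2) ≤ Real.sqrt (Real.exp |c| * (x^2+y^2)) :=
        Real.sqrt_le_sqrt h
    _ = Real.exp (|c|/2) * Real.sqrt (x^2+y^2) := by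
        rw [Real.sqrt_mul (Real.exp_pos _).le, sqrt_exp_half]

lemma shear_sqrt' (c x y : ℝ) :
    Real.sqrt (x^2 + (y + c*x)^2) ≤ Real.exp (|c|/2) * Real.sqrt (x^2+y^2) := by
  have := shear_sqrt c y x
  simpa [add_comm] using this

lemma algstep (c₁ c₂ e₁ e₂ p q S x y x' y' : ℝ)
    (hc₁ : |c₁| ≤ p) (hc₂ : |c₂| ≤ q)
    (hx' : x' = x + c₁*y + e₁) (hy' : y' = y + c₂*x + e₂)
    (he₁ : |e₁| ≤ p*q*S) (he₂ : |e₂| ≤ p*q*S) (hy : |y| ≤ S) :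
    Real.sqrt (x'^2 + y'^2) ≤ Real.exp ((p+q)/2) * Real.sqrt (x^2+y^2) + 3*(p*q*S) := by
  have hp0 : 0 ≤ p := le_trans (abs_nonneg _) hc₁
  have hq0 : 0 ≤ q := le_trans (abs_nonneg _) hc₂
  have hS0 : 0 ≤ S := le_trans (abs_nonneg _) hy
  have hx'' : x' = (x + c₁*y) + e₁ := by rw [hx']
  have hy'' : y' = (y + c₂*(x + c₁*y)) + (e₂ - c₂*c₁*y) := by rw [hy']; ring
  have tri : Real.sqrt (x'^2 + y'^2) ≤ Real.sqrt ((x + c₁*y)^2 + (y + c₂*(x + c₁*y))^2) +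
      Real.sqrt (e₁^2 + (e₂ - c₂*c₁*y)^2) := by
    rw [hx'', hy'']; exact sqrt_triangle2 _ _ _ _
  have core : Real.sqrt ((x + c₁*y)^2 + (y + c₂*(x + c₁*y))^2)
      ≤ Real.exp ((p+q)/2) * Real.sqrt (x^2+y^2) := by
    have h1 := shear_sqrt' c₂ (x + c₁*y) y
    have h2 := shear_sqrt c₁ x y
    calc Real.sqrt ((x + c₁*y)^2 + (y + c₂*(x + c₁*y))^2)
        ≤ Real.exp (|c₂|/2) * Real.sqrt ((x + c₁*y)^2 + y^2) := h1
      _ ≤ Real.exp (|c₂|/2) * (Real.exp (|c₁|/2) * Real.sqrt (x^2+y^2)) :=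
          mul_le_mul_of_nonneg_left h2 (Real.exp_pos _).le
      _ = Real.exp (|c₂|/2 + |c₁|/2) * Real.sqrt (x^2+y^2) := by
          rw [Real.exp_add]; ring
      _ ≤ Real.exp ((p+q)/2) * Real.sqrt (x^2+y^2) := by
          apply mul_le_mul_of_nonneg_right _ (Real.sqrt_nonneg _)
          apply Real.exp_le_exp.2; linarith
  have err : Real.sqrt (e₁^2 + (e₂ - c₂*c₁*y)^2) ≤ 3*(p*q*S) := by
    have h2 : |c₂*c₁*y| ≤ p*q*S := by
      rw [abs_mul, abs_mul]
      calc |c₂| * |c₁| * |y| ≤ q*p*S :=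
        mul_le_mul (mul_le_mul hc₂ hc₁ (abs_nonneg _) hq0) hy (abs_nonneg _) (by positivity)
      _ = p*q*S := by ring
    have h1 : |e₂ - c₂*c₁*y| ≤ 2*(p*q*S) := by
      have h3 := abs_add_le e₂ (-(c₂*c₁*y))
      rw [abs_neg] at h3
      have h4 : e₂ - c₂*c₁*y = e₂ + -(c₂*c₁*y) := by ring
      rw [h4]; linarith
    calc Real.sqrt (e₁^2 + (e₂ - c₂*c₁*y)^2) ≤ |e₁| + |e₂ - c₂*c₁*y| := sqrt_add_sq_le _ _
    _ ≤ 3*(p*q*S) := by linarith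
  linarith [tri, core, err]

open MeasureTheory Set intervalIntegral

lemma intOn {f : ℝ → ℝ} {ν : Measure ℝ} {s' : Set ℝ} (hm : Measurable f)
    (hfin : ν s' < ⊤) {C : ℝ} (hb : ∀ x ∈ s', |f x| ≤ C) (hms : MeasurableSet s') :
    IntegrableOn f s' ν := by
  have : IsFiniteMeasure (ν.restrict s') := by
    constructor; rwa [Measure.restrict_apply_univ]
  apply Integrable.mono' (integrable_const C) hm.aestronglyMeasurable
  exact (ae_restrict_iff' hms).2 (Filter.Eventually.of_forall
    (fun x hx => by simpa using hb x hx))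

lemma setint_abs_le {f : ℝ → ℝ} {ν : Measure ℝ} {s' : Set ℝ} (hm : Measurable f)
    (hfin : ν s' < ⊤) {C : ℝ} (hC : 0 ≤ C) (hb : ∀ x ∈ s', |f x| ≤ C)
    (hms : MeasurableSet s') :
    |∫ x in s', f x ∂ν| ≤ C * (ν s').toReal := by
  have hint : IntegrableOn f s' ν := intOn hm hfin hb hms
  have h1 : |∫ x in s', f x ∂ν| ≤ ∫ x in s', |f x| ∂ν := by
    simpa [Real.norm_eq_abs] using norm_integral_le_integral_norm (μ := ν.restrict s') f
  have h2 : ∫ x in s', |f x| ∂ν ≤ ∫ x in s', C ∂ν := by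
    apply setIntegral_mono_on hint.abs (integrableOn_const hfin.ne) hms
    exact fun x hx => hb x hx
  have h3 : ∫ x in s', C ∂ν = (ν s').toReal * C := by
    rw [setIntegral_const]; simp [smul_eq_mul, measureReal_def]
  calc |∫ x in s', f x ∂ν| ≤ ∫ x in s', C ∂ν := le_trans h1 h2
  _ = C * (ν s').toReal := by rw [h3]; ring

lemma toReal_mono_meas {ν : Measure ℝ} {s1 s2 : Set ℝ} (h : s1 ⊆ s2) (hfin : ν s2 < ⊤) :
    (ν s1).toReal ≤ (ν s2).toReal :=
  ENNReal.toReal_mono hfin.ne (measure_mono h)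

lemma onestep (a u v : ℝ → ℝ) (μp μm : Measure ℝ) (ω A S s t : ℝ)
    (hω : 0 < ω) (hst : s ≤ t)
    (ha : Measurable a) (hapos : ∀ r, 0 < a r) (haA : ∀ r, 1 / a r ≤ A)
    (hu : Measurable u) (hv : Measurable v)
    (hfp : μp (Ioc s t) < ⊤) (hfm : μm (Ioc s t) < ⊤)
    (hS : ∀ r, r ∈ Icc s t → |u r| ≤ S ∧ |v r| ≤ S)
    (hequ : ∀ r, r ∈ Icc s t → ∀ r', r' ∈ Icc s t → r ≤ r' →
      u r' = u r + ∫ x in r..r', v x / a x)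
    (heqv : ∀ r, r ∈ Icc s t → ∀ r', r' ∈ Icc s t → r ≤ r' →
      v r' - v r = (∫ x in Ioc r r', u x ∂μp) - ∫ x in Ioc r r', u x ∂μm) :
    (Real.sqrt (ω^2*(u t)^2 + (v t)^2) ≤
      Real.exp ((ω*A*(t-s) + ((μp (Ioc s t)).toReal + (μm (Ioc s t)).toReal)/ω)/2) *
        Real.sqrt (ω^2*(u s)^2 + (v s)^2) +
      3*((ω*A*(t-s)) * (((μp (Ioc s t)).toReal + (μm (Ioc s t)).toReal)/ω) * ((ω+1)*S)))
    ∧ (Real.sqrt (ω^2*(u s)^2 + (v s)^2) ≤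
      Real.exp ((ω*A*(t-s) + ((μp (Ioc s t)).toReal + (μm (Ioc s t)).toReal)/ω)/2) *
        Real.sqrt (ω^2*(u t)^2 + (v t)^2) +
      3*((ω*A*(t-s)) * (((μp (Ioc s t)).toReal + (μm (Ioc s t)).toReal)/ω) * ((ω+1)*S))) := by
  have hsmem : s ∈ Icc s t := ⟨le_refl s, hst⟩
  have htmem : t ∈ Icc s t := ⟨hst, le_refl t⟩
  have hS0 : 0 ≤ S := le_trans (abs_nonneg _) (hS s hsmem).1
  have hA0 : 0 < A := lt_of_lt_of_le (one_div_pos.2 (hapos 0)) (haA 0)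
  set p := ω*A*(t-s) with hp
  set q := ((μp (Ioc s t)).toReal + (μm (Ioc s t)).toReal)/ω with hq
  set S' := (ω+1)*S with hS'
  have hp0 : 0 ≤ p := by
    have : 0 ≤ t - s := by linarith
    positivity
  have hq0 : 0 ≤ q := by positivity
  have hSS' : S ≤ S' := by nlinarith
  have hsub : ∀ r r', r ∈ Icc s t → r' ∈ Icc s t → Ioc r r' ⊆ Icc s t := by
    intro r r' hr hr' x hx
    exact ⟨le_trans hr.1 hx.1.le, le_trans hx.2 hr'.2⟩
  have hsub2 : ∀ (r r' : ℝ), r ∈ Icc s t → r' ∈ Icc s t → Ioc r r' ⊆ Ioc s t := by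
    intro r r' hr hr' x hx
    exact ⟨lt_of_le_of_lt hr.1 hx.1, le_trans hx.2 hr'.2⟩
  -- bound |v x / a x| ≤ A * S on Icc s t
  have hva : ∀ x, x ∈ Icc s t → |v x / a x| ≤ A * S := by
    intro x hx
    rw [abs_div, abs_of_pos (hapos x), div_eq_mul_inv]
    have h1 : (a x)⁻¹ ≤ A := by simpa [one_div] using haA x
    have h2 : |v x| * (a x)⁻¹ ≤ S * A := by
      apply mul_le_mul (hS x hx).2 h1 (inv_nonneg.2 (hapos x).le) hS0
    linarith
  -- u increments
  have hub : ∀ r, r ∈ Icc s t → ∀ r', r' ∈ Icc s t → r ≤ r' →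
      |u r' - u r| ≤ A*S*(t-s) := by
    intro r hr r' hr' hrr
    have h1 := hequ r hr r' hr' hrr
    have h2 : u r' - u r = ∫ x in r..r', v x / a x := by rw [h1]; ring
    rw [h2, ← Real.norm_eq_abs]
    have h3 : ‖∫ x in r..r', v x / a x‖ ≤ (A*S) * |r' - r| := by
      apply intervalIntegral.norm_integral_le_of_norm_le_const
      intro x hx
      rw [Set.uIoc_of_le hrr] at hx
      rw [Real.norm_eq_abs]
      exact hva x (hsub r r' hr hr' hx)
    have h4 : (A*S) * |r' - r| ≤ A*S*(t-s) := by
      apply mul_le_mul_of_nonneg_left _ (by positivity)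
      rw [abs_of_nonneg (by linarith)]
      rcases hr with ⟨h5, h6⟩; rcases hr' with ⟨h7, h8⟩; linarith
    linarith
  -- integral bounds wrt μp, μm
  have hIint : ∀ (ν : Measure ℝ), ν (Ioc s t) < ⊤ → ∀ (f : ℝ → ℝ), Measurable f →
      ∀ C, 0 ≤ C → (∀ x, x ∈ Icc s t → |f x| ≤ C) →
      ∀ r, r ∈ Icc s t → ∀ r', r' ∈ Icc s t →
      |∫ x in Ioc r r', f x ∂ν| ≤ C * (ν (Ioc s t)).toReal := by
    intro ν hν f hf C hC hfb r hr r' hr'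
    have hfin : ν (Ioc r r') < ⊤ := lt_of_le_of_lt (measure_mono (hsub2 r r' hr hr')) hν
    have h1 : |∫ x in Ioc r r', f x ∂ν| ≤ C * (ν (Ioc r r')).toReal :=
      setint_abs_le hf hfin hC (fun x hx => hfb x (hsub r r' hr hr' hx)) measurableSet_Ioc
    have h2 : C * (ν (Ioc r r')).toReal ≤ C * (ν (Ioc s t)).toReal := by
      apply mul_le_mul_of_nonneg_left _ hC
      exact toReal_mono_meas (hsub2 r r' hr hr') hν
    linarith
  -- v increments
  have hvb : ∀ r, r ∈ Icc s t → ∀ r', r' ∈ Icc s t → r ≤ r' →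
      |v r' - v r| ≤ S*(ω*q) := by
    intro r hr r' hr' hrr
    have h1 := heqv r hr r' hr' hrr
    have h2 : |v r' - v r| ≤ |∫ x in Ioc r r', u x ∂μp| + |∫ x in Ioc r r', u x ∂μm| := by
      rw [h1]; exact abs_sub _ _
    have h3 := hIint μp hfp u hu S hS0 (fun x hx => (hS x hx).1) r hr r' hr'
    have h4 := hIint μm hfm u hu S hS0 (fun x hx => (hS x hx).1) r hr r' hr'
    have h5 : ω * q = (μp (Ioc s t)).toReal + (μm (Ioc s t)).toReal := by
      rw [hq]; field_simp
    rw [h5]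
    have h6 : |v r' - v r| ≤ S * (μp (Ioc s t)).toReal + S * (μm (Ioc s t)).toReal := by
      linarith
    linarith [h6]

  -- interval integrability basics
  have hmes_va : Measurable (fun x => v x / a x) := hv.div ha
  have hvolfin : ∀ (r r' : ℝ), volume (Ioc r r') < ⊤ := by
    intro r r'
    rw [Real.volume_Ioc]
    exact ENNReal.ofReal_lt_top
  have hIIva : ∀ (r r' : ℝ), r ∈ Icc s t → r' ∈ Icc s t → r ≤ r' →
      IntervalIntegrable (fun x => v x / a x) volume r r' := by
    intro r r' hr hr' hrr
    apply (intervalIntegrable_iff_integrableOn_Ioc_of_le hrr).2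
    exact intOn hmes_va (hvolfin r r') (fun x hx => hva x (hsub r r' hr hr' hx))
      measurableSet_Ioc
  have hane : ∀ x, a x ≠ 0 := fun x => (hapos x).ne'
  have haabs : ∀ x, |1 / a x| ≤ A := by
    intro x
    rw [abs_of_pos (one_div_pos.2 (hapos x))]
    exact haA x
  have hIIa : IntervalIntegrable (fun x => 1 / a x) volume s t := by
    apply (intervalIntegrable_iff_integrableOn_Ioc_of_le hst).2
    exact intOn (measurable_const.div ha) (hvolfin s t) (fun x _ => haabs x) measurableSet_Ioc
  have hc1b : |∫ x in s..t, 1 / a x| ≤ A * (t - s) := by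
    have h1 : ‖∫ x in s..t, 1 / a x‖ ≤ A * |t - s| := by
      apply intervalIntegral.norm_integral_le_of_norm_le_const
      intro x hx
      rw [Real.norm_eq_abs]
      exact haabs x
    rw [Real.norm_eq_abs, abs_of_nonneg (by linarith : (0:ℝ) ≤ t - s)] at h1
    exact h1
  -- splitting of the integral of v/a around a base point w
  have hsplit : ∀ w, w ∈ Icc s t →
      ∫ x in s..t, v x / a x =
        v w * (∫ x in s..t, 1 / a x) + ∫ x in s..t, (v x - v w) / a x := by
    intro w hw
    have hIIc : IntervalIntegrable (fun x => v w * (1 / a x)) volume s t :=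
      hIIa.const_mul (v w)
    have hIId : IntervalIntegrable (fun x => (v x - v w) / a x) volume s t := by
      apply (intervalIntegrable_iff_integrableOn_Ioc_of_le hst).2
      apply intOn ((hv.sub measurable_const).div ha) (hvolfin s t)
        (C := (2*S) * A) _ measurableSet_Ioc
      intro x hx
      show |(v x - v w) / a x| ≤ _
      rw [abs_div, abs_of_pos (hapos x), div_eq_mul_inv]
      have h1 : |v x - v w| ≤ 2*S := by
        have := (hS x (hsub s t hsmem htmem hx)).2
        have := (hS w hw).2
        have := abs_sub (v x) (v w)
        linarith
      have h2 : (a x)⁻¹ ≤ A := by simpa [one_div] using haA x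
      apply mul_le_mul h1 h2 (inv_nonneg.2 (hapos x).le) (by positivity)
    have heqf : ∀ x, x ∈ Set.uIcc s t → v x / a x = v w * (1 / a x) + (v x - v w) / a x := by
      intro x _
      field_simp
      ring
    calc ∫ x in s..t, v x / a x
        = ∫ x in s..t, (v w * (1 / a x) + (v x - v w) / a x) :=
          intervalIntegral.integral_congr heqf
      _ = (∫ x in s..t, v w * (1 / a x)) + ∫ x in s..t, (v x - v w) / a x :=
          intervalIntegral.integral_add hIIc hIId
      _ = v w * (∫ x in s..t, 1 / a x) + ∫ x in s..t, (v x - v w) / a x := by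
          rw [intervalIntegral.integral_const_mul]
  -- error integral bound around base point w
  have herr1 : ∀ w, w ∈ Icc s t →
      |∫ x in s..t, (v x - v w) / a x| ≤ (A * (S*(ω*q))) * (t - s) := by
    intro w hw
    have h1 : ‖∫ x in s..t, (v x - v w) / a x‖ ≤ (A * (S*(ω*q))) * |t - s| := by
      apply intervalIntegral.norm_integral_le_of_norm_le_const
      intro x hx
      rw [Set.uIoc_of_le hst] at hx
      rw [Real.norm_eq_abs, abs_div, abs_of_pos (hapos x), div_eq_mul_inv]
      have hxmem : x ∈ Icc s t := hsub s t hsmem htmem hx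
      have h2 : |v x - v w| ≤ S*(ω*q) := by
        rcases le_total w x with hcase | hcase
        · exact hvb w hw x hxmem hcase
        · rw [abs_sub_comm]; exact hvb x hxmem w hw hcase
      have h3 : (a x)⁻¹ ≤ A := by simpa [one_div] using haA x
      have := mul_le_mul h2 h3 (inv_nonneg.2 (hapos x).le) (by positivity)
      linarith
    rw [Real.norm_eq_abs, abs_of_nonneg (by linarith : (0:ℝ) ≤ t - s)] at h1
    exact h1
  -- decomposition of measure integrals around base point w
  have hconst : ∀ (ν : Measure ℝ), ν (Ioc s t) < ⊤ → ∀ w, w ∈ Icc s t →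
      ∫ x in Ioc s t, u x ∂ν =
        u w * (ν (Ioc s t)).toReal + ∫ x in Ioc s t, (u x - u w) ∂ν := by
    intro ν hν w hw
    have i3 : IntegrableOn (fun x => u x - u w) (Ioc s t) ν := by
      apply intOn (hu.sub measurable_const) hν (C := 2*S) _ measurableSet_Ioc
      intro x hx
      show |u x - u w| ≤ 2*S
      have := (hS x (hsub s t hsmem htmem hx)).1
      have := (hS w hw).1
      have := abs_sub (u x) (u w)
      linarith
    have hfu : ∀ x, u x = u w + (u x - u w) := by intro x; ring
    calc ∫ x in Ioc s t, u x ∂ν = ∫ x in Ioc s t, (u w + (u x - u w)) ∂ν := by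
          apply setIntegral_congr_fun measurableSet_Ioc
          intro x _; exact hfu x
      _ = (∫ _x in Ioc s t, u w ∂ν) + ∫ x in Ioc s t, (u x - u w) ∂ν :=
          integral_add (integrableOn_const hν.ne) i3
      _ = u w * (ν (Ioc s t)).toReal + ∫ x in Ioc s t, (u x - u w) ∂ν := by
          rw [setIntegral_const, smul_eq_mul, mul_comm, measureReal_def]
  -- bounds for the measure error integrals
  have herr2 : ∀ (ν : Measure ℝ), ν (Ioc s t) < ⊤ → ∀ w, w ∈ Icc s t →
      |∫ x in Ioc s t, (u x - u w) ∂ν| ≤ (A*S*(t-s)) * (ν (Ioc s t)).toReal := by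
    intro ν hν w hw
    have hb : ∀ x, x ∈ Icc s t → |u x - u w| ≤ A*S*(t-s) := by
      intro x hx
      rcases le_total w x with hcase | hcase
      · exact hub w hw x hx hcase
      · rw [abs_sub_comm]; exact hub x hx w hw hcase
    exact hIint ν hν (fun x => u x - u w) (hu.sub measurable_const) (A*S*(t-s))
      (mul_nonneg (mul_nonneg hA0.le hS0) (by linarith)) hb s hsmem t htmem
  -- the coefficients
  set c₁ := ω * ∫ x in s..t, 1 / a x with hc₁def
  set c₂ := ((μp (Ioc s t)).toReal - (μm (Ioc s t)).toReal)/ω with hc₂def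
  have hc₁p : |c₁| ≤ p := by
    rw [hc₁def, abs_mul, abs_of_pos hω, hp]
    calc ω * |∫ x in s..t, 1 / a x| ≤ ω * (A * (t-s)) :=
          mul_le_mul_of_nonneg_left hc1b hω.le
    _ = ω * A * (t - s) := by ring
  have hc₂q : |c₂| ≤ q := by
    have h1 : |(μp (Ioc s t)).toReal - (μm (Ioc s t)).toReal| ≤
        (μp (Ioc s t)).toReal + (μm (Ioc s t)).toReal := by
      have h2 := abs_sub ((μp (Ioc s t)).toReal) ((μm (Ioc s t)).toReal)
      rw [abs_of_nonneg ENNReal.toReal_nonneg, abs_of_nonneg ENNReal.toReal_nonneg] at h2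
      exact h2
    rw [hc₂def, hq, abs_div, abs_of_pos hω]
    exact (div_le_div_iff_of_pos_right hω).mpr h1
  have hωq : ω * q = (μp (Ioc s t)).toReal + (μm (Ioc s t)).toReal := by
    rw [hq]; field_simp
  have habs_ps : ∀ w, w ∈ Icc s t → |v w| ≤ S' := fun w hw => le_trans (hS w hw).2 hSS'
  -- FORWARD
  have fwd : Real.sqrt ((ω*u t)^2 + (v t)^2) ≤
      Real.exp ((p+q)/2) * Real.sqrt ((ω*u s)^2 + (v s)^2) + 3*(p*q*S') := by
    apply algstep c₁ c₂ (ω * ∫ x in s..t, (v x - v s) / a x)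
      ((∫ x in Ioc s t, (u x - u s) ∂μp) - ∫ x in Ioc s t, (u x - u s) ∂μm)
      p q S' (ω*u s) (v s) (ω*u t) (v t) hc₁p hc₂q
    · -- x' equation
      have h1 := hequ s hsmem t htmem hst
      rw [hsplit s hsmem] at h1
      rw [h1, hc₁def]; ring
    · -- y' equation
      have h1 := heqv s hsmem t htmem hst
      rw [hconst μp hfp s hsmem, hconst μm hfm s hsmem] at h1
      have h2 : c₂ * (ω * u s) = u s * ((μp (Ioc s t)).toReal - (μm (Ioc s t)).toReal) := by
        rw [hc₂def]; field_simp
      rw [h2]; linarith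
    · -- e₁ bound
      have h1 := herr1 s hsmem
      rw [abs_mul, abs_of_pos hω]
      have h2 : ω * |∫ x in s..t, (v x - v s) / a x| ≤ ω * ((A * (S*(ω*q))) * (t - s)) :=
        mul_le_mul_of_nonneg_left h1 hω.le
      have h3 : ω * ((A * (S*(ω*q))) * (t - s)) = p*q*(ω*S) := by rw [hp]; ring
      have h4 : p*q*(ω*S) ≤ p*q*S' := by
        apply mul_le_mul_of_nonneg_left _ (by positivity)
        rw [hS']; nlinarith
      linarith
    · -- e₂ bound
      have h1 := herr2 μp hfp s hsmem
      have h2 := herr2 μm hfm s hsmem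
      have h3 := abs_sub (∫ x in Ioc s t, (u x - u s) ∂μp) (∫ x in Ioc s t, (u x - u s) ∂μm)
      have h4 : (A*S*(t-s)) * (μp (Ioc s t)).toReal + (A*S*(t-s)) * (μm (Ioc s t)).toReal
          = A*S*(t-s) * (ω*q) := by rw [hωq]; ring
      have h5 : p*q*S ≤ p*q*S' := by
        apply mul_le_mul_of_nonneg_left hSS' (by positivity)
      have h6 : A*S*(t-s)*(ω*q) = p*q*S := by rw [hp]; ring
      linarith
    · exact habs_ps s hsmem
  -- BACKWARD
  have bwd : Real.sqrt ((ω*u s)^2 + (v s)^2) ≤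
      Real.exp ((p+q)/2) * Real.sqrt ((ω*u t)^2 + (v t)^2) + 3*(p*q*S') := by
    apply algstep (-c₁) (-c₂) (-(ω * ∫ x in s..t, (v x - v t) / a x))
      (-((∫ x in Ioc s t, (u x - u t) ∂μp) - ∫ x in Ioc s t, (u x - u t) ∂μm))
      p q S' (ω*u t) (v t) (ω*u s) (v s) (by rwa [abs_neg]) (by rwa [abs_neg])
    · have h1 := hequ s hsmem t htmem hst
      rw [hsplit t htmem] at h1
      rw [h1, hc₁def]; ring
    · have h1 := heqv s hsmem t htmem hst
      rw [hconst μp hfp t htmem, hconst μm hfm t htmem] at h1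
      have h2 : (-c₂) * (ω * u t) = -(u t * ((μp (Ioc s t)).toReal - (μm (Ioc s t)).toReal)) := by
        rw [hc₂def]; field_simp
      rw [h2]; linarith
    · rw [abs_neg]
      have h1 := herr1 t htmem
      rw [abs_mul, abs_of_pos hω]
      have h2 : ω * |∫ x in s..t, (v x - v t) / a x| ≤ ω * ((A * (S*(ω*q))) * (t - s)) :=
        mul_le_mul_of_nonneg_left h1 hω.le
      have h3 : ω * ((A * (S*(ω*q))) * (t - s)) = p*q*(ω*S) := by rw [hp]; ring
      have h4 : p*q*(ω*S) ≤ p*q*S' := by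
        apply mul_le_mul_of_nonneg_left _ (by positivity)
        rw [hS']; nlinarith
      linarith
    · rw [abs_neg]
      have h1 := herr2 μp hfp t htmem
      have h2 := herr2 μm hfm t htmem
      have h3 := abs_sub (∫ x in Ioc s t, (u x - u t) ∂μp) (∫ x in Ioc s t, (u x - u t) ∂μm)
      have h4 : (A*S*(t-s)) * (μp (Ioc s t)).toReal + (A*S*(t-s)) * (μm (Ioc s t)).toReal
          = A*S*(t-s) * (ω*q) := by rw [hωq]; ring
      have h5 : p*q*S ≤ p*q*S' := by
        apply mul_le_mul_of_nonneg_left hSS' (by positivity)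
      have h6 : A*S*(t-s)*(ω*q) = p*q*S := by rw [hp]; ring
      linarith
    · exact habs_ps t htmem
  have eqs : ∀ w : ℝ, (ω*u w)^2 = ω^2*(u w)^2 := fun w => by ring
  constructor
  · have h := fwd; rw [eqs t, eqs s] at h; exact h
  · have h := bwd; rw [eqs t, eqs s] at h; exact h



lemma window (ν : Measure ℝ) (M : ℝ) (hM0 : 0 ≤ M)
    (hfin : ∀ s t : ℝ, ν (Ioc s t) < ⊤)
    (hM : ∀ r : ℝ, ν (Ioc r (r+1)) ≤ ENNReal.ofReal M)
    (s t : ℝ) (hst : s ≤ t) : (ν (Ioc s t)).toReal ≤ M*(t-s+1) := by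
  have key : ∀ n : ℕ, ν (Ioc s (s+n)) ≤ (n : ENNReal) * ENNReal.ofReal M := by
    intro n
    induction n with
    | zero => simp
    | succ n ih =>
      have hsplit : Ioc s (s+(n+1:ℕ)) ⊆ Ioc s (s+n) ∪ Ioc (s+n) (s+n+1) := by
        push_cast
        rw [Set.Ioc_union_Ioc_eq_Ioc (by linarith [Nat.cast_nonneg (α := ℝ) n]) (by linarith)]
        intro x hx
        push_cast at hx
        exact ⟨hx.1, by linarith [hx.2]⟩
      calc ν (Ioc s (s+(n+1:ℕ))) ≤ ν (Ioc s (s+n) ∪ Ioc (s+n) (s+n+1)) := measure_mono hsplit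
    _ ≤ ν (Ioc s (s+n)) + ν (Ioc (s+n) (s+n+1)) := measure_union_le _ _
    _ ≤ (n : ENNReal) * ENNReal.ofReal M + ENNReal.ofReal M := add_le_add ih (hM (s+n))
    _ = ((n+1 : ℕ) : ENNReal) * ENNReal.ofReal M := by push_cast; ring
  set n := ⌈t - s⌉₊ with hn
  have h1 : t ≤ s + n := by
    have := Nat.le_ceil (t - s)
    rw [← hn] at this
    linarith
  have h2 : ν (Ioc s t) ≤ (n : ENNReal) * ENNReal.ofReal M :=
    le_trans (measure_mono (Set.Ioc_subset_Ioc_right h1)) (key n)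
  have h3 : (n : ENNReal) * ENNReal.ofReal M = ENNReal.ofReal (n * M) := by
    rw [ENNReal.ofReal_mul (Nat.cast_nonneg n)]
    simp
  have h4 : (n:ℝ) * M ≤ (t - s + 1) * M := by
    apply mul_le_mul_of_nonneg_right _ hM0
    have := Nat.ceil_lt_add_one (by linarith : (0:ℝ) ≤ t - s)
    rw [← hn] at this
    linarith
  have h5 : ν (Ioc s t) ≤ ENNReal.ofReal ((t-s+1) * M) := by
    rw [h3] at h2
    exact le_trans h2 (ENNReal.ofReal_le_ofReal h4)
  have h6 := ENNReal.toReal_mono ENNReal.ofReal_ne_top h5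
  rw [ENNReal.toReal_ofReal (by nlinarith : (0:ℝ) ≤ (t-s+1)*M)] at h6
  linarith

lemma chain_step (Rt Rs R0 e1 e2 CC pp qi Qi : ℝ)
    (h1 : Rt ≤ e2*Rs + CC*pp*qi) (h2 : Rs ≤ e1*(R0 + CC*pp*Qi))
    (he1 : 1 ≤ e1) (he2 : 1 ≤ e2) (hcc : 0 ≤ CC*pp*qi) :
    Rt ≤ (e2*e1)*(R0 + CC*pp*Qi + CC*pp*qi) := by
  have h3 : e2*Rs ≤ e2*(e1*(R0 + CC*pp*Qi)) :=
    mul_le_mul_of_nonneg_left h2 (by linarith)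
  have he21 : (0:ℝ) ≤ e2*e1 - 1 := by nlinarith
  have h4 : CC*pp*qi ≤ (e2*e1)*(CC*pp*qi) := by nlinarith [mul_nonneg he21 hcc]
  nlinarith [h3, h4, h1]


lemma reg_pos (a u v : ℝ → ℝ) (μp μm : Measure ℝ) (A B d : ℝ)
    (ha : Measurable a) (hapos : ∀ r, 0 < a r) (haA : ∀ r, 1 / a r ≤ A)
    (hu : Measurable u) (hv : Measurable v)
    (hfinp : μp (Ioc 0 d) < ⊤) (hfinm : μm (Ioc 0 d) < ⊤) (hd : 0 ≤ d)
    (equ : ∀ t : ℝ, u t = u 0 + ∫ x in (0:ℝ)..t, v x / a x)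
    (eqv : ∀ s t : ℝ, s ≤ t →
      v t - v s = (∫ x in Ioc s t, u x ∂μp) - ∫ x in Ioc s t, u x ∂μm) :
    ∃ S : ℝ, ∀ r, r ∈ Icc 0 d → |u r| ≤ S ∧ |v r| ≤ S := by
  have hA0 : 0 < A := lt_of_lt_of_le (one_div_pos.2 (hapos 0)) (haA 0)
  have haabs : ∀ x, |1 / a x| ≤ A := by
    intro x
    rw [abs_of_pos (one_div_pos.2 (hapos x))]
    exact haA x
  obtain ⟨Mt, hMt⟩ : ∃ m : ℝ, m = (μp (Ioc 0 d)).toReal + (μm (Ioc 0 d)).toReal := ⟨_, rfl⟩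
  have hMt0 : 0 ≤ Mt := by rw [hMt]; positivity
  obtain ⟨δ, hδ⟩ : ∃ z : ℝ, z = 1/(2*A*(Mt+1)) := ⟨_, rfl⟩
  have hδ0 : 0 < δ := by rw [hδ]; positivity
  have hδc : A*δ*Mt ≤ 1/2 := by
    have hδeq : δ*(2*A*(Mt+1)) = 1 := by
      rw [hδ]; field_simp
    have hAδ0 : 0 ≤ A*δ := by positivity
    nlinarith [hδeq, hAδ0, hMt0]
  have husI : ∀ r, 0 ≤ r → u r = u 0 + ∫ x in Ioc 0 r, v x / a x := by
    intro r hr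
    rw [equ r, intervalIntegral.integral_of_le hr]
  set V := {r : ℝ | r ∈ Icc 0 d ∧ IntegrableOn (fun x => v x / a x) (Ioc 0 r) volume} with hV
  have h0V : (0:ℝ) ∈ V := by
    constructor
    · exact ⟨le_refl 0, hd⟩
    · rw [Set.Ioc_self]; exact integrableOn_empty
  have hVbdd : BddAbove V := ⟨d, fun x hx => hx.1.2⟩
  set rs := sSup V with hrs
  have hrs0 : 0 ≤ rs := le_csSup hVbdd h0V
  have hrsd : rs ≤ d := csSup_le ⟨0, h0V⟩ (fun x hx => hx.1.2)
  have hbelow : ∀ r, 0 ≤ r → r < rs → IntegrableOn (fun x => v x / a x) (Ioc 0 r) volume := by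
    intro r hr hlt
    obtain ⟨r', hr'V, hrr'⟩ := exists_lt_of_lt_csSup ⟨0, h0V⟩ hlt
    exact hr'V.2.mono_set (Set.Ioc_subset_Ioc_right hrr'.le)
  have hjunk : ∀ r, 0 ≤ r → ¬ IntegrableOn (fun x => v x / a x) (Ioc 0 r) volume →
      u r = u 0 := by
    intro r hr hni
    rw [husI r hr, integral_undef hni, add_zero]
  have hvbnd : ∀ x, 0 ≤ x → x ≤ d → ∀ C, 0 ≤ C → (∀ y, y ∈ Ioc 0 x → |u y| ≤ C) →
      |v x| ≤ |v 0| + C * Mt := by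
    intro x hx hxd C hC hbC
    have h1 := eqv 0 x hx
    have hsubp : Ioc (0:ℝ) x ⊆ Ioc 0 d := Set.Ioc_subset_Ioc_right hxd
    have hfp' : μp (Ioc 0 x) < ⊤ := lt_of_le_of_lt (measure_mono hsubp) hfinp
    have hfm' : μm (Ioc 0 x) < ⊤ := lt_of_le_of_lt (measure_mono hsubp) hfinm
    have h2 : |∫ y in Ioc 0 x, u y ∂μp| ≤ C * (μp (Ioc 0 x)).toReal :=
      setint_abs_le hu hfp' hC hbC measurableSet_Ioc
    have h3 : |∫ y in Ioc 0 x, u y ∂μm| ≤ C * (μm (Ioc 0 x)).toReal :=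
      setint_abs_le hu hfm' hC hbC measurableSet_Ioc
    have h4p := toReal_mono_meas hsubp hfinp
    have h4m := toReal_mono_meas hsubp hfinm
    have h5 := abs_sub (∫ y in Ioc 0 x, u y ∂μp) (∫ y in Ioc 0 x, u y ∂μm)
    have h7 : |v x| ≤ |v 0| + |v x - v 0| := by
      have h8 := abs_add_le (v 0) (v x - v 0)
      have h9 : v 0 + (v x - v 0) = v x := by ring
      rw [h9] at h8
      exact h8
    rw [← h1] at h5
    have h10 : C * (μp (Ioc 0 x)).toReal ≤ C * (μp (Ioc 0 d)).toReal :=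
      mul_le_mul_of_nonneg_left h4p hC
    have h11 : C * (μm (Ioc 0 x)).toReal ≤ C * (μm (Ioc 0 d)).toReal :=
      mul_le_mul_of_nonneg_left h4m hC
    have h12 : C * Mt = C * (μp (Ioc 0 d)).toReal + C * (μm (Ioc 0 d)).toReal := by
      rw [hMt]; ring
    linarith [h2, h3, h5, h7]
  -- the recursive bound sequence
  obtain ⟨Y, hY⟩ : ∃ z : ℝ, z = 2*A*δ*|v 0| := ⟨_, rfl⟩
  have hY0 : 0 ≤ Y := by rw [hY]; positivity
  obtain ⟨U, hU0, hUrec⟩ : ∃ U : ℕ → ℝ, U 0 = |u 0| ∧ ∀ n, U (n+1) = 2*U n + Y := by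
    refine ⟨fun n => 2^n*|u 0| + (2^n - 1)*Y, by norm_num, fun n => ?_⟩
    simp only [pow_succ]
    ring
  have hUnn : ∀ n, 0 ≤ U n := by
    intro n
    induction n with
    | zero => rw [hU0]; exact abs_nonneg _
    | succ n ih => rw [hUrec n]; linarith
  have hUmono : ∀ n, U n ≤ U (n+1) := by
    intro n
    rw [hUrec n]
    have := hUnn n
    linarith
  -- main induction
  have CL : ∀ n : ℕ, ∀ r, 0 ≤ r → r ≤ n*δ → r < rs → |u r| ≤ U n := by
    intro n
    induction n with
    | zero =>
      intro r h0 h1 _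
      have hr0 : r = 0 := le_antisymm (by simpa using h1) h0
      rw [hr0, hU0]
    | succ n ih =>
      intro r h0 h1 h2
      by_cases hcase : r ≤ n*δ
      · exact le_trans (ih r h0 hcase h2) (hUmono n)
      push_neg at hcase
      obtain ⟨c, hc⟩ : ∃ z : ℝ, z = (n:ℝ)*δ := ⟨_, rfl⟩
      have hc0 : 0 ≤ c := by rw [hc]; positivity
      have hcr : c < r := by rw [hc]; exact hcase
      have hcrs : c < rs := lt_trans hcr h2
      have hrd : r ≤ d := le_trans h2.le hrsd
      have hir : IntegrableOn (fun x => v x / a x) (Ioc 0 r) volume := hbelow r h0 h2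
      have hsub1 : Ioc (0:ℝ) c ⊆ Ioc 0 r := Set.Ioc_subset_Ioc_right hcr.le
      have hsub2 : Ioc c r ⊆ Ioc (0:ℝ) r := Set.Ioc_subset_Ioc_left hc0
      obtain ⟨g, hg⟩ : ∃ G : ℝ → ℝ, ∀ x : ℝ, G x = ∫ y in Ioc c x, |v y / a y| :=
        ⟨fun x => ∫ y in Ioc c x, |v y / a y|, fun _ => rfl⟩
      have hgint : ∀ x, x ≤ r → IntegrableOn (fun y => |v y / a y|) (Ioc c x) volume := by
        intro x hx
        exact (hir.mono_set (fun z hz => ⟨lt_of_le_of_lt hc0 hz.1, le_trans hz.2 hx⟩)).abs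
      have hgr0 : 0 ≤ g r := by rw [hg r]; exact setIntegral_nonneg measurableSet_Ioc (fun y _ => abs_nonneg _)
      have hgmono : ∀ x, x ≤ r → g x ≤ g r := by
        intro x hx
        rw [hg x, hg r]
        apply setIntegral_mono_set (hgint r (le_refl r))
          (Filter.Eventually.of_forall (fun y => abs_nonneg _))
        apply Filter.Eventually.of_forall
        intro y hy
        exact ⟨hy.1, le_trans hy.2 hx⟩
      have hudiff : ∀ x, x ∈ Ioc c r → |u x| ≤ U n + g r := by
        intro x hx
        have hx0 : 0 ≤ x := le_trans hc0 hx.1.le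
        have hintc : IntegrableOn (fun y => v y / a y) (Ioc 0 c) volume := hir.mono_set hsub1
        have hintcx : IntegrableOn (fun y => v y / a y) (Ioc c x) volume :=
          hir.mono_set (fun z hz => ⟨lt_of_le_of_lt hc0 hz.1, le_trans hz.2 hx.2⟩)
        have h4 : u x - u c = ∫ y in Ioc c x, v y / a y := by
          rw [husI x hx0, husI c hc0]
          have hsplit : Ioc (0:ℝ) x = Ioc 0 c ∪ Ioc c x :=
            (Set.Ioc_union_Ioc_eq_Ioc hc0 hx.1.le).symm
          rw [hsplit, setIntegral_union (Set.Ioc_disjoint_Ioc_of_le le_rfl) measurableSet_Ioc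
            hintc hintcx]
          ring
        have h5 : |u x - u c| ≤ g x := by
          rw [h4, hg x]
          have h6 := norm_integral_le_integral_norm
            (μ := volume.restrict (Ioc c x)) (fun y => v y / a y)
          simp only [Real.norm_eq_abs] at h6
          exact h6
        have h6 : |u c| ≤ U n := ih c hc0 hc.le hcrs
        have h7 : |u x| ≤ |u c| + |u x - u c| := by
          have h8 := abs_add_le (u c) (u x - u c)
          have h9 : u c + (u x - u c) = u x := by ring
          rw [h9] at h8
          exact h8
        have h10 := hgmono x hx.2
        linarith
      have hvx : ∀ x, x ∈ Ioc c r → |v x| ≤ |v 0| + (U n + g r)*Mt := by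
        intro x hx
        have hx0 : 0 ≤ x := le_trans hc0 hx.1.le
        apply hvbnd x hx0 (le_trans hx.2 hrd) (U n + g r) (by linarith [hUnn n])
        intro y hy
        by_cases hyc : y ≤ c
        · have := ih y hy.1.le (le_trans hyc hc.le) (lt_of_le_of_lt hyc hcrs)
          linarith
        · push_neg at hyc
          exact hudiff y ⟨hyc, le_trans hy.2 hx.2⟩
      have hgle : g r ≤ δ*(A*(|v 0| + (U n + g r)*Mt)) := by
        have hb : ∀ y, y ∈ Ioc c r → |v y / a y| ≤ A*(|v 0| + (U n + g r)*Mt) := by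
          intro y hy
          rw [abs_div, abs_of_pos (hapos y), div_eq_mul_inv]
          have h1 : (a y)⁻¹ ≤ A := by simpa [one_div] using haA y
          have h2 := hvx y hy
          have h3 : 0 ≤ |v 0| + (U n + g r)*Mt := by
            have := hUnn n
            positivity
          have := mul_le_mul h2 h1 (inv_nonneg.2 (hapos y).le) h3
          linarith [this]
        have hconstint : IntegrableOn (fun _ : ℝ => A*(|v 0| + (U n + g r)*Mt)) (Ioc c r)
            volume := by
          exact integrableOn_const (by rw [Real.volume_Ioc]; exact ENNReal.ofReal_lt_top.ne) enorm_ne_top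
        have h12 : g r ≤ ∫ _y in Ioc c r, A*(|v 0| + (U n + g r)*Mt) := by
          conv_lhs => rw [hg r]
          apply setIntegral_mono_on (hgint r (le_refl r)) hconstint measurableSet_Ioc hb
        have h13 : ∫ _y in Ioc c r, A*(|v 0| + (U n + g r)*Mt) =
            (r - c) * (A*(|v 0| + (U n + g r)*Mt)) := by
          rw [setIntegral_const, smul_eq_mul, measureReal_def, Real.volume_Ioc,
            ENNReal.toReal_ofReal (by linarith : (0:ℝ) ≤ r - c)]
        have h14 : r - c ≤ δ := by
          have : r ≤ ((n:ℝ)+1)*δ := by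
            have := h1
            push_cast at this
            linarith [this]
          rw [hc]
          linarith
        have h15 : 0 ≤ A*(|v 0| + (U n + g r)*Mt) := by
          have := hUnn n
          positivity
        rw [h13] at h12
        calc g r ≤ (r - c) * (A*(|v 0| + (U n + g r)*Mt)) := h12
        _ ≤ δ * (A*(|v 0| + (U n + g r)*Mt)) := mul_le_mul_of_nonneg_right h14 h15
      have hgle' : g r ≤ A*δ*|v 0| + A*δ*Mt*(U n) + A*δ*Mt*(g r) := by
        have heq : δ*(A*(|v 0| + (U n + g r)*Mt)) =
            A*δ*|v 0| + A*δ*Mt*(U n) + A*δ*Mt*(g r) := by ring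
        rw [heq] at hgle
        exact hgle
      have e1 : A*δ*Mt*(g r) ≤ (1/2)*(g r) := mul_le_mul_of_nonneg_right hδc hgr0
      have e2 : A*δ*Mt*(U n) ≤ (1/2)*(U n) := mul_le_mul_of_nonneg_right hδc (hUnn n)
      have hsolve : g r ≤ U n + Y := by
        have hAδv : 0 ≤ A*δ*|v 0| := by positivity
        calc g r ≤ 2*(A*δ*|v 0|) + U n := by linarith
        _ = U n + Y := by rw [hY]; ring
      have h9 : |u r| ≤ U n + g r := hudiff r ⟨hcr, le_refl r⟩
      rw [hUrec n]
      linarith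
  -- global bound on [0, rs)
  obtain ⟨N, hN⟩ : ∃ n : ℕ, n = ⌈d/δ⌉₊ := ⟨_, rfl⟩
  have hNd : d ≤ (N:ℝ)*δ := by
    have h1 : d/δ ≤ (N:ℝ) := by rw [hN]; exact Nat.le_ceil _
    rw [div_le_iff₀ hδ0] at h1
    linarith
  have hCL : ∀ r, 0 ≤ r → r < rs → |u r| ≤ U N := by
    intro r h0 h2
    exact CL N r h0 (le_trans (le_trans h2.le hrsd) hNd) h2
  obtain ⟨C, hC⟩ : ∃ z : ℝ, z = max (max (U N) |u rs|) |u 0| := ⟨_, rfl⟩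
  have hCu : ∀ y, y ∈ Ioc 0 d → |u y| ≤ C := by
    intro y hy
    rcases lt_trichotomy y rs with h | h | h
    · rw [hC]
      exact le_trans (hCL y hy.1.le h) (le_trans (le_max_left _ _) (le_max_left _ _))
    · rw [h, hC]
      exact le_trans (le_max_right (U N) _) (le_max_left _ _)
    · have hynotV : y ∉ V := fun hyV => absurd (le_csSup hVbdd hyV) (not_le.2 h)
      have hni : ¬ IntegrableOn (fun x => v x / a x) (Ioc 0 y) volume := by
        intro hint
        exact hynotV ⟨⟨hy.1.le, hy.2⟩, hint⟩
      rw [hjunk y hy.1.le hni, hC]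
      exact le_max_right _ _
  have hC0 : 0 ≤ C := by
    rw [hC]
    exact le_trans (abs_nonneg (u 0)) (le_max_right _ _)
  refine ⟨max (max C |u 0|) (|v 0| + C*Mt), ?_⟩
  intro r hr
  constructor
  · rcases eq_or_lt_of_le hr.1 with h | h
    · rw [← h]
      exact le_trans (le_max_right C _) (le_max_left _ _)
    · exact le_trans (hCu r ⟨h, hr.2⟩) (le_trans (le_max_left _ _) (le_max_left _ _))
  · have hvr : |v r| ≤ |v 0| + C*Mt := by
      rcases eq_or_lt_of_le hr.1 with h | h
      · rw [← h]
        nlinarith [hC0, hMt0]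
      · exact hvbnd r hr.1 hr.2 C hC0 (fun y hy => hCu y ⟨hy.1, le_trans hy.2 hr.2⟩)
    exact le_trans hvr (le_max_right _ _)

lemma reg_neg (a u v : ℝ → ℝ) (μp μm : Measure ℝ) (A d : ℝ)
    (hapos : ∀ r, 0 < a r) (haA : ∀ r, 1 / a r ≤ A)
    (hu : Measurable u)
    (hfinp : μp (Ioc (-d) 0) < ⊤) (hfinm : μm (Ioc (-d) 0) < ⊤) (hd : 0 ≤ d)
    (equ : ∀ t : ℝ, u t = u 0 + ∫ x in (0:ℝ)..t, v x / a x)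
    (eqv : ∀ s t : ℝ, s ≤ t →
      v t - v s = (∫ x in Ioc s t, u x ∂μp) - ∫ x in Ioc s t, u x ∂μm) :
    ∃ S : ℝ, ∀ r, r ∈ Icc (-d) 0 → |u r| ≤ S ∧ |v r| ≤ S := by
  have hA0 : 0 < A := lt_of_lt_of_le (one_div_pos.2 (hapos 0)) (haA 0)
  obtain ⟨Mt, hMt⟩ : ∃ m : ℝ, m = (μp (Ioc (-d) 0)).toReal + (μm (Ioc (-d) 0)).toReal :=
    ⟨_, rfl⟩
  have hMt0 : 0 ≤ Mt := by rw [hMt]; positivity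
  obtain ⟨δ, hδ⟩ : ∃ z : ℝ, z = 1/(2*A*(Mt+1)) := ⟨_, rfl⟩
  have hδ0 : 0 < δ := by rw [hδ]; positivity
  have hδc : A*δ*Mt ≤ 1/2 := by
    have hδeq : δ*(2*A*(Mt+1)) = 1 := by rw [hδ]; field_simp
    have hAδ0 : 0 ≤ A*δ := by positivity
    nlinarith [hδeq, hAδ0, hMt0]
  have husI : ∀ r, 0 ≤ r → u (-r) = u 0 - ∫ x in Ioc (-r) 0, v x / a x := by
    intro r hr
    have h1 : ∫ x in (0:ℝ)..(-r), v x / a x = - ∫ x in (-r)..(0:ℝ), v x / a x :=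
      intervalIntegral.integral_symm _ _
    rw [equ (-r), h1, intervalIntegral.integral_of_le (by linarith : -r ≤ (0:ℝ))]
    ring
  set V := {r : ℝ | r ∈ Icc 0 d ∧ IntegrableOn (fun x => v x / a x) (Ioc (-r) 0) volume}
    with hV
  have h0V : (0:ℝ) ∈ V := by
    constructor
    · exact ⟨le_refl 0, hd⟩
    · rw [neg_zero, Set.Ioc_self]; exact integrableOn_empty
  have hVbdd : BddAbove V := ⟨d, fun x hx => hx.1.2⟩
  obtain ⟨rs, hrsdef⟩ : ∃ z : ℝ, z = sSup V := ⟨_, rfl⟩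
  have hrs0 : 0 ≤ rs := by rw [hrsdef]; exact le_csSup hVbdd h0V
  have hrsd : rs ≤ d := by rw [hrsdef]; exact csSup_le ⟨0, h0V⟩ (fun x hx => hx.1.2)
  have hbelow : ∀ r, 0 ≤ r → r < rs →
      IntegrableOn (fun x => v x / a x) (Ioc (-r) 0) volume := by
    intro r hr hlt
    rw [hrsdef] at hlt
    obtain ⟨r', hr'V, hrr'⟩ := exists_lt_of_lt_csSup ⟨0, h0V⟩ hlt
    exact hr'V.2.mono_set (Set.Ioc_subset_Ioc_left (by linarith))
  have hjunk : ∀ r, 0 ≤ r →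
      ¬ IntegrableOn (fun x => v x / a x) (Ioc (-r) 0) volume → u (-r) = u 0 := by
    intro r hr hni
    rw [husI r hr, integral_undef hni, sub_zero]
  have hvbnd : ∀ x, 0 ≤ x → x ≤ d → ∀ C, 0 ≤ C → (∀ y, y ∈ Ioc (-x) 0 → |u y| ≤ C) →
      |v (-x)| ≤ |v 0| + C * Mt := by
    intro x hx hxd C hC hbC
    have h1 := eqv (-x) 0 (by linarith)
    have hsubp : Ioc (-x) (0:ℝ) ⊆ Ioc (-d) 0 := Set.Ioc_subset_Ioc_left (by linarith)
    have hfp' : μp (Ioc (-x) 0) < ⊤ := lt_of_le_of_lt (measure_mono hsubp) hfinp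
    have hfm' : μm (Ioc (-x) 0) < ⊤ := lt_of_le_of_lt (measure_mono hsubp) hfinm
    have h2 : |∫ y in Ioc (-x) 0, u y ∂μp| ≤ C * (μp (Ioc (-x) 0)).toReal :=
      setint_abs_le hu hfp' hC hbC measurableSet_Ioc
    have h3 : |∫ y in Ioc (-x) 0, u y ∂μm| ≤ C * (μm (Ioc (-x) 0)).toReal :=
      setint_abs_le hu hfm' hC hbC measurableSet_Ioc
    have h4p := toReal_mono_meas hsubp hfinp
    have h4m := toReal_mono_meas hsubp hfinm
    have h5 := abs_sub (∫ y in Ioc (-x) 0, u y ∂μp) (∫ y in Ioc (-x) 0, u y ∂μm)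
    rw [← h1] at h5
    have h7 : |v (-x)| ≤ |v 0| + |v 0 - v (-x)| := by
      have h8 := abs_add_le (v 0) (-(v 0 - v (-x)))
      have h9 : v 0 + -(v 0 - v (-x)) = v (-x) := by ring
      rw [h9, abs_neg] at h8
      exact h8
    have h10 : C * (μp (Ioc (-x) 0)).toReal ≤ C * (μp (Ioc (-d) 0)).toReal :=
      mul_le_mul_of_nonneg_left h4p hC
    have h11 : C * (μm (Ioc (-x) 0)).toReal ≤ C * (μm (Ioc (-d) 0)).toReal :=
      mul_le_mul_of_nonneg_left h4m hC
    have h12 : C * Mt = C * (μp (Ioc (-d) 0)).toReal + C * (μm (Ioc (-d) 0)).toReal := by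
      rw [hMt]; ring
    linarith [h2, h3, h5, h7]
  obtain ⟨Y, hY⟩ : ∃ z : ℝ, z = 2*A*δ*|v 0| := ⟨_, rfl⟩
  have hY0 : 0 ≤ Y := by rw [hY]; positivity
  obtain ⟨U, hU0, hUrec⟩ : ∃ U : ℕ → ℝ, U 0 = |u 0| ∧ ∀ n, U (n+1) = 2*U n + Y := by
    refine ⟨fun n => 2^n*|u 0| + (2^n - 1)*Y, by norm_num, fun n => ?_⟩
    simp only [pow_succ]
    ring
  have hUnn : ∀ n, 0 ≤ U n := by
    intro n
    induction n with
    | zero => rw [hU0]; exact abs_nonneg _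
    | succ n ih => rw [hUrec n]; linarith
  have hUmono : ∀ n, U n ≤ U (n+1) := by
    intro n
    rw [hUrec n]
    have := hUnn n
    linarith
  have CL : ∀ n : ℕ, ∀ r, 0 ≤ r → r ≤ n*δ → r < rs → |u (-r)| ≤ U n := by
    intro n
    induction n with
    | zero =>
      intro r h0 h1 _
      have hr0 : r = 0 := le_antisymm (by simpa using h1) h0
      rw [hr0, neg_zero, hU0]
    | succ n ih =>
      intro r h0 h1 h2
      by_cases hcase : r ≤ n*δ
      · exact le_trans (ih r h0 hcase h2) (hUmono n)
      push_neg at hcase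
      obtain ⟨c, hc⟩ : ∃ z : ℝ, z = (n:ℝ)*δ := ⟨_, rfl⟩
      have hc0 : 0 ≤ c := by rw [hc]; positivity
      have hcr : c < r := by rw [hc]; exact hcase
      have hcrs : c < rs := lt_trans hcr h2
      have hrd : r ≤ d := le_trans h2.le hrsd
      have hir : IntegrableOn (fun x => v x / a x) (Ioc (-r) 0) volume := hbelow r h0 h2
      have hsub1 : Ioc (-c) (0:ℝ) ⊆ Ioc (-r) 0 := Set.Ioc_subset_Ioc_left (by linarith)
      obtain ⟨G, hG⟩ : ∃ z : ℝ, z = ∫ y in Ioc (-r) (-c), |v y / a y| := ⟨_, rfl⟩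
      have hsub2 : Ioc (-r) (-c) ⊆ Ioc (-r) (0:ℝ) := Set.Ioc_subset_Ioc_right (by linarith)
      have hGint : IntegrableOn (fun y => |v y / a y|) (Ioc (-r) (-c)) volume :=
        (hir.mono_set hsub2).abs
      have hG0 : 0 ≤ G := by
        rw [hG]
        exact setIntegral_nonneg measurableSet_Ioc (fun y _ => abs_nonneg _)
      -- bound for u at points in [-r, -c)
      have hudiff : ∀ y, y ∈ Ico (-r) (-c) → |u y| ≤ U n + G := by
        intro y hy
        have hy0 : 0 ≤ -y := by
          have := hy.2
          linarith
        have hyr : -r ≤ y := hy.1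
        have h4 : u y - u (-c) = - ∫ z in Ioc y (-c), v z / a z := by
          have e1 : u y = u 0 - ∫ z in Ioc y 0, v z / a z := by
            have := husI (-y) hy0
            rw [neg_neg] at this
            exact this
          have e2 : u (-c) = u 0 - ∫ z in Ioc (-c) 0, v z / a z := husI c hc0
          have hsplit : Ioc y (0:ℝ) = Ioc y (-c) ∪ Ioc (-c) 0 :=
            (Set.Ioc_union_Ioc_eq_Ioc hy.2.le (by linarith)).symm
          have hi1 : IntegrableOn (fun z => v z / a z) (Ioc y (-c)) volume :=
            hir.mono_set (fun w hw => ⟨lt_of_le_of_lt hyr hw.1, le_trans hw.2 (by linarith)⟩)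
          have hi2 : IntegrableOn (fun z => v z / a z) (Ioc (-c) 0) volume :=
            hir.mono_set hsub1
          rw [e1, e2, hsplit, setIntegral_union (Set.Ioc_disjoint_Ioc_of_le le_rfl) measurableSet_Ioc
            hi1 hi2]
          ring
        have h5 : |u y - u (-c)| ≤ G := by
          rw [h4, abs_neg]
          have h6 := norm_integral_le_integral_norm
            (μ := volume.restrict (Ioc y (-c))) (fun z => v z / a z)
          simp only [Real.norm_eq_abs] at h6
          have h7 : ∫ z in Ioc y (-c), |v z / a z| ≤ G := by
            rw [hG]
            apply setIntegral_mono_set hGint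
              (Filter.Eventually.of_forall (fun z => abs_nonneg _))
            apply Filter.Eventually.of_forall
            intro z hz
            exact ⟨lt_of_le_of_lt hyr hz.1, hz.2⟩
          linarith
        have h6 : |u (-c)| ≤ U n := ih c hc0 hc.le hcrs
        have h7 : |u y| ≤ |u (-c)| + |u y - u (-c)| := by
          have h8 := abs_add_le (u (-c)) (u y - u (-c))
          have h9 : u (-c) + (u y - u (-c)) = u y := by ring
          rw [h9] at h8
          exact h8
        linarith
      -- u bound on all of Ioc (-r) 0
      have hubig : ∀ y, y ∈ Ioc (-r) (0:ℝ) → |u y| ≤ U n + G := by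
        intro y hy
        by_cases hyc : -c ≤ y
        · have hy0 : 0 ≤ -y := by linarith [hy.2]
          have := ih (-y) hy0 (by rw [← hc]; linarith) (by linarith [hcrs])
          rw [neg_neg] at this
          linarith [hG0]
        · push_neg at hyc
          exact hudiff y ⟨hy.1.le, hyc⟩
      -- v bound at points -x for x in (c, r]
      have hvx : ∀ y, y ∈ Ioc (-r) (-c) → |v y| ≤ |v 0| + (U n + G)*Mt := by
        intro y hy
        have hy0 : 0 ≤ -y := by linarith [hy.2]
        have h13 := hvbnd (-y) hy0 (by linarith [hy.1]) (U n + G)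
          (by linarith [hUnn n, hG0])
          (fun z hz => by
            rw [neg_neg] at hz
            exact hubig z ⟨lt_trans hy.1 hz.1, hz.2⟩)
        rw [neg_neg] at h13
        exact h13
      -- contraction
      have hgle : G ≤ δ*(A*(|v 0| + (U n + G)*Mt)) := by
        have hb : ∀ y, y ∈ Ioc (-r) (-c) → |v y / a y| ≤ A*(|v 0| + (U n + G)*Mt) := by
          intro y hy
          rw [abs_div, abs_of_pos (hapos y), div_eq_mul_inv]
          have h1 : (a y)⁻¹ ≤ A := by simpa [one_div] using haA y
          have h2 := hvx y hy
          have h3 : 0 ≤ |v 0| + (U n + G)*Mt := by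
            have := hUnn n
            positivity
          have := mul_le_mul h2 h1 (inv_nonneg.2 (hapos y).le) h3
          linarith [this]
        have hconstint : IntegrableOn (fun _ : ℝ => A*(|v 0| + (U n + G)*Mt))
            (Ioc (-r) (-c)) volume := by
          exact integrableOn_const (by rw [Real.volume_Ioc]; exact ENNReal.ofReal_lt_top.ne) enorm_ne_top
        have h12 : G ≤ ∫ _y in Ioc (-r) (-c), A*(|v 0| + (U n + G)*Mt) := by
          conv_lhs => rw [hG]
          apply setIntegral_mono_on hGint hconstint measurableSet_Ioc hb
        have h13 : ∫ _y in Ioc (-r) (-c), A*(|v 0| + (U n + G)*Mt) =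
            (-c - -r) * (A*(|v 0| + (U n + G)*Mt)) := by
          rw [setIntegral_const, smul_eq_mul, measureReal_def, Real.volume_Ioc,
            ENNReal.toReal_ofReal (by linarith : (0:ℝ) ≤ -c - -r)]
        have h14 : -c - -r ≤ δ := by
          have h15 : r ≤ ((n:ℝ)+1)*δ := by
            push_cast at h1
            linarith [h1]
          rw [hc] at *
          linarith
        have h15 : 0 ≤ A*(|v 0| + (U n + G)*Mt) := by
          have := hUnn n
          positivity
        rw [h13] at h12
        calc G ≤ (-c - -r) * (A*(|v 0| + (U n + G)*Mt)) := h12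
        _ ≤ δ * (A*(|v 0| + (U n + G)*Mt)) := mul_le_mul_of_nonneg_right h14 h15
      have hgle' : G ≤ A*δ*|v 0| + A*δ*Mt*(U n) + A*δ*Mt*G := by
        have heq : δ*(A*(|v 0| + (U n + G)*Mt)) =
            A*δ*|v 0| + A*δ*Mt*(U n) + A*δ*Mt*G := by ring
        rw [heq] at hgle
        exact hgle
      have e1 : A*δ*Mt*G ≤ (1/2)*G := mul_le_mul_of_nonneg_right hδc hG0
      have e2 : A*δ*Mt*(U n) ≤ (1/2)*(U n) := mul_le_mul_of_nonneg_right hδc (hUnn n)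
      have hsolve : G ≤ U n + Y := by
        have hAδv : 0 ≤ A*δ*|v 0| := by positivity
        calc G ≤ 2*(A*δ*|v 0|) + U n := by linarith
        _ = U n + Y := by rw [hY]; ring
      have h9 : |u (-r)| ≤ U n + G := by
        apply hudiff (-r) ⟨le_refl _, by linarith⟩
      rw [hUrec n]
      linarith
  obtain ⟨N, hN⟩ : ∃ n : ℕ, n = ⌈d/δ⌉₊ := ⟨_, rfl⟩
  have hNd : d ≤ (N:ℝ)*δ := by
    have h1 : d/δ ≤ (N:ℝ) := by rw [hN]; exact Nat.le_ceil _
    rw [div_le_iff₀ hδ0] at h1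
    linarith
  have hCL : ∀ r, 0 ≤ r → r < rs → |u (-r)| ≤ U N := by
    intro r h0 h2
    exact CL N r h0 (le_trans (le_trans h2.le hrsd) hNd) h2
  obtain ⟨C, hC⟩ : ∃ z : ℝ, z = max (max (U N) |u (-rs)|) |u 0| := ⟨_, rfl⟩
  have hCu : ∀ y, y ∈ Icc (-d) (0:ℝ) → |u y| ≤ C := by
    intro y hy
    rcases lt_trichotomy (-y) rs with h | h | h
    · rw [hC]
      have h0y : 0 ≤ -y := by linarith [hy.2]
      have := hCL (-y) h0y h
      rw [neg_neg] at this
      exact le_trans this (le_trans (le_max_left _ _) (le_max_left _ _))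
    · rw [hC]
      have : y = -rs := by linarith
      rw [this]
      exact le_trans (le_max_right (U N) _) (le_max_left _ _)
    · have hynotV : (-y) ∉ V := by
        intro hyV
        have := le_csSup hVbdd hyV
        rw [← hrsdef] at this
        exact absurd this (not_le.2 h)
      have hni : ¬ IntegrableOn (fun x => v x / a x) (Ioc y 0) volume := by
        intro hint
        apply hynotV
        refine ⟨⟨by linarith [hrs0], by linarith [hy.1]⟩, ?_⟩
        rw [neg_neg]
        exact hint
      have h0y : 0 ≤ -y := by linarith [hrs0]
      have := hjunk (-y) h0y (by rw [neg_neg]; exact hni)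
      rw [neg_neg] at this
      rw [this, hC]
      exact le_max_right _ _
  have hC0 : 0 ≤ C := by
    rw [hC]
    exact le_trans (abs_nonneg (u 0)) (le_max_right _ _)
  refine ⟨max C (|v 0| + C*Mt), ?_⟩
  intro r hr
  constructor
  · exact le_trans (hCu r hr) (le_max_left _ _)
  · have hvr : |v r| ≤ |v 0| + C*Mt := by
      have h20 := hvbnd (-r) (by linarith [hr.1, hr.2]) (by linarith [hr.1]) C hC0 ?_
      · rw [neg_neg] at h20
        exact h20
      · intro y hy
        rw [neg_neg] at hy
        exact hCu y ⟨le_trans (by linarith [hr.1] : (-d:ℝ) ≤ r) hy.1.le, hy.2⟩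
    exact le_trans hvr (le_max_right _ _)

end AuxOGB

set_option maxHeartbeats 1000000

/-- Optimized growth bound for solutions. -/
theorem optimized_growth_bound
    (ρ : MeasureTheory.Measure ℝ) (hρ0 : ρ ≠ 0) (hρfin : unifE ρ < ⊤)
    (hρper : ∃ p : ℝ, IsPeriod ρ p)
    (a : ℝ → ℝ) (μp μm : MeasureTheory.Measure ℝ) (hAM : AM ρ a μp μm)
    (u v : ℝ → ℝ) (hsol : IsSolution0 a μp μm u v)
    (ω : ℝ) (hω : ω = Real.sqrt (unifNorm (μp + μm) / supNorm (fun x => 1 / a x))) :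
    ∀ t : ℝ, Real.sqrt (ω ^ 2 * u t ^ 2 + v t ^ 2) ≤
      Real.sqrt (ω ^ 2 * u 0 ^ 2 + v 0 ^ 2) *
        Real.exp (ω * supNorm (fun x => 1 / a x) * (|t| + 1 / 2)) := by
  obtain ⟨hu, hv, equ, eqv⟩ := hsol
  have hbddB : BddBelow (Set.range a) := by
    by_contra h
    have h2 := hAM.inf_pos
    have h3 : (⨅ x, a x) = sInf (Set.range a) := rfl
    rw [h3, Real.sInf_of_not_bddBelow h] at h2
    exact lt_irrefl 0 h2
  have hapos : ∀ x, 0 < a x := fun x => lt_of_lt_of_le hAM.inf_pos (ciInf_le hbddB x)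
  have hbddA : BddAbove (Set.range (fun x => 1 / a x)) := by
    refine ⟨1 / (⨅ x, a x), ?_⟩
    rintro y ⟨x, rfl⟩
    exact one_div_le_one_div_of_le hAM.inf_pos (ciInf_le hbddB x)
  obtain ⟨A, hA⟩ : ∃ z : ℝ, z = supNorm (fun x => 1 / a x) := ⟨_, rfl⟩
  have haA : ∀ x, 1 / a x ≤ A := by
    intro x
    rw [hA, supNorm]
    exact le_csSup hbddA ⟨x, rfl⟩
  have hA0 : 0 < A := lt_of_lt_of_le (one_div_pos.2 (hapos 0)) (haA 0)
  obtain ⟨M, hM⟩ : ∃ z : ℝ, z = unifNorm (μp + μm) := ⟨_, rfl⟩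
  have hM0 : 0 ≤ M := by rw [hM, unifNorm]; exact ENNReal.toReal_nonneg
  have hωM : ω = Real.sqrt (M / A) := by rw [hω, hM, hA]
  have hfinp : ∀ s t : ℝ, μp (Ioc s t) < ⊤ := fun s t => hAM.finp _ (Metric.isBounded_Ioc s t)
  have hfinm : ∀ s t : ℝ, μm (Ioc s t) < ⊤ := fun s t => hAM.finm _ (Metric.isBounded_Ioc s t)
  have hfinsum : ∀ s' t' : ℝ, s' ≤ t' →
      (μp (Ioc s' t')).toReal + (μm (Ioc s' t')).toReal ≤ M * (t' - s' + 1) := by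
    intro s' t' hst
    have h1 := window (μp + μm) M hM0
      (fun s t => by rw [Measure.add_apply]; exact ENNReal.add_lt_top.2 ⟨hfinp s t, hfinm s t⟩)
      (fun r => by
        rw [hM, unifNorm, ENNReal.ofReal_toReal hAM.unif_lt_top.ne]
        exact le_iSup (fun r => (μp + μm) (Ioc r (r+1))) r)
      s' t' hst
    rw [Measure.add_apply, ENNReal.toReal_add (hfinp s' t').ne (hfinm s' t').ne] at h1
    linarith [h1]
  intro t
  rw [← hA]
  by_cases hMz : M = 0
  · -- degenerate case: μ = 0
    have hmeas0 : ∀ s' t' : ℝ, s' ≤ t' → μp (Ioc s' t') = 0 ∧ μm (Ioc s' t') = 0 := by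
      intro s' t' h
      have h1 := hfinsum s' t' h
      rw [hMz, zero_mul] at h1
      have h2 : (μp (Ioc s' t')).toReal = 0 :=
        le_antisymm (by linarith [ENNReal.toReal_nonneg (a := μm (Ioc s' t'))])
          ENNReal.toReal_nonneg
      have h3 : (μm (Ioc s' t')).toReal = 0 :=
        le_antisymm (by linarith [ENNReal.toReal_nonneg (a := μp (Ioc s' t'))])
          ENNReal.toReal_nonneg
      constructor
      · exact (ENNReal.toReal_eq_zero_iff _).1 h2 |>.resolve_right (hfinp s' t').ne
      · exact (ENNReal.toReal_eq_zero_iff _).1 h3 |>.resolve_right (hfinm s' t').ne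
    have hvconst : ∀ r : ℝ, v r = v 0 := by
      intro r
      rcases le_total 0 r with h | h
      · have h1 := eqv 0 r h
        rw [Measure.restrict_eq_zero.2 (hmeas0 0 r h).1] at h1
        rw [Measure.restrict_eq_zero.2 (hmeas0 0 r h).2] at h1
        simp at h1
        linarith
      · have h1 := eqv r 0 h
        rw [Measure.restrict_eq_zero.2 (hmeas0 r 0 h).1] at h1
        rw [Measure.restrict_eq_zero.2 (hmeas0 r 0 h).2] at h1
        simp at h1
        linarith
    have hω0 : ω = 0 := by rw [hωM, hMz, zero_div, Real.sqrt_zero]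
    rw [hω0, hvconst t]
    have e1 : (0:ℝ)^2 * u t^2 + v 0^2 = v 0^2 := by ring
    have e2 : (0:ℝ)^2 * u 0^2 + v 0^2 = v 0^2 := by ring
    rw [e1, e2]
    have e3 : (0:ℝ) * A * (|t| + 1/2) = 0 := by ring
    rw [e3, Real.exp_zero, mul_one]
  · -- main case
    have hMpos : 0 < M := lt_of_le_of_ne hM0 (Ne.symm hMz)
    have hω0 : 0 < ω := by rw [hωM]; exact Real.sqrt_pos.2 (div_pos hMpos hA0)
    have hω2 : ω^2 = M/A := by rw [hωM]; exact Real.sq_sqrt (le_of_lt (div_pos hMpos hA0))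
    have hMωA : M = ω^2 * A := by rw [hω2]; field_simp
    have habsva : ∀ S : ℝ, 0 ≤ S → ∀ z, |v z| ≤ S → |v z / a z| ≤ A * S := by
      intro S hSnn z hz
      rw [abs_div, abs_of_pos (hapos z), div_eq_mul_inv]
      have h1 : (a z)⁻¹ ≤ A := by simpa [one_div] using haA z
      have h2 : |v z| * (a z)⁻¹ ≤ S * A :=
        mul_le_mul hz h1 (inv_nonneg.2 (hapos z).le) hSnn
      linarith
    rcases le_total 0 t with ht | ht
    · -- FORWARD CASE : 0 ≤ t
      obtain ⟨S, hS⟩ := reg_pos a u v μp μm A 0 t hAM.meas_a hapos haA hu hv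
        (hfinp 0 t) (hfinm 0 t) ht equ eqv
      have hS0' : 0 ≤ S := le_trans (abs_nonneg _) (hS 0 ⟨le_refl 0, ht⟩).1
      have hIIva : ∀ x y, 0 ≤ x → y ≤ t → x ≤ y →
          IntervalIntegrable (fun z => v z / a z) volume x y := by
        intro x y hx hy hxy
        apply (intervalIntegrable_iff_integrableOn_Ioc_of_le hxy).2
        apply intOn (hv.div hAM.meas_a)
          (by rw [Real.volume_Ioc]; exact ENNReal.ofReal_lt_top) (C := A*S) _
          measurableSet_Ioc
        intro z hz
        exact habsva S hS0' z (hS z ⟨le_trans hx hz.1.le, le_trans hz.2 hy⟩).2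
      have hequg : ∀ r, r ∈ Icc 0 t → ∀ r', r' ∈ Icc 0 t → r ≤ r' →
          u r' = u r + ∫ x in r..r', v x / a x := by
        intro r hr r' hr' hrr
        have h1 : IntervalIntegrable (fun z => v z / a z) volume 0 r :=
          hIIva 0 r (le_refl 0) hr.2 hr.1
        have h2 : IntervalIntegrable (fun z => v z / a z) volume r r' :=
          hIIva r r' hr.1 hr'.2 hrr
        have h3 := intervalIntegral.integral_add_adjacent_intervals h1 h2
        rw [equ r', equ r, ← h3]
        ring
      obtain ⟨R0, hR0⟩ : ∃ z : ℝ, z = Real.sqrt (ω^2*(u 0)^2 + (v 0)^2) := ⟨_, rfl⟩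
      have hR0nn : 0 ≤ R0 := by rw [hR0]; exact Real.sqrt_nonneg _
      obtain ⟨CC, hCC⟩ : ∃ z : ℝ, z = 3*((ω+1)*S) := ⟨_, rfl⟩
      have hCC0 : 0 ≤ CC := by rw [hCC]; nlinarith [hω0.le, hS0']
      obtain ⟨Q, hQ⟩ : ∃ f : ℝ → ℝ,
          ∀ x, f x = ((μp (Ioc 0 x)).toReal + (μm (Ioc 0 x)).toReal)/ω :=
        ⟨fun x => ((μp (Ioc 0 x)).toReal + (μm (Ioc 0 x)).toReal)/ω, fun _ => rfl⟩
      have hQnn : ∀ x, 0 ≤ Q x := by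
        intro x
        rw [hQ]
        positivity
      have main : ∀ n : ℕ, 0 < n → Real.sqrt (ω^2*(u t)^2 + (v t)^2) ≤
          Real.exp ((ω*A*t + Q t)/2) * (R0 + CC*(ω*A*(t/n))*(Q t)) := by
        intro n hn
        have hnR : (0:ℝ) < n := Nat.cast_pos.2 hn
        obtain ⟨P, hP⟩ : ∃ f : ℕ → ℝ, ∀ i, f i = i*t/n :=
          ⟨fun i => i*t/n, fun _ => rfl⟩
        have hPmem : ∀ i : ℕ, i ≤ n → P i ∈ Icc 0 t := by
          intro i hi
          rw [hP]
          constructor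
          · positivity
          · rw [div_le_iff₀ hnR]
            have h1 : (i:ℝ) ≤ n := Nat.cast_le.2 hi
            nlinarith
        have hPsucc : ∀ i : ℕ, P (i+1) - P i = t/n := by
          intro i
          rw [hP, hP]
          push_cast
          field_simp
          ring
        have hPle : ∀ i : ℕ, P i ≤ P (i+1) := by
          intro i
          have h1 := hPsucc i
          have h2 : 0 ≤ t/n := by positivity
          linarith
        have hppnn : 0 ≤ ω*A*(t/n) := by positivity
        have hQsplit : ∀ i : ℕ, i ≤ n → Q (P (i+1)) = Q (P i) +
            ((μp (Ioc (P i) (P (i+1)))).toReal + (μm (Ioc (P i) (P (i+1)))).toReal)/ω := by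
          intro i hi
          have hP0 : 0 ≤ P i := (hPmem i hi).1
          have hsum : ∀ (ν : Measure ℝ), (∀ s' t' : ℝ, ν (Ioc s' t') < ⊤) →
              (ν (Ioc 0 (P (i+1)))).toReal =
              (ν (Ioc 0 (P i))).toReal + (ν (Ioc (P i) (P (i+1)))).toReal := by
            intro ν hν
            rw [← ENNReal.toReal_add (hν _ _).ne (hν _ _).ne,
              ← measure_union (Set.Ioc_disjoint_Ioc_of_le le_rfl) measurableSet_Ioc,
              Set.Ioc_union_Ioc_eq_Ioc hP0 (hPle i)]
          rw [hQ, hQ, hsum μp hfinp, hsum μm hfinm]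
          ring
        have IND : ∀ i : ℕ, i ≤ n →
            Real.sqrt (ω^2*(u (P i))^2 + (v (P i))^2) ≤
            Real.exp (((i:ℝ)*(ω*A*(t/n)) + Q (P i))/2) * (R0 + CC*(ω*A*(t/n))*(Q (P i))) := by
          intro i
          induction i with
          | zero =>
            intro _
            have hP0 : P 0 = 0 := by rw [hP]; simp
            have hQ0 : Q (P 0) = 0 := by
              rw [hP0, hQ]
              simp [Set.Ioc_self]
            rw [hQ0, hP0]
            simp only [Nat.cast_zero, zero_mul, add_zero, zero_div, Real.exp_zero, mul_zero]
            rw [hR0]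
            simp
          | succ i ih =>
            intro hi1
            have hi : i ≤ n := Nat.le_of_succ_le hi1
            have hIH := ih hi
            have hmemi := hPmem i hi
            have hmemi1 := hPmem (i+1) hi1
            have hone := (onestep a u v μp μm ω A S (P i) (P (i+1)) hω0 (hPle i)
              hAM.meas_a hapos haA hu hv (hfinp _ _) (hfinm _ _)
              (fun r hr => hS r ⟨le_trans hmemi.1 hr.1, le_trans hr.2 hmemi1.2⟩)
              (fun r hr r' hr' hrr => hequg r ⟨le_trans hmemi.1 hr.1, le_trans hr.2 hmemi1.2⟩
                r' ⟨le_trans hmemi.1 hr'.1, le_trans hr'.2 hmemi1.2⟩ hrr)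
              (fun r _ r' _ hrr => eqv r r' hrr)).1
            rw [hPsucc i] at hone
            obtain ⟨qi, hqi⟩ : ∃ z : ℝ,
                z = ((μp (Ioc (P i) (P (i+1)))).toReal + (μm (Ioc (P i) (P (i+1)))).toReal)/ω :=
              ⟨_, rfl⟩
            have hqinn : 0 ≤ qi := by rw [hqi]; positivity
            have hsplit := hQsplit i hi
            rw [← hqi] at hsplit hone
            have herr : 3*((ω*A*(t/n)) * qi * ((ω+1)*S)) = CC*(ω*A*(t/n))*qi := by
              rw [hCC]; ring
            rw [herr] at hone
            have hcs := chain_step _ _ R0 (Real.exp (((i:ℝ)*(ω*A*(t/n)) + Q (P i))/2))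
              (Real.exp ((ω*A*(t/n) + qi)/2)) CC (ω*A*(t/n)) qi (Q (P i)) hone hIH
              (by
                rw [show (1:ℝ) = Real.exp 0 from (Real.exp_zero).symm]
                apply Real.exp_le_exp.2
                have := hQnn (P i)
                positivity)
              (by
                rw [show (1:ℝ) = Real.exp 0 from (Real.exp_zero).symm]
                apply Real.exp_le_exp.2
                positivity)
              (by positivity)
            have hexpeq : Real.exp ((ω*A*(t/n) + qi)/2) *
                Real.exp (((i:ℝ)*(ω*A*(t/n)) + Q (P i))/2) =
                Real.exp ((((i:ℝ)+1)*(ω*A*(t/n)) + Q (P (i+1)))/2) := by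
              rw [← Real.exp_add]
              congr 1
              rw [hsplit]
              ring
            rw [hexpeq] at hcs
            have hfin : R0 + CC*(ω*A*(t/n))*(Q (P i)) + CC*(ω*A*(t/n))*qi =
                R0 + CC*(ω*A*(t/n))*(Q (P (i+1))) := by
              rw [hsplit]
              ring
            rw [hfin] at hcs
            push_cast
            exact hcs
        have hPn : P n = t := by
          rw [hP]
          field_simp
        have h := IND n (le_refl n)
        rw [hPn] at h
        have hexp : ((n:ℝ)*(ω*A*(t/n)) + Q t)/2 = (ω*A*t + Q t)/2 := by
          congr 1
          congr 1
          field_simp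
        rw [hexp] at h
        exact h
      -- conclusion of forward case
      have hQt : Q t ≤ ω*A*(t+1) := by
        rw [hQ]
        rw [div_le_iff₀ hω0]
        have h2 := hfinsum 0 t ht
        have h3 : M * (t - 0 + 1) = ω^2*A*(t+1) := by rw [hMωA]; ring
        rw [h3] at h2
        nlinarith [h2]
      have hE : (ω*A*t + Q t)/2 ≤ ω*A*(|t| + 1/2) := by
        rw [abs_of_nonneg ht]
        nlinarith [hQt]
      apply le_of_forall_pos_le_add
      intro ε hε
      obtain ⟨c, hc⟩ : ∃ z : ℝ, z = Real.exp ((ω*A*t + Q t)/2) * (CC*(ω*A*t)*(Q t)) :=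
        ⟨_, rfl⟩
      have hc0 : 0 ≤ c := by
        rw [hc]
        apply mul_nonneg (Real.exp_pos _).le
        apply mul_nonneg (mul_nonneg hCC0 _) (hQnn t)
        exact mul_nonneg (mul_nonneg hω0.le hA0.le) ht
      obtain ⟨n0, hn0⟩ := exists_nat_gt (c/ε)
      have hn1 : 0 < n0 + 1 := Nat.succ_pos n0
      have h := main (n0+1) hn1
      have hnR : (0:ℝ) < (n0+1:ℕ) := Nat.cast_pos.2 hn1
      have hcn : c / ((n0+1:ℕ):ℝ) ≤ ε := by
        rw [div_le_iff₀ hnR]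
        have h1 : c/ε < (n0:ℝ) := hn0
        rw [div_lt_iff₀ hε] at h1
        have h2 : (n0:ℝ) ≤ ((n0+1:ℕ):ℝ) := by push_cast; linarith
        nlinarith
      have hsplit2 : Real.exp ((ω*A*t + Q t)/2) * (R0 + CC*(ω*A*(t/((n0+1:ℕ):ℝ)))*(Q t)) =
          Real.exp ((ω*A*t + Q t)/2) * R0 + c / ((n0+1:ℕ):ℝ) := by
        rw [hc]
        field_simp
      rw [hsplit2] at h
      have hexpmono : Real.exp ((ω*A*t + Q t)/2) ≤ Real.exp (ω*A*(|t| + 1/2)) :=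
        Real.exp_le_exp.2 hE
      calc Real.sqrt (ω^2*(u t)^2 + (v t)^2)
          ≤ Real.exp ((ω*A*t + Q t)/2) * R0 + c / ((n0+1:ℕ):ℝ) := h
        _ ≤ Real.exp (ω*A*(|t| + 1/2)) * R0 + ε := by
            have := mul_le_mul_of_nonneg_right hexpmono hR0nn
            linarith
        _ = Real.sqrt (ω^2*(u 0)^2 + (v 0)^2) * Real.exp (ω*A*(|t| + 1/2)) + ε := by
            rw [hR0]; ring
    · -- BACKWARD CASE : t ≤ 0
      obtain ⟨S, hSpre⟩ := reg_neg a u v μp μm A (-t) hapos haA hu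
        (by rw [neg_neg]; exact hfinp t 0) (by rw [neg_neg]; exact hfinm t 0)
        (by linarith) equ eqv
      have hS : ∀ r, r ∈ Icc t 0 → |u r| ≤ S ∧ |v r| ≤ S := by
        intro r hr
        exact hSpre r (by rw [neg_neg]; exact hr)
      have hS0' : 0 ≤ S := le_trans (abs_nonneg _) (hS 0 ⟨ht, le_refl 0⟩).1
      have hIIva : ∀ x y, t ≤ x → y ≤ 0 → x ≤ y →
          IntervalIntegrable (fun z => v z / a z) volume x y := by
        intro x y hx hy hxy
        apply (intervalIntegrable_iff_integrableOn_Ioc_of_le hxy).2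
        apply intOn (hv.div hAM.meas_a)
          (by rw [Real.volume_Ioc]; exact ENNReal.ofReal_lt_top) (C := A*S) _
          measurableSet_Ioc
        intro z hz
        exact habsva S hS0' z (hS z ⟨le_trans hx hz.1.le, le_trans hz.2 hy⟩).2
      have hequg : ∀ r, r ∈ Icc t 0 → ∀ r', r' ∈ Icc t 0 → r ≤ r' →
          u r' = u r + ∫ x in r..r', v x / a x := by
        intro r hr r' hr' hrr
        have h1 : IntervalIntegrable (fun z => v z / a z) volume 0 r :=
          (hIIva r 0 hr.1 (le_refl 0) hr.2).symm
        have h2 : IntervalIntegrable (fun z => v z / a z) volume r r' :=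
          hIIva r r' hr.1 hr'.2 hrr
        have h3 := intervalIntegral.integral_add_adjacent_intervals h1 h2
        rw [equ r', equ r, ← h3]
        ring
      obtain ⟨R0, hR0⟩ : ∃ z : ℝ, z = Real.sqrt (ω^2*(u 0)^2 + (v 0)^2) := ⟨_, rfl⟩
      have hR0nn : 0 ≤ R0 := by rw [hR0]; exact Real.sqrt_nonneg _
      obtain ⟨CC, hCC⟩ : ∃ z : ℝ, z = 3*((ω+1)*S) := ⟨_, rfl⟩
      have hCC0 : 0 ≤ CC := by rw [hCC]; nlinarith [hω0.le, hS0']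
      obtain ⟨Q, hQ⟩ : ∃ f : ℝ → ℝ,
          ∀ x, f x = ((μp (Ioc x 0)).toReal + (μm (Ioc x 0)).toReal)/ω :=
        ⟨fun x => ((μp (Ioc x 0)).toReal + (μm (Ioc x 0)).toReal)/ω, fun _ => rfl⟩
      have hQnn : ∀ x, 0 ≤ Q x := by
        intro x
        rw [hQ]
        positivity
      have main : ∀ n : ℕ, 0 < n → Real.sqrt (ω^2*(u t)^2 + (v t)^2) ≤
          Real.exp ((ω*A*(-t) + Q t)/2) * (R0 + CC*(ω*A*(-t/n))*(Q t)) := by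
        intro n hn
        have hnR : (0:ℝ) < n := Nat.cast_pos.2 hn
        obtain ⟨P, hP⟩ : ∃ f : ℕ → ℝ, ∀ i, f i = i*t/n :=
          ⟨fun i => i*t/n, fun _ => rfl⟩
        have hPmem : ∀ i : ℕ, i ≤ n → P i ∈ Icc t 0 := by
          intro i hi
          rw [hP]
          constructor
          · rw [le_div_iff₀ hnR]
            have h1 : (i:ℝ) ≤ n := Nat.cast_le.2 hi
            nlinarith [mul_nonpos_of_nonpos_of_nonneg ht (sub_nonneg.2 h1)]
          · rw [div_le_iff₀ hnR]
            have h1 : (0:ℝ) ≤ (i:ℝ) := Nat.cast_nonneg i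
            nlinarith [mul_nonpos_of_nonneg_of_nonpos h1 ht]
        have hPsucc : ∀ i : ℕ, P i - P (i+1) = -t/n := by
          intro i
          rw [hP, hP]
          push_cast
          field_simp
          ring
        have hPle : ∀ i : ℕ, P (i+1) ≤ P i := by
          intro i
          have h1 := hPsucc i
          have h2 : 0 ≤ -t/n := div_nonneg (by linarith) hnR.le
          linarith
        have hppnn : 0 ≤ ω*A*(-t/n) :=
          mul_nonneg (mul_nonneg hω0.le hA0.le) (div_nonneg (by linarith) hnR.le)
        have hQsplit : ∀ i : ℕ, i + 1 ≤ n → Q (P (i+1)) = Q (P i) +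
            ((μp (Ioc (P (i+1)) (P i))).toReal + (μm (Ioc (P (i+1)) (P i))).toReal)/ω := by
          intro i hi
          have hP0 : P i ≤ 0 := (hPmem i (Nat.le_of_succ_le hi)).2
          have hsum : ∀ (ν : Measure ℝ), (∀ s' t' : ℝ, ν (Ioc s' t') < ⊤) →
              (ν (Ioc (P (i+1)) 0)).toReal =
              (ν (Ioc (P i) 0)).toReal + (ν (Ioc (P (i+1)) (P i))).toReal := by
            intro ν hν
            rw [← Set.Ioc_union_Ioc_eq_Ioc (hPle i) hP0,
              measure_union (Set.Ioc_disjoint_Ioc_of_le le_rfl) measurableSet_Ioc,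
              ENNReal.toReal_add (hν _ _).ne (hν _ _).ne]
            ring
          rw [hQ, hQ, hsum μp hfinp, hsum μm hfinm]
          ring
        have IND : ∀ i : ℕ, i ≤ n →
            Real.sqrt (ω^2*(u (P i))^2 + (v (P i))^2) ≤
            Real.exp (((i:ℝ)*(ω*A*(-t/n)) + Q (P i))/2) *
              (R0 + CC*(ω*A*(-t/n))*(Q (P i))) := by
          intro i
          induction i with
          | zero =>
            intro _
            have hP0 : P 0 = 0 := by rw [hP]; simp
            have hQ0 : Q (P 0) = 0 := by
              rw [hP0, hQ]
              simp [Set.Ioc_self]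
            rw [hQ0, hP0]
            simp only [Nat.cast_zero, zero_mul, add_zero, zero_div, Real.exp_zero, mul_zero]
            rw [hR0]
            simp
          | succ i ih =>
            intro hi1
            have hi : i ≤ n := Nat.le_of_succ_le hi1
            have hIH := ih hi
            have hmemi := hPmem i hi
            have hmemi1 := hPmem (i+1) hi1
            have hone := (onestep a u v μp μm ω A S (P (i+1)) (P i) hω0 (hPle i)
              hAM.meas_a hapos haA hu hv (hfinp _ _) (hfinm _ _)
              (fun r hr => hS r ⟨le_trans hmemi1.1 hr.1, le_trans hr.2 hmemi.2⟩)
              (fun r hr r' hr' hrr => hequg r ⟨le_trans hmemi1.1 hr.1, le_trans hr.2 hmemi.2⟩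
                r' ⟨le_trans hmemi1.1 hr'.1, le_trans hr'.2 hmemi.2⟩ hrr)
              (fun r _ r' _ hrr => eqv r r' hrr)).2
            rw [hPsucc i] at hone
            obtain ⟨qi, hqi⟩ : ∃ z : ℝ,
                z = ((μp (Ioc (P (i+1)) (P i))).toReal +
                  (μm (Ioc (P (i+1)) (P i))).toReal)/ω := ⟨_, rfl⟩
            have hqinn : 0 ≤ qi := by rw [hqi]; positivity
            have hsplit := hQsplit i hi1
            rw [← hqi] at hsplit hone
            have herr : 3*((ω*A*(-t/n)) * qi * ((ω+1)*S)) = CC*(ω*A*(-t/n))*qi := by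
              rw [hCC]; ring
            rw [herr] at hone
            have hcs := chain_step _ _ R0 (Real.exp (((i:ℝ)*(ω*A*(-t/n)) + Q (P i))/2))
              (Real.exp ((ω*A*(-t/n) + qi)/2)) CC (ω*A*(-t/n)) qi (Q (P i)) hone hIH
              (by
                rw [show (1:ℝ) = Real.exp 0 from (Real.exp_zero).symm]
                apply Real.exp_le_exp.2
                have := hQnn (P i)
                positivity)
              (by
                rw [show (1:ℝ) = Real.exp 0 from (Real.exp_zero).symm]
                apply Real.exp_le_exp.2
                positivity)
              (by positivity)
            have hexpeq : Real.exp ((ω*A*(-t/n) + qi)/2) *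
                Real.exp (((i:ℝ)*(ω*A*(-t/n)) + Q (P i))/2) =
                Real.exp ((((i:ℝ)+1)*(ω*A*(-t/n)) + Q (P (i+1)))/2) := by
              rw [← Real.exp_add]
              congr 1
              rw [hsplit]
              ring
            rw [hexpeq] at hcs
            have hfin : R0 + CC*(ω*A*(-t/n))*(Q (P i)) + CC*(ω*A*(-t/n))*qi =
                R0 + CC*(ω*A*(-t/n))*(Q (P (i+1))) := by
              rw [hsplit]
              ring
            rw [hfin] at hcs
            push_cast
            exact hcs
        have hPn : P n = t := by
          rw [hP]
          field_simp
        have h := IND n (le_refl n)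
        rw [hPn] at h
        have hexp' : (n:ℝ)*(ω*A*(-t/(n:ℝ))) = ω*A*(-t) := by
          field_simp
        rw [hexp'] at h
        exact h
      -- conclusion of backward case
      have hQt : Q t ≤ ω*A*(-t+1) := by
        rw [hQ]
        rw [div_le_iff₀ hω0]
        have h2 := hfinsum t 0 ht
        have h3 : M * (0 - t + 1) = ω^2*A*(-t+1) := by rw [hMωA]; ring
        rw [h3] at h2
        nlinarith [h2]
      have hE : (ω*A*(-t) + Q t)/2 ≤ ω*A*(|t| + 1/2) := by
        rw [abs_of_nonpos ht]
        nlinarith [hQt]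
      apply le_of_forall_pos_le_add
      intro ε hε
      obtain ⟨c, hc⟩ : ∃ z : ℝ, z = Real.exp ((ω*A*(-t) + Q t)/2) * (CC*(ω*A*(-t))*(Q t)) :=
        ⟨_, rfl⟩
      have hc0 : 0 ≤ c := by
        rw [hc]
        apply mul_nonneg (Real.exp_pos _).le
        apply mul_nonneg (mul_nonneg hCC0 _) (hQnn t)
        exact mul_nonneg (mul_nonneg hω0.le hA0.le) (by linarith)
      obtain ⟨n0, hn0⟩ := exists_nat_gt (c/ε)
      have hn1 : 0 < n0 + 1 := Nat.succ_pos n0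
      have h := main (n0+1) hn1
      have hnR : (0:ℝ) < (n0+1:ℕ) := Nat.cast_pos.2 hn1
      have hcn : c / ((n0+1:ℕ):ℝ) ≤ ε := by
        rw [div_le_iff₀ hnR]
        have h1 : c/ε < (n0:ℝ) := hn0
        rw [div_lt_iff₀ hε] at h1
        have h2 : (n0:ℝ) ≤ ((n0+1:ℕ):ℝ) := by push_cast; linarith
        nlinarith
      have hsplit2 : Real.exp ((ω*A*(-t) + Q t)/2) *
          (R0 + CC*(ω*A*(-t/((n0+1:ℕ):ℝ)))*(Q t)) =
          Real.exp ((ω*A*(-t) + Q t)/2) * R0 + c / ((n0+1:ℕ):ℝ) := by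
        rw [hc]
        field_simp
      rw [hsplit2] at h
      have hexpmono : Real.exp ((ω*A*(-t) + Q t)/2) ≤ Real.exp (ω*A*(|t| + 1/2)) :=
        Real.exp_le_exp.2 hE
      calc Real.sqrt (ω^2*(u t)^2 + (v t)^2)
          ≤ Real.exp ((ω*A*(-t) + Q t)/2) * R0 + c / ((n0+1:ℕ):ℝ) := h
        _ ≤ Real.exp (ω*A*(|t| + 1/2)) * R0 + ε := by
            have := mul_le_mul_of_nonneg_right hexpmono hR0nn
            linarith
        _ = Real.sqrt (ω^2*(u 0)^2 + (v 0)^2) * Real.exp (ω*A*(|t| + 1/2)) + ε := by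
            rw [hR0]; ring
end
end
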